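/- arXiv:1105.0844 — 5 statements merged into one kernel-verified Lean document; each statement's English description precedes it below -/
import Mathlib

section
/- Let W ⊆ V¹ be a linear subspace such that span{⁅w,ξ⁆ : w ∈ W, ξ ∈ V²} is a proper subspace of V³. Then every γ ∈ H¹(0) taking all its values in W is a Goh curve: there exists a triple λ̃ = (λ¹,λ²,λ³) of linear functionals on V¹,V²,V³ with λ³ ≠ 0, λ² = 0, λ³⁅γ(t),⁅a,b⁆⁆ = 0 for all t ∈ [0,1] and all a,b ∈ V¹, and λ̃(d_γE(φ)) = 0 for every φ ∈ H¹(0). -/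
open MeasureTheory Set intervalIntegral

noncomputable section

variable {𝕓 : Type*} [NormedAddCommGroup 𝕓] [InnerProductSpace ℝ 𝕓] [FiniteDimensional ℝ 𝕓]

/-- The space `H¹(0)` of curves `γ : [0,1] → V¹` with `γ(t) = ∫₀ᵗ γ̇(s) ds` for a
square-integrable `γ̇` with values in `V¹`.  A curve is identified with its derivative
`γ̇ : ℝ → 𝕓`; the curve itself is recovered by `curve`. -/
def H1zero (V1 : Submodule ℝ 𝕓) : Submodule ℝ (ℝ → 𝕓) where
  carrier := {g | (∀ t, g t ∈ V1) ∧ MemLp g 2 (volume.restrict (Icc (0:ℝ) 1))}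
  add_mem' := fun hg hh => ⟨fun t => V1.add_mem (hg.1 t) (hh.1 t), hg.2.add hh.2⟩
  zero_mem' := ⟨fun _ => V1.zero_mem, MemLp.zero⟩
  smul_mem' := fun c _ hg => ⟨fun t => V1.smul_mem c (hg.1 t), hg.2.const_smul c⟩

/-- The curve associated to a derivative: `γ(t) = ∫₀ᵗ γ̇(s) ds`. -/
def curve (g : ℝ → 𝕓) (t : ℝ) : 𝕓 := ∫ s in (0:ℝ)..t, g s

variable (br : 𝕓 →ₗ[ℝ] 𝕓 →ₗ[ℝ] 𝕓)

/-- First layer of the end-point map: `F¹(γ) = γ(1)`. -/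
def F1 (g : ℝ → 𝕓) : 𝕓 := curve g 1

/-- The second layer `γ²(t) = ½∫₀ᵗ ⁅γ,γ̇⁆`. -/
def curve2 (g : ℝ → 𝕓) (t : ℝ) : 𝕓 := (2:ℝ)⁻¹ • ∫ s in (0:ℝ)..t, br (curve g s) (g s)

/-- Second layer of the end-point map: `F²(γ) = ½∫₀¹ ⁅γ,γ̇⁆`. -/
def F2 (g : ℝ → 𝕓) : 𝕓 := curve2 br g 1

/-- Third layer of the end-point map:
`F³(γ) = ∫₀¹ (½(⁅γ,γ̇²⁆ + ⁅γ²,γ̇⁆) − (1/6)⁅γ,⁅γ,γ̇⁆⁆)`, with `γ̇² = ½⁅γ,γ̇⁆`. -/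
def F3 (g : ℝ → 𝕓) : 𝕓 :=
  ∫ t in (0:ℝ)..1,
    ((2:ℝ)⁻¹ • (br (curve g t) ((2:ℝ)⁻¹ • br (curve g t) (g t)) + br (curve2 br g t) (g t))
      - (6:ℝ)⁻¹ • br (curve g t) (br (curve g t) (g t)))

/-- The end-point map `E(γ) = (F¹(γ), F²(γ), F³(γ)) ∈ V¹ ⊕ V² ⊕ V³`. -/
def Emap (g : ℝ → 𝕓) : 𝕓 × 𝕓 × 𝕓 := (F1 g, F2 br g, F3 br g)

/-- `d_γF¹(φ)`. -/
def dF1 (γ φ : ℝ → 𝕓) : 𝕓 := deriv (fun ε : ℝ => F1 (γ + ε • φ)) 0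

/-- `d_γF²(φ)`. -/
def dF2 (γ φ : ℝ → 𝕓) : 𝕓 := deriv (fun ε : ℝ => F2 br (γ + ε • φ)) 0

/-- `d_γF³(φ)`. -/
def dF3 (γ φ : ℝ → 𝕓) : 𝕓 := deriv (fun ε : ℝ => F3 br (γ + ε • φ)) 0

/-- The differential of the end-point map, `d_γE(φ) = (d/dε)|₀ E(γ + εφ)`. -/
def dE (γ φ : ℝ → 𝕓) : 𝕓 × 𝕓 × 𝕓 := deriv (fun ε : ℝ => Emap br (γ + ε • φ)) 0

/-- The Hessian of the end-point map, `d²_γE(φ,φ) = (d²/dε²)|₀ E(γ + εφ)`. -/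
def d2E (γ φ : ℝ → 𝕓) : 𝕓 × 𝕓 × 𝕓 := iteratedDeriv 2 (fun ε : ℝ => Emap br (γ + ε • φ)) 0

/-- The energy `L(γ) = ½∫₀¹ |γ̇|²`. -/
def energy (g : ℝ → 𝕓) : ℝ := (2:ℝ)⁻¹ * ∫ t in (0:ℝ)..1, ‖g t‖^2

/-- `γ` is a local minimizer of the energy subject to the end-point constraint. -/
def IsLocMin (V1 : Submodule ℝ 𝕓) (γ : ℝ → 𝕓) : Prop :=
  γ ∈ H1zero V1 ∧ ∃ ε > 0, ∀ h ∈ H1zero V1, Emap br h = Emap br γ →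
    (∫ t in (0:ℝ)..1, ‖γ t - h t‖^2) < ε → energy γ ≤ energy h

/-- `γ` is singular: the image of `d_γE` spans a proper subspace of `𝔟 = V¹ ⊕ V² ⊕ V³`. -/
def IsSingular (V1 V2 V3 : Submodule ℝ 𝕓) (γ : ℝ → 𝕓) : Prop :=
  Submodule.span ℝ {x : 𝕓 × 𝕓 × 𝕓 | ∃ φ ∈ H1zero V1, dE br γ φ = x}
    < V1.prod (V2.prod V3)

/-- A triple of linear functionals acting componentwise on `V¹ ⊕ V² ⊕ V³`. -/
def pairL (l1 l2 l3 : 𝕓 →ₗ[ℝ] ℝ) (x : 𝕓 × 𝕓 × 𝕓) : ℝ := l1 x.1 + l2 x.2.1 + l3 x.2.2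

/-- `𝔟` is a Carnot algebra of step at most 3 with layers `V¹, V², V³` and Lie bracket `br`:
the layers form an internal direct sum, `V² = span ⁅V¹,V¹⁆`, `V³ = span ⁅V¹,V²⁆`,
`⁅V¹,V³⁆ = 0`, and `br` is alternating and satisfies the Jacobi identity. -/
def CarnotStep3 (V1 V2 V3 : Submodule ℝ 𝕓) : Prop :=
  DirectSum.IsInternal ![V1, V2, V3] ∧
  V2 = Submodule.span ℝ {x | ∃ a ∈ V1, ∃ b ∈ V1, x = br a b} ∧
  V3 = Submodule.span ℝ {x | ∃ a ∈ V1, ∃ ξ ∈ V2, x = br a ξ} ∧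
  (∀ a ∈ V1, ∀ ζ ∈ V3, br a ζ = 0) ∧
  (∀ x, br x x = 0) ∧
  (∀ x y z, br x (br y z) + br y (br z x) + br z (br x y) = 0)

/-- The quadratic form `Q` restricted to `K` has finite Morse index: there is a uniform
bound on the dimension of subspaces contained in `K` on which `Q` is negative definite. -/
def HasFiniteMorseIndexOn (Q : (ℝ → 𝕓) → ℝ) (K : Set (ℝ → 𝕓)) : Prop :=
  ∃ N : ℕ, ∀ P : Submodule ℝ (ℝ → 𝕓), (P : Set (ℝ → 𝕓)) ⊆ K →
    (∀ φ ∈ P, φ ≠ 0 → Q φ < 0) → Module.rank ℝ P ≤ N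

/-- `γ` is a normal geodesic: there are multipliers `λ², λ³` such that
`∫₀¹ (⟨γ̇,φ̇⟩ + λ²⁅φ,γ̇⁆ + λ³⁅γ − ½γ(1), ⁅φ,γ̇⁆⁆) dt = 0` for all `φ ∈ H¹(0)` with `φ(1) = 0`. -/
def IsNormal (V1 : Submodule ℝ 𝕓) (γ : ℝ → 𝕓) : Prop :=
  ∃ l2 l3 : 𝕓 →ₗ[ℝ] ℝ,
    ∀ φ ∈ H1zero V1, curve φ 1 = 0 →
      (∫ t in (0:ℝ)..1,
        ((inner ℝ (γ t) (φ t) : ℝ) + l2 (br (curve φ t) (γ t))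
          + l3 (br (curve γ t - (2:ℝ)⁻¹ • curve γ 1) (br (curve φ t) (γ t))))) = 0


section Aux
set_option linter.unusedSectionVars false
set_option linter.unusedVariables false

-- CLM version of a bilinear map
def brC (br : 𝕓 →ₗ[ℝ] 𝕓 →ₗ[ℝ] 𝕓) : 𝕓 →L[ℝ] 𝕓 →L[ℝ] 𝕓 :=
  LinearMap.toContinuousLinearMap
    { toFun := fun x => LinearMap.toContinuousLinearMap (br x)
      map_add' := by intro x y; ext z; simp
      map_smul' := by intro c x; ext z; simp }

@[simp] lemma brC_apply (br : 𝕓 →ₗ[ℝ] 𝕓 →ₗ[ℝ] 𝕓) (x y : 𝕓) : brC br x y = br x y := rfl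

lemma mem_setIntegral (U : Submodule ℝ 𝕓) {F : ℝ → 𝕓} {s : Set ℝ} (hs : MeasurableSet s)
    (hF : ∀ x ∈ s, F x ∈ U) : (∫ x in s, F x) ∈ U := by
  by_cases hi : IntegrableOn F s
  · set P : 𝕓 →L[ℝ] 𝕓 := U.subtypeL.comp U.orthogonalProjectionOnto with hP
    have h1 : (∫ x in s, F x) = ∫ x in s, P (F x) := by
      refine setIntegral_congr_fun hs (fun x hx => ?_)
      rw [hP]; exact (Submodule.starProjection_eq_self_iff.2 (hF x hx)).symm
    rw [h1, P.integral_comp_comm hi]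
    exact (U.orthogonalProjectionOnto _).2
  · rw [integral_undef hi]; exact U.zero_mem

lemma mem_intervalIntegral (U : Submodule ℝ 𝕓) {F : ℝ → 𝕓} {t : ℝ} (ht : 0 ≤ t)
    (hF : ∀ x ∈ Ioc (0:ℝ) t, F x ∈ U) : (∫ s in (0:ℝ)..t, F s) ∈ U := by
  rw [integral_of_le ht]; exact mem_setIntegral U measurableSet_Ioc hF

lemma intOn_clm2 {E F G : Type*} [NormedAddCommGroup E] [NormedSpace ℝ E]
    [NormedAddCommGroup F] [NormedSpace ℝ F] [NormedAddCommGroup G] [NormedSpace ℝ G]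
    (B : E →L[ℝ] F →L[ℝ] G) {X : ℝ → E} {Y : ℝ → F}
    (hX : ContinuousOn X (Icc 0 1)) (hY : IntegrableOn Y (Icc 0 1)) :
    IntegrableOn (fun t => B (X t) (Y t)) (Icc (0:ℝ) 1) := by
  obtain ⟨C, hC⟩ := isCompact_Icc.exists_bound_of_continuousOn hX
  have hm : AEStronglyMeasurable (fun t => B (X t) (Y t)) (volume.restrict (Icc (0:ℝ) 1)) :=
    B.continuous₂.comp_aestronglyMeasurable
      (((hX.aestronglyMeasurable measurableSet_Icc)).prodMk hY.aestronglyMeasurable)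
  refine Integrable.mono' ((hY.norm.const_mul (‖B‖ * C))) hm ?_
  rw [ae_restrict_iff' measurableSet_Icc]
  filter_upwards with t ht
  calc ‖B (X t) (Y t)‖ ≤ ‖B‖ * ‖X t‖ * ‖Y t‖ := B.le_opNorm₂ _ _
    _ ≤ ‖B‖ * C * ‖Y t‖ := by
        have h1 := hC t ht
        have h2 : (0:ℝ) ≤ C := le_trans (norm_nonneg _) h1
        have h3 : ‖B‖ * ‖X t‖ ≤ ‖B‖ * C :=
          mul_le_mul_of_nonneg_left h1 (ContinuousLinearMap.opNorm_nonneg B)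
        exact mul_le_mul_of_nonneg_right h3 (norm_nonneg _)

lemma intOn_clm2' {E F G : Type*} [NormedAddCommGroup E] [NormedSpace ℝ E]
    [NormedAddCommGroup F] [NormedSpace ℝ F] [NormedAddCommGroup G] [NormedSpace ℝ G]
    (B : E →L[ℝ] F →L[ℝ] G) {X : ℝ → E} {Y : ℝ → F}
    (hX : IntegrableOn X (Icc 0 1)) (hY : ContinuousOn Y (Icc 0 1)) :
    IntegrableOn (fun t => B (X t) (Y t)) (Icc (0:ℝ) 1) :=
  intOn_clm2 B.flip hY hX

lemma II01 {F : ℝ → 𝕓} (h : IntegrableOn F (Icc 0 1)) {t : ℝ} (ht : t ∈ Icc (0:ℝ) 1) :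
    IntervalIntegrable F volume 0 t :=
  intervalIntegrable_iff.2 ((h.mono_set (by
    rw [uIoc_of_le ht.1]
    exact (Ioc_subset_Icc_self).trans (Icc_subset_Icc le_rfl ht.2))))

lemma II01' {F : ℝ → 𝕓} (h : IntegrableOn F (Icc 0 1)) :
    IntervalIntegrable F volume 0 1 := II01 h (by norm_num)

section prodrule
variable [CompleteSpace 𝕓]
theorem prodRule {E : Type*} [NormedAddCommGroup E] [NormedSpace ℝ E] [CompleteSpace E]
    (B : 𝕓 →L[ℝ] 𝕓 →L[ℝ] E) {f g : ℝ → 𝕓} {b : ℝ}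
    (hf : IntegrableOn f (Ioc 0 b)) (hg : IntegrableOn g (Ioc 0 b)) :
    (∫ t in Ioc (0:ℝ) b, B (∫ s in Ioc (0:ℝ) t, f s) (g t))
      + (∫ t in Ioc (0:ℝ) b, B (f t) (∫ s in Ioc (0:ℝ) t, g s))
      = B (∫ s in Ioc (0:ℝ) b, f s) (∫ s in Ioc (0:ℝ) b, g s) := by
  set μ : Measure ℝ := volume.restrict (Ioc (0:ℝ) b) with hμ
  have hfi : Integrable f μ := hf
  have hgi : Integrable g μ := hg
  set Φ : ℝ × ℝ → E := fun p => B (f p.1) (g p.2) with hΦdef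
  have hΦm : AEStronglyMeasurable Φ (μ.prod μ) := by
    exact B.continuous₂.comp_aestronglyMeasurable
      (hfi.aestronglyMeasurable.comp_fst.prodMk hgi.aestronglyMeasurable.comp_snd)
  have hΦ : Integrable Φ (μ.prod μ) := by
    refine Integrable.mono' ((hfi.norm.mul_prod hgi.norm).const_mul ‖B‖) hΦm ?_
    filter_upwards with p
    simpa [mul_assoc] using B.le_opNorm₂ (f p.1) (g p.2)
  have hS1 : MeasurableSet {p : ℝ × ℝ | p.1 ≤ p.2} := measurableSet_le measurable_fst measurable_snd
  have hS2 : MeasurableSet {p : ℝ × ℝ | p.2 ≤ p.1} := measurableSet_le measurable_snd measurable_fst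
  set Ψ₁ : ℝ × ℝ → E := {p : ℝ × ℝ | p.1 ≤ p.2}.indicator Φ with hΨ₁def
  set Ψ₂ : ℝ × ℝ → E := {p : ℝ × ℝ | p.2 ≤ p.1}.indicator Φ with hΨ₂def
  have hΨ₁ : Integrable Ψ₁ (μ.prod μ) := hΦ.indicator hS1
  have hΨ₂ : Integrable Ψ₂ (μ.prod μ) := hΦ.indicator hS2
  -- inner integral rewriting
  have hsub : ∀ t ∈ Ioc (0:ℝ) b, Ioc (0:ℝ) b ∩ Iic t = Ioc 0 t := by
    intro t ht
    ext s
    simp only [mem_inter_iff, mem_Ioc, mem_Iic]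
    exact ⟨fun h => ⟨h.1.1, h.2⟩, fun h => ⟨⟨h.1, h.2.trans ht.2⟩, h.2⟩⟩
  have key1 : ∀ t ∈ Ioc (0:ℝ) b,
      B (∫ s in Ioc (0:ℝ) t, f s) (g t) = ∫ s, Ψ₁ (s, t) ∂μ := by
    intro t ht
    have h1 : (∫ s in Ioc (0:ℝ) t, f s) = ∫ s, (Iic t).indicator f s ∂μ := by
      rw [hμ, setIntegral_indicator measurableSet_Iic, hsub t ht]
    rw [h1, ← ContinuousLinearMap.flip_apply,
      ← (B.flip (g t)).integral_comp_comm (hfi.indicator measurableSet_Iic)]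
    congr 1 with s
    by_cases hst : s ≤ t
    · simp [Ψ₁, hΦdef, indicator_of_mem, hst, mem_Iic.2 hst]
    · simp [Ψ₁, hΦdef, indicator_of_notMem, hst]
  have key2 : ∀ t ∈ Ioc (0:ℝ) b,
      B (f t) (∫ s in Ioc (0:ℝ) t, g s) = ∫ s, Ψ₂ (t, s) ∂μ := by
    intro t ht
    have h1 : (∫ s in Ioc (0:ℝ) t, g s) = ∫ s, (Iic t).indicator g s ∂μ := by
      rw [hμ, setIntegral_indicator measurableSet_Iic, hsub t ht]
    rw [h1, ← (B (f t)).integral_comp_comm (hgi.indicator measurableSet_Iic)]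
    congr 1 with s
    by_cases hst : s ≤ t
    · simp [Ψ₂, hΦdef, indicator_of_mem, hst, mem_Iic.2 hst]
    · simp [Ψ₂, hΦdef, indicator_of_notMem, hst]
  have e1 : (∫ t in Ioc (0:ℝ) b, B (∫ s in Ioc (0:ℝ) t, f s) (g t))
      = ∫ p, Ψ₁ p ∂(μ.prod μ) := by
    rw [show (∫ t in Ioc (0:ℝ) b, B (∫ s in Ioc (0:ℝ) t, f s) (g t))
        = ∫ t, (∫ s, Ψ₁ (s, t) ∂μ) ∂μ from
      setIntegral_congr_fun measurableSet_Ioc (fun t ht => key1 t ht)]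
    rw [← MeasureTheory.integral_integral_swap (f := fun s t => Ψ₁ (s, t)) (by exact hΨ₁)]
    rw [MeasureTheory.integral_integral (by exact hΨ₁)]
  have e2 : (∫ t in Ioc (0:ℝ) b, B (f t) (∫ s in Ioc (0:ℝ) t, g s))
      = ∫ p, Ψ₂ p ∂(μ.prod μ) := by
    rw [show (∫ t in Ioc (0:ℝ) b, B (f t) (∫ s in Ioc (0:ℝ) t, g s))
        = ∫ t, (∫ s, Ψ₂ (t, s) ∂μ) ∂μ from
      setIntegral_congr_fun measurableSet_Ioc (fun t ht => key2 t ht)]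
    rw [MeasureTheory.integral_integral (by exact hΨ₂)]
  have diag : (μ.prod μ) {p : ℝ × ℝ | p.1 = p.2} = 0 := by
    have hD : MeasurableSet {p : ℝ × ℝ | p.1 = p.2} :=
      measurableSet_eq_fun measurable_fst measurable_snd
    rw [Measure.prod_apply hD]
    have : ∀ x : ℝ, μ (Prod.mk x ⁻¹' {p : ℝ × ℝ | p.1 = p.2}) = 0 := by
      intro x
      have : (Prod.mk x ⁻¹' {p : ℝ × ℝ | p.1 = p.2}) = {x} := by
        ext y; simp [eq_comm]
      rw [this, hμ, Measure.restrict_apply (measurableSet_singleton x)]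
      exact le_antisymm (le_trans (measure_mono inter_subset_left) (by simp)) zero_le
    simp [this]
  have esum : (∫ p, Ψ₁ p ∂(μ.prod μ)) + (∫ p, Ψ₂ p ∂(μ.prod μ)) = ∫ p, Φ p ∂(μ.prod μ) := by
    rw [← integral_add hΨ₁ hΨ₂]
    refine integral_congr_ae ?_
    have hne : ∀ᵐ p ∂(μ.prod μ), p.1 ≠ p.2 := by
      rw [ae_iff]
      simpa using diag
    filter_upwards [hne] with p hp
    rcases le_total p.1 p.2 with h | h
    · have h2 : ¬ (p.2 ≤ p.1) := fun h' => hp (le_antisymm h h')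
      simp [Ψ₁, Ψ₂, indicator_of_mem, indicator_of_notMem, h, h2]
    · have h2 : ¬ (p.1 ≤ p.2) := fun h' => hp (le_antisymm h' h)
      simp [Ψ₁, Ψ₂, indicator_of_mem, indicator_of_notMem, h, h2]
  have efin : (∫ p, Φ p ∂(μ.prod μ))
      = B (∫ s in Ioc (0:ℝ) b, f s) (∫ s in Ioc (0:ℝ) b, g s) := by
    rw [show (∫ p, Φ p ∂(μ.prod μ)) = ∫ s, (∫ t, B (f s) (g t) ∂μ) ∂μ from
      (MeasureTheory.integral_integral (f := fun s t => B (f s) (g t))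
        (by exact hΦ)).symm]
    have : ∀ s : ℝ, (∫ t, B (f s) (g t) ∂μ) = B (f s) (∫ t, g t ∂μ) := fun s =>
      ((B (f s)).integral_comp_comm hgi)
    simp_rw [this]
    exact (B.flip (∫ t, g t ∂μ)).integral_comp_comm hfi
  rw [e1, e2, esum, efin]

end prodrule

variable (γ φ : ℝ → 𝕓)

def cA : ℝ → 𝕓 := fun t =>
  (2:ℝ)⁻¹ • ∫ s in (0:ℝ)..t, (br (curve φ s) (γ s) + br (curve γ s) (φ s))
def cB : ℝ → 𝕓 := fun t => (2:ℝ)⁻¹ • ∫ s in (0:ℝ)..t, br (curve φ s) (φ s)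

def I1e : 𝕓 := ∫ t in (0:ℝ)..1,
  ((12:ℝ)⁻¹ • (br (curve φ t) (br (curve γ t) (γ t)) + br (curve γ t) (br (curve φ t) (γ t))
      + br (curve γ t) (br (curve γ t) (φ t)))
    + (2:ℝ)⁻¹ • (br (cA br γ φ t) (γ t) + br (curve2 br γ t) (φ t)))
def I2e : 𝕓 := ∫ t in (0:ℝ)..1,
  ((12:ℝ)⁻¹ • (br (curve φ t) (br (curve φ t) (γ t)) + br (curve φ t) (br (curve γ t) (φ t))
      + br (curve γ t) (br (curve φ t) (φ t)))
    + (2:ℝ)⁻¹ • (br (cB br φ t) (γ t) + br (cA br γ φ t) (φ t)))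
def I3e : 𝕓 := ∫ t in (0:ℝ)..1,
  ((12:ℝ)⁻¹ • br (curve φ t) (br (curve φ t) (φ t)) + (2:ℝ)⁻¹ • br (cB br φ t) (φ t))

lemma F3_eq (g : ℝ → 𝕓) : F3 br g = ∫ t in (0:ℝ)..1,
    ((12:ℝ)⁻¹ • br (curve g t) (br (curve g t) (g t)) + (2:ℝ)⁻¹ • br (curve2 br g t) (g t)) := by
  unfold F3
  refine intervalIntegral.integral_congr (fun t _ => ?_)
  simp only [_root_.map_smul]
  module

variable {γ φ}

lemma hcont_curve (hγI : IntegrableOn γ (Icc 0 1)) : ContinuousOn (curve γ) (Icc (0:ℝ) 1) := by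
  unfold curve
  rw [show Icc (0:ℝ) 1 = uIcc 0 1 from (uIcc_of_le zero_le_one).symm]
  exact continuousOn_primitive_interval (by rwa [uIcc_of_le zero_le_one])

lemma curve_expand (hγI : IntegrableOn γ (Icc 0 1)) (hφI : IntegrableOn φ (Icc 0 1))
    (ε : ℝ) {t : ℝ} (ht : t ∈ Icc (0:ℝ) 1) :
    curve (γ + ε • φ) t = curve γ t + ε • curve φ t := by
  have h2 : IntervalIntegrable (fun s => ε • φ s) volume 0 t := (II01 hφI ht).smul ε
  unfold curve
  simp only [Pi.add_apply, Pi.smul_apply]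
  rw [intervalIntegral.integral_add (II01 hγI ht) h2, intervalIntegral.integral_smul]

lemma curve2_expand (hγI : IntegrableOn γ (Icc 0 1)) (hφI : IntegrableOn φ (Icc 0 1))
    (ε : ℝ) {t : ℝ} (ht : t ∈ Icc (0:ℝ) 1) :
    curve2 br (γ + ε • φ) t = curve2 br γ t + ε • cA br γ φ t + ε^2 • cB br φ t := by
  have hc := hcont_curve hγI
  have hd := hcont_curve hφI
  have i0 : IntegrableOn (fun s => br (curve γ s) (γ s)) (Icc (0:ℝ) 1) :=
    intOn_clm2 (brC br) hc hγI
  have i1 : IntegrableOn (fun s => br (curve φ s) (γ s) + br (curve γ s) (φ s)) (Icc (0:ℝ) 1) :=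
    (intOn_clm2 (brC br) hd hγI).add (intOn_clm2 (brC br) hc hφI)
  have i2 : IntegrableOn (fun s => br (curve φ s) (φ s)) (Icc (0:ℝ) 1) :=
    intOn_clm2 (brC br) hd hφI
  have key : EqOn (fun s => br (curve (γ + ε • φ) s) ((γ + ε • φ) s))
      (fun s => br (curve γ s) (γ s)
        + (ε • (br (curve φ s) (γ s) + br (curve γ s) (φ s))
          + ε^2 • br (curve φ s) (φ s))) (uIcc (0:ℝ) t) := by
    intro s hs
    rw [uIcc_of_le ht.1] at hs
    have hs1 : s ∈ Icc (0:ℝ) 1 := ⟨hs.1, hs.2.trans ht.2⟩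
    simp only [curve_expand hγI hφI ε hs1, Pi.add_apply, Pi.smul_apply,
      map_add, _root_.map_smul, LinearMap.add_apply, LinearMap.smul_apply]
    module
  have j1 : IntervalIntegrable (fun s => ε • (br (curve φ s) (γ s) + br (curve γ s) (φ s)))
      volume 0 t := (II01 i1 ht).smul ε
  have j2 : IntervalIntegrable (fun s => ε^2 • br (curve φ s) (φ s)) volume 0 t :=
    (II01 i2 ht).smul (ε^2)
  unfold curve2
  rw [intervalIntegral.integral_congr key,
    intervalIntegral.integral_add (II01 i0 ht) (j1.add j2),
    intervalIntegral.integral_add j1 j2,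
    intervalIntegral.integral_smul, intervalIntegral.integral_smul]
  simp only [cA, cB]
  module

lemma F3_expand (hγI : IntegrableOn γ (Icc 0 1)) (hφI : IntegrableOn φ (Icc 0 1)) (ε : ℝ) :
    F3 br (γ + ε • φ)
      = F3 br γ + ε • I1e br γ φ + ε^2 • I2e br γ φ + ε^3 • I3e br φ := by
  have hc := hcont_curve hγI
  have hd := hcont_curve hφI
  have i0 : IntegrableOn (fun s => br (curve γ s) (γ s)) (Icc (0:ℝ) 1) :=
    intOn_clm2 (brC br) hc hγI
  have i1 : IntegrableOn (fun s => br (curve φ s) (γ s) + br (curve γ s) (φ s)) (Icc (0:ℝ) 1) :=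
    (intOn_clm2 (brC br) hd hγI).add (intOn_clm2 (brC br) hc hφI)
  have i2 : IntegrableOn (fun s => br (curve φ s) (φ s)) (Icc (0:ℝ) 1) :=
    intOn_clm2 (brC br) hd hφI
  have hq : ContinuousOn (curve2 br γ) (Icc (0:ℝ) 1) := by
    unfold curve2
    refine ContinuousOn.const_smul ?_ _
    rw [show Icc (0:ℝ) 1 = uIcc 0 1 from (uIcc_of_le zero_le_one).symm]
    exact continuousOn_primitive_interval (by rwa [uIcc_of_le zero_le_one])
  have ha : ContinuousOn (cA br γ φ) (Icc (0:ℝ) 1) := by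
    unfold cA
    refine ContinuousOn.const_smul ?_ _
    rw [show Icc (0:ℝ) 1 = uIcc 0 1 from (uIcc_of_le zero_le_one).symm]
    exact continuousOn_primitive_interval (by rwa [uIcc_of_le zero_le_one])
  have hv : ContinuousOn (cB br φ) (Icc (0:ℝ) 1) := by
    unfold cB
    refine ContinuousOn.const_smul ?_ _
    rw [show Icc (0:ℝ) 1 = uIcc 0 1 from (uIcc_of_le zero_le_one).symm]
    exact continuousOn_primitive_interval (by rwa [uIcc_of_le zero_le_one])
  -- integrability of the coefficient functions
  have hA0 : IntervalIntegrable (fun t => (12:ℝ)⁻¹ • br (curve γ t) (br (curve γ t) (γ t))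
      + (2:ℝ)⁻¹ • br (curve2 br γ t) (γ t)) volume 0 1 := by
    refine II01' (Integrable.add ?_ ?_)
    · exact ((intOn_clm2 (brC br) hc i0).smul ((12:ℝ)⁻¹))
    · exact ((intOn_clm2 (brC br) hq hγI).smul ((2:ℝ)⁻¹))
  have hA1i : IntegrableOn (fun t => (12:ℝ)⁻¹ • (br (curve φ t) (br (curve γ t) (γ t))
        + br (curve γ t) (br (curve φ t) (γ t)) + br (curve γ t) (br (curve γ t) (φ t)))
      + (2:ℝ)⁻¹ • (br (cA br γ φ t) (γ t) + br (curve2 br γ t) (φ t))) (Icc (0:ℝ) 1) := by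
    refine Integrable.add ?_ ?_
    · refine Integrable.smul _ (((intOn_clm2 (brC br) hd i0).add
        (intOn_clm2 (brC br) hc (intOn_clm2 (brC br) hd hγI))).add
        (intOn_clm2 (brC br) hc (intOn_clm2 (brC br) hc hφI)))
    · exact Integrable.smul _ ((intOn_clm2 (brC br) ha hγI).add (intOn_clm2 (brC br) hq hφI))
  have hA2i : IntegrableOn (fun t => (12:ℝ)⁻¹ • (br (curve φ t) (br (curve φ t) (γ t))
        + br (curve φ t) (br (curve γ t) (φ t)) + br (curve γ t) (br (curve φ t) (φ t)))
      + (2:ℝ)⁻¹ • (br (cB br φ t) (γ t) + br (cA br γ φ t) (φ t))) (Icc (0:ℝ) 1) := by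
    refine Integrable.add ?_ ?_
    · refine Integrable.smul _ (((intOn_clm2 (brC br) hd (intOn_clm2 (brC br) hd hγI)).add
        (intOn_clm2 (brC br) hd (intOn_clm2 (brC br) hc hφI))).add
        (intOn_clm2 (brC br) hc (intOn_clm2 (brC br) hd hφI)))
    · exact Integrable.smul _ ((intOn_clm2 (brC br) hv hγI).add (intOn_clm2 (brC br) ha hφI))
  have hA3i : IntegrableOn (fun t => (12:ℝ)⁻¹ • br (curve φ t) (br (curve φ t) (φ t))
      + (2:ℝ)⁻¹ • br (cB br φ t) (φ t)) (Icc (0:ℝ) 1) := by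
    refine Integrable.add ?_ ?_
    · exact Integrable.smul _ (intOn_clm2 (brC br) hd (intOn_clm2 (brC br) hd hφI))
    · exact Integrable.smul _ (intOn_clm2 (brC br) hv hφI)
  rw [F3_eq br (γ + ε • φ), F3_eq br γ]
  have key : EqOn
      (fun t => (12:ℝ)⁻¹ • br (curve (γ+ε•φ) t) (br (curve (γ+ε•φ) t) ((γ+ε•φ) t))
        + (2:ℝ)⁻¹ • br (curve2 br (γ+ε•φ) t) ((γ+ε•φ) t))
      (fun t => ((12:ℝ)⁻¹ • br (curve γ t) (br (curve γ t) (γ t))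
          + (2:ℝ)⁻¹ • br (curve2 br γ t) (γ t))
        + (ε • ((12:ℝ)⁻¹ • (br (curve φ t) (br (curve γ t) (γ t))
              + br (curve γ t) (br (curve φ t) (γ t)) + br (curve γ t) (br (curve γ t) (φ t)))
            + (2:ℝ)⁻¹ • (br (cA br γ φ t) (γ t) + br (curve2 br γ t) (φ t)))
          + (ε^2 • ((12:ℝ)⁻¹ • (br (curve φ t) (br (curve φ t) (γ t))
              + br (curve φ t) (br (curve γ t) (φ t)) + br (curve γ t) (br (curve φ t) (φ t)))
            + (2:ℝ)⁻¹ • (br (cB br φ t) (γ t) + br (cA br γ φ t) (φ t)))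
          + ε^3 • ((12:ℝ)⁻¹ • br (curve φ t) (br (curve φ t) (φ t))
            + (2:ℝ)⁻¹ • br (cB br φ t) (φ t))))) (uIcc (0:ℝ) 1) := by
    intro t ht
    rw [uIcc_of_le zero_le_one] at ht
    dsimp only
    rw [curve_expand hγI hφI ε ht, curve2_expand br hγI hφI ε ht]
    simp only [Pi.add_apply, Pi.smul_apply, map_add, _root_.map_smul,
      LinearMap.add_apply, LinearMap.smul_apply]
    module
  rw [intervalIntegral.integral_congr key]
  have j1 : IntervalIntegrable (fun t => ε • ((12:ℝ)⁻¹ • (br (curve φ t) (br (curve γ t) (γ t))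
        + br (curve γ t) (br (curve φ t) (γ t)) + br (curve γ t) (br (curve γ t) (φ t)))
      + (2:ℝ)⁻¹ • (br (cA br γ φ t) (γ t) + br (curve2 br γ t) (φ t)))) volume 0 1 :=
    (II01' hA1i).smul ε
  have j2 : IntervalIntegrable (fun t => ε^2 • ((12:ℝ)⁻¹ • (br (curve φ t) (br (curve φ t) (γ t))
        + br (curve φ t) (br (curve γ t) (φ t)) + br (curve γ t) (br (curve φ t) (φ t)))
      + (2:ℝ)⁻¹ • (br (cB br φ t) (γ t) + br (cA br γ φ t) (φ t)))) volume 0 1 :=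
    (II01' hA2i).smul (ε^2)
  have j3 : IntervalIntegrable (fun t => ε^3 • ((12:ℝ)⁻¹ • br (curve φ t) (br (curve φ t) (φ t))
      + (2:ℝ)⁻¹ • br (cB br φ t) (φ t))) volume 0 1 := (II01' hA3i).smul (ε^3)
  rw [intervalIntegral.integral_add hA0 (j1.add (j2.add j3)),
    intervalIntegral.integral_add j1 (j2.add j3),
    intervalIntegral.integral_add j2 j3,
    intervalIntegral.integral_smul, intervalIntegral.integral_smul,
    intervalIntegral.integral_smul]
  unfold I1e I2e I3e
  module

lemma dE_eq (hγI : IntegrableOn γ (Icc 0 1)) (hφI : IntegrableOn φ (Icc 0 1)) :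
    dE br γ φ = (curve φ 1, cA br γ φ 1, I1e br γ φ) := by
  unfold dE
  have h1m : (1:ℝ) ∈ Icc (0:ℝ) 1 := by norm_num
  have hfun : (fun ε : ℝ => Emap br (γ + ε • φ))
      = fun ε => (curve γ 1 + ε • curve φ 1,
          (curve2 br γ 1 + ε • cA br γ φ 1 + ε^2 • cB br φ 1,
            F3 br γ + ε • I1e br γ φ + ε^2 • I2e br γ φ + ε^3 • I3e br φ)) := by
    funext ε
    unfold Emap F1 F2
    rw [curve_expand hγI hφI ε h1m, curve2_expand br hγI hφI ε h1m, F3_expand br hγI hφI ε]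
  have H1 : HasDerivAt (fun ε : ℝ => curve γ 1 + ε • curve φ 1) (curve φ 1) 0 := by
    simpa using ((hasDerivAt_id (0:ℝ)).smul_const (curve φ 1)).const_add (curve γ 1)
  have H2 : HasDerivAt (fun ε : ℝ => curve2 br γ 1 + ε • cA br γ φ 1 + ε^2 • cB br φ 1)
      (cA br γ φ 1) 0 := by
    have := (((hasDerivAt_id (0:ℝ)).smul_const (cA br γ φ 1)).const_add
      (curve2 br γ 1)).add ((hasDerivAt_pow 2 (0:ℝ)).smul_const (cB br φ 1))
    simpa [Pi.add_def] using this
  have H3 : HasDerivAt (fun ε : ℝ => F3 br γ + ε • I1e br γ φ + ε^2 • I2e br γ φ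
      + ε^3 • I3e br φ) (I1e br γ φ) 0 := by
    have := ((((hasDerivAt_id (0:ℝ)).smul_const (I1e br γ φ)).const_add
      (F3 br γ)).add ((hasDerivAt_pow 2 (0:ℝ)).smul_const (I2e br γ φ))).add
      ((hasDerivAt_pow 3 (0:ℝ)).smul_const (I3e br φ))
    simpa [Pi.add_def] using this
  rw [hfun]
  exact (H1.prodMk (H2.prodMk H3)).deriv

lemma curve_eq_Ioc {g : ℝ → 𝕓} {t : ℝ} (ht : 0 ≤ t) :
    curve g t = ∫ s in Ioc (0:ℝ) t, g s := intervalIntegral.integral_of_le ht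

lemma curve2_eq_Ioc {t : ℝ} (ht : 0 ≤ t) :
    curve2 br γ t = ∫ s in Ioc (0:ℝ) t, (2:ℝ)⁻¹ • br (curve γ s) (γ s) := by
  unfold curve2
  rw [← intervalIntegral.integral_smul, intervalIntegral.integral_of_le ht]

lemma cA_eq_Ioc {t : ℝ} (ht : 0 ≤ t) :
    cA br γ φ t = ∫ s in Ioc (0:ℝ) t,
      (2:ℝ)⁻¹ • (br (curve φ s) (γ s) + br (curve γ s) (φ s)) := by
  unfold cA
  rw [← intervalIntegral.integral_smul, intervalIntegral.integral_of_le ht]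

lemma calcI1 (V1 V2 W : Submodule ℝ 𝕓)
    (hγ1 : ∀ t, γ t ∈ V1) (hφ1 : ∀ t, φ t ∈ V1)
    (hγI : IntegrableOn γ (Icc 0 1)) (hφI : IntegrableOn φ (Icc 0 1))
    (hvals : ∀ t ∈ Icc (0:ℝ) 1, curve γ t ∈ W)
    (hV2 : ∀ a ∈ V1, ∀ b ∈ V1, br a b ∈ V2)
    (halt : ∀ x, br x x = 0)
    (hjac : ∀ x y z, br x (br y z) + br y (br z x) + br z (br x y) = 0)
    (L : 𝕓 →L[ℝ] ℝ) (hL : ∀ w ∈ W, ∀ ξ ∈ V2, L (br w ξ) = 0) :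
    L (I1e br γ φ) = 2⁻¹ * L (br (curve2 br γ 1) (curve φ 1)) := by
  have hsub : Ioc (0:ℝ) 1 ⊆ Icc (0:ℝ) 1 := Ioc_subset_Icc_self
  have hasym : ∀ x y, br x y = - br y x := by
    intro x y
    have h := halt (x + y)
    simp only [map_add, LinearMap.add_apply, halt] at h
    rw [eq_neg_iff_add_eq_zero]
    linear_combination (norm := abel) h
  have hc := hcont_curve hγI
  have hd := hcont_curve hφI
  have hc1 : ∀ s, 0 ≤ s → curve γ s ∈ V1 := fun s hs => by
    rw [curve_eq_Ioc hs]
    exact mem_setIntegral V1 measurableSet_Ioc (fun x _ => hγ1 x)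
  have hd1 : ∀ s, 0 ≤ s → curve φ s ∈ V1 := fun s hs => by
    rw [curve_eq_Ioc hs]
    exact mem_setIntegral V1 measurableSet_Ioc (fun x _ => hφ1 x)
  have hW : ∀ t ∈ Ioc (0:ℝ) 1, curve γ t ∈ W := fun t ht => hvals t (hsub ht)
  have i0 : IntegrableOn (fun s => br (curve γ s) (γ s)) (Icc (0:ℝ) 1) :=
    intOn_clm2 (brC br) hc hγI
  have i1 : IntegrableOn (fun s => br (curve φ s) (γ s) + br (curve γ s) (φ s)) (Icc (0:ℝ) 1) :=
    (intOn_clm2 (brC br) hd hγI).add (intOn_clm2 (brC br) hc hφI)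
  have hq : ContinuousOn (curve2 br γ) (Icc (0:ℝ) 1) := by
    unfold curve2
    refine ContinuousOn.const_smul ?_ _
    rw [show Icc (0:ℝ) 1 = uIcc 0 1 from (uIcc_of_le zero_le_one).symm]
    exact continuousOn_primitive_interval (by rwa [uIcc_of_le zero_le_one])
  have ha : ContinuousOn (cA br γ φ) (Icc (0:ℝ) 1) := by
    unfold cA
    refine ContinuousOn.const_smul ?_ _
    rw [show Icc (0:ℝ) 1 = uIcc 0 1 from (uIcc_of_le zero_le_one).symm]
    exact continuousOn_primitive_interval (by rwa [uIcc_of_le zero_le_one])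
  have hA1i : IntegrableOn (fun t => (12:ℝ)⁻¹ • (br (curve φ t) (br (curve γ t) (γ t))
        + br (curve γ t) (br (curve φ t) (γ t)) + br (curve γ t) (br (curve γ t) (φ t)))
      + (2:ℝ)⁻¹ • (br (cA br γ φ t) (γ t) + br (curve2 br γ t) (φ t))) (Icc (0:ℝ) 1) := by
    refine Integrable.add ?_ ?_
    · refine Integrable.smul _ (((intOn_clm2 (brC br) hd i0).add
        (intOn_clm2 (brC br) hc (intOn_clm2 (brC br) hd hγI))).add
        (intOn_clm2 (brC br) hc (intOn_clm2 (brC br) hc hφI)))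
    · exact Integrable.smul _ ((intOn_clm2 (brC br) ha hγI).add (intOn_clm2 (brC br) hq hφI))
  -- integrable scalar atoms on Ioc 0 1
  have I_1 : Integrable (fun t => L (br (curve φ t) (br (curve γ t) (γ t))))
      (volume.restrict (Ioc (0:ℝ) 1)) :=
    L.integrable_comp ((intOn_clm2 (brC br) hd i0).mono_set hsub)
  have I_2 : Integrable (fun t => L (br (curve γ t) (br (curve φ t) (γ t))))
      (volume.restrict (Ioc (0:ℝ) 1)) :=
    L.integrable_comp ((intOn_clm2 (brC br) hc (intOn_clm2 (brC br) hd hγI)).mono_set hsub)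
  have I_3 : Integrable (fun t => L (br (curve γ t) (br (curve γ t) (φ t))))
      (volume.restrict (Ioc (0:ℝ) 1)) :=
    L.integrable_comp ((intOn_clm2 (brC br) hc (intOn_clm2 (brC br) hc hφI)).mono_set hsub)
  have I_4 : Integrable (fun t => L (br (cA br γ φ t) (γ t)))
      (volume.restrict (Ioc (0:ℝ) 1)) :=
    L.integrable_comp ((intOn_clm2 (brC br) ha hγI).mono_set hsub)
  have I_5 : Integrable (fun t => L (br (curve2 br γ t) (φ t)))
      (volume.restrict (Ioc (0:ℝ) 1)) :=
    L.integrable_comp ((intOn_clm2 (brC br) hq hφI).mono_set hsub)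
  -- Step 1 : L (I1e) as an integral over Ioc 0 1
  have step1 : L (I1e br γ φ)
      = ∫ t in Ioc (0:ℝ) 1,
          ((12:ℝ)⁻¹ * (L (br (curve φ t) (br (curve γ t) (γ t)))
              + L (br (curve γ t) (br (curve φ t) (γ t)))
              + L (br (curve γ t) (br (curve γ t) (φ t))))
            + (2:ℝ)⁻¹ * (L (br (cA br γ φ t) (γ t)) + L (br (curve2 br γ t) (φ t)))) := by
    unfold I1e
    rw [← L.intervalIntegral_comp_comm (II01' hA1i), intervalIntegral.integral_of_le zero_le_one]
    refine setIntegral_congr_fun measurableSet_Ioc (fun t _ => ?_)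
    simp only [map_add, _root_.map_smul, smul_eq_mul]
  -- split the integral
  have step2 : (∫ t in Ioc (0:ℝ) 1,
          ((12:ℝ)⁻¹ * (L (br (curve φ t) (br (curve γ t) (γ t)))
              + L (br (curve γ t) (br (curve φ t) (γ t)))
              + L (br (curve γ t) (br (curve γ t) (φ t))))
            + (2:ℝ)⁻¹ * (L (br (cA br γ φ t) (γ t)) + L (br (curve2 br γ t) (φ t)))))
      = (12:ℝ)⁻¹ * ((∫ t in Ioc (0:ℝ) 1, L (br (curve φ t) (br (curve γ t) (γ t))))
            + (∫ t in Ioc (0:ℝ) 1, L (br (curve γ t) (br (curve φ t) (γ t))))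
            + (∫ t in Ioc (0:ℝ) 1, L (br (curve γ t) (br (curve γ t) (φ t)))))
        + (2:ℝ)⁻¹ * ((∫ t in Ioc (0:ℝ) 1, L (br (cA br γ φ t) (γ t)))
            + (∫ t in Ioc (0:ℝ) 1, L (br (curve2 br γ t) (φ t)))) := by
    have I_12 : Integrable (fun t => L (br (curve φ t) (br (curve γ t) (γ t)))
        + L (br (curve γ t) (br (curve φ t) (γ t)))) (volume.restrict (Ioc (0:ℝ) 1)) :=
      I_1.add I_2
    have I_123 : Integrable (fun t => L (br (curve φ t) (br (curve γ t) (γ t)))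
        + L (br (curve γ t) (br (curve φ t) (γ t)))
        + L (br (curve γ t) (br (curve γ t) (φ t)))) (volume.restrict (Ioc (0:ℝ) 1)) :=
      I_12.add I_3
    have I_45 : Integrable (fun t => L (br (cA br γ φ t) (γ t))
        + L (br (curve2 br γ t) (φ t))) (volume.restrict (Ioc (0:ℝ) 1)) := I_4.add I_5
    have I_l : Integrable (fun t => (12:ℝ)⁻¹ * (L (br (curve φ t) (br (curve γ t) (γ t)))
        + L (br (curve γ t) (br (curve φ t) (γ t)))
        + L (br (curve γ t) (br (curve γ t) (φ t))))) (volume.restrict (Ioc (0:ℝ) 1)) :=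
      I_123.const_mul _
    have I_r : Integrable (fun t => (2:ℝ)⁻¹ * (L (br (cA br γ φ t) (γ t))
        + L (br (curve2 br γ t) (φ t)))) (volume.restrict (Ioc (0:ℝ) 1)) := I_45.const_mul _
    rw [← integral_add I_1 I_2, ← integral_add I_12 I_3, ← integral_add I_4 I_5,
      ← MeasureTheory.integral_const_mul, ← MeasureTheory.integral_const_mul, ← integral_add I_l I_r]
  set LB : 𝕓 →L[ℝ] 𝕓 →L[ℝ] ℝ := (ContinuousLinearMap.compL ℝ 𝕓 𝕓 ℝ L).comp (brC br) with hLBdef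
  have hLB : ∀ x y, LB x y = L (br x y) := fun x y => rfl
  have hLBf : ∀ x y, LB.flip x y = L (br y x) := fun x y => rfl
  -- the easy vanishing integrals
  have z2 : (∫ t in Ioc (0:ℝ) 1, L (br (curve γ t) (br (curve φ t) (γ t)))) = 0 := by
    rw [show (∫ t in Ioc (0:ℝ) 1, L (br (curve γ t) (br (curve φ t) (γ t))))
        = ∫ t in Ioc (0:ℝ) 1, (0:ℝ) from setIntegral_congr_fun measurableSet_Ioc
      (fun t ht => hL _ (hW t ht) _ (hV2 _ (hd1 t ht.1.le) _ (hγ1 t))), MeasureTheory.integral_zero]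
  have z3 : (∫ t in Ioc (0:ℝ) 1, L (br (curve γ t) (br (curve γ t) (φ t)))) = 0 := by
    rw [show (∫ t in Ioc (0:ℝ) 1, L (br (curve γ t) (br (curve γ t) (φ t))))
        = ∫ t in Ioc (0:ℝ) 1, (0:ℝ) from setIntegral_congr_fun measurableSet_Ioc
      (fun t ht => hL _ (hW t ht) _ (hV2 _ (hc1 t ht.1.le) _ (hφ1 t))), MeasureTheory.integral_zero]
  -- Jacobi pointwise rewriting for J1a
  have jfix : EqOn (fun t => L (br (curve φ t) (br (curve γ t) (γ t))))
      (fun t => L (br (γ t) (br (curve γ t) (curve φ t)))) (Ioc (0:ℝ) 1) := by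
    intro t ht
    have hj := congrArg L (hjac (curve φ t) (curve γ t) (γ t))
    have h2 : L (br (curve γ t) (br (γ t) (curve φ t))) = 0 :=
      hL _ (hW t ht) _ (hV2 _ (hγ1 t) _ (hd1 t ht.1.le))
    have h3 : br (curve φ t) (curve γ t) = - br (curve γ t) (curve φ t) := hasym _ _
    rw [h3] at hj
    simp only [map_add, map_neg, map_zero] at hj
    dsimp only
    linarith [hj, h2]
  -- the curve-product rule
  have hhI : IntegrableOn (fun s => br (curve γ s) (φ s) + br (γ s) (curve φ s))
      (Icc (0:ℝ) 1) :=
    (intOn_clm2 (brC br) hc hφI).add (intOn_clm2' (brC br) hγI hd)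
  have u_eq : ∀ t ∈ Ioc (0:ℝ) 1, br (curve γ t) (curve φ t)
      = ∫ s in Ioc (0:ℝ) t, (br (curve γ s) (φ s) + br (γ s) (curve φ s)) := by
    intro t ht
    have h0t : Ioc (0:ℝ) t ⊆ Icc (0:ℝ) 1 := fun x hx => ⟨hx.1.le, hx.2.trans ht.2⟩
    have hfI : IntegrableOn γ (Ioc 0 t) := hγI.mono_set h0t
    have hgI : IntegrableOn φ (Ioc 0 t) := hφI.mono_set h0t
    have hPR := prodRule (brC br) hfI hgI
    have e1 : (∫ s in Ioc (0:ℝ) t, brC br (∫ x in Ioc (0:ℝ) s, γ x) (φ s))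
        = ∫ s in Ioc (0:ℝ) t, br (curve γ s) (φ s) :=
      setIntegral_congr_fun measurableSet_Ioc (fun s hs => by
        rw [show (∫ x in Ioc (0:ℝ) s, γ x) = curve γ s from (curve_eq_Ioc hs.1.le).symm]
        simp)
    have e2 : (∫ s in Ioc (0:ℝ) t, brC br (γ s) (∫ x in Ioc (0:ℝ) s, φ x))
        = ∫ s in Ioc (0:ℝ) t, br (γ s) (curve φ s) :=
      setIntegral_congr_fun measurableSet_Ioc (fun s hs => by
        rw [show (∫ x in Ioc (0:ℝ) s, φ x) = curve φ s from (curve_eq_Ioc hs.1.le).symm]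
        simp)
    rw [e1, e2] at hPR
    have ia1 : IntegrableOn (fun s => br (curve γ s) (φ s)) (Ioc (0:ℝ) t) :=
      (intOn_clm2 (brC br) hc hφI).mono_set h0t
    have ia2 : IntegrableOn (fun s => br (γ s) (curve φ s)) (Ioc (0:ℝ) t) :=
      (intOn_clm2' (brC br) hγI hd).mono_set h0t
    rw [curve_eq_Ioc ht.1.le, curve_eq_Ioc ht.1.le (g := φ),
      show (br (∫ s in Ioc (0:ℝ) t, γ s)) (∫ s in Ioc (0:ℝ) t, φ s)
        = brC br (∫ s in Ioc (0:ℝ) t, γ s) (∫ s in Ioc (0:ℝ) t, φ s) from rfl, ← hPR,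
      ← integral_add ia1 ia2]
  -- J1a = 0
  have z1 : (∫ t in Ioc (0:ℝ) 1, L (br (curve φ t) (br (curve γ t) (γ t)))) = 0 := by
    rw [setIntegral_congr_fun measurableSet_Ioc jfix]
    have hPR := prodRule LB.flip (hhI.mono_set hsub) (hγI.mono_set hsub)
    have e1 : (∫ t in Ioc (0:ℝ) 1,
        LB.flip (∫ s in Ioc (0:ℝ) t, (br (curve γ s) (φ s) + br (γ s) (curve φ s))) (γ t))
        = ∫ t in Ioc (0:ℝ) 1, L (br (γ t) (br (curve γ t) (curve φ t))) :=
      setIntegral_congr_fun measurableSet_Ioc (fun t ht => by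
        rw [← u_eq t ht, hLBf])
    have e2 : (∫ t in Ioc (0:ℝ) 1,
        LB.flip (br (curve γ t) (φ t) + br (γ t) (curve φ t)) (∫ s in Ioc (0:ℝ) t, γ s))
        = 0 := by
      rw [show (∫ t in Ioc (0:ℝ) 1,
          LB.flip (br (curve γ t) (φ t) + br (γ t) (curve φ t)) (∫ s in Ioc (0:ℝ) t, γ s))
          = ∫ t in Ioc (0:ℝ) 1, (0:ℝ) from setIntegral_congr_fun measurableSet_Ioc
        (fun t ht => by
          rw [hLBf, show (∫ s in Ioc (0:ℝ) t, γ s) = curve γ t from (curve_eq_Ioc ht.1.le).symm]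
          exact hL _ (hW t ht) _ (V2.add_mem (hV2 _ (hc1 t ht.1.le) _ (hφ1 t))
            (hV2 _ (hγ1 t) _ (hd1 t ht.1.le)))), MeasureTheory.integral_zero]
    have e3 : LB.flip (∫ s in Ioc (0:ℝ) 1, (br (curve γ s) (φ s) + br (γ s) (curve φ s)))
        (∫ s in Ioc (0:ℝ) 1, γ s) = 0 := by
      rw [hLBf, show (∫ s in Ioc (0:ℝ) 1, γ s) = curve γ 1 from (curve_eq_Ioc zero_le_one).symm]
      refine hL _ (hvals 1 (by norm_num)) _ ?_
      exact mem_setIntegral V2 measurableSet_Ioc (fun s hs =>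
        V2.add_mem (hV2 _ (hc1 s hs.1.le) _ (hφ1 s)) (hV2 _ (hγ1 s) _ (hd1 s hs.1.le)))
    rw [e1, e2, e3] at hPR
    linarith [hPR]
  -- J2a = 0
  have hmI : IntegrableOn (fun s => (2:ℝ)⁻¹ • (br (curve φ s) (γ s) + br (curve γ s) (φ s)))
      (Icc (0:ℝ) 1) := i1.smul _
  have z4 : (∫ t in Ioc (0:ℝ) 1, L (br (cA br γ φ t) (γ t))) = 0 := by
    have hPR := prodRule LB (hmI.mono_set hsub) (hγI.mono_set hsub)
    have e1 : (∫ t in Ioc (0:ℝ) 1,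
        LB (∫ s in Ioc (0:ℝ) t, (2:ℝ)⁻¹ • (br (curve φ s) (γ s) + br (curve γ s) (φ s))) (γ t))
        = ∫ t in Ioc (0:ℝ) 1, L (br (cA br γ φ t) (γ t)) :=
      setIntegral_congr_fun measurableSet_Ioc (fun t ht => by
        rw [← cA_eq_Ioc br ht.1.le, hLB])
    have e2 : (∫ t in Ioc (0:ℝ) 1,
        LB ((2:ℝ)⁻¹ • (br (curve φ t) (γ t) + br (curve γ t) (φ t))) (∫ s in Ioc (0:ℝ) t, γ s))
        = 0 := by
      rw [show (∫ t in Ioc (0:ℝ) 1,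
          LB ((2:ℝ)⁻¹ • (br (curve φ t) (γ t) + br (curve γ t) (φ t))) (∫ s in Ioc (0:ℝ) t, γ s))
          = ∫ t in Ioc (0:ℝ) 1, (0:ℝ) from setIntegral_congr_fun measurableSet_Ioc
        (fun t ht => by
          rw [hLB, show (∫ s in Ioc (0:ℝ) t, γ s) = curve γ t from (curve_eq_Ioc ht.1.le).symm,
            hasym]
          have hmem : (2:ℝ)⁻¹ • (br (curve φ t) (γ t) + br (curve γ t) (φ t)) ∈ V2 :=
            V2.smul_mem _ (V2.add_mem (hV2 _ (hd1 t ht.1.le) _ (hγ1 t))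
              (hV2 _ (hc1 t ht.1.le) _ (hφ1 t)))
          rw [map_neg, hL _ (hW t ht) _ hmem, neg_zero]), MeasureTheory.integral_zero]
    have e3 : LB (∫ s in Ioc (0:ℝ) 1, (2:ℝ)⁻¹ • (br (curve φ s) (γ s) + br (curve γ s) (φ s)))
        (∫ s in Ioc (0:ℝ) 1, γ s) = 0 := by
      rw [hLB, show (∫ s in Ioc (0:ℝ) 1, γ s) = curve γ 1 from (curve_eq_Ioc zero_le_one).symm,
        hasym]
      have hmem : (∫ s in Ioc (0:ℝ) 1,
          (2:ℝ)⁻¹ • (br (curve φ s) (γ s) + br (curve γ s) (φ s))) ∈ V2 :=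
        mem_setIntegral V2 measurableSet_Ioc (fun s hs =>
          V2.smul_mem _ (V2.add_mem (hV2 _ (hd1 s hs.1.le) _ (hγ1 s))
            (hV2 _ (hc1 s hs.1.le) _ (hφ1 s))))
      rw [map_neg, hL _ (hvals 1 (by norm_num)) _ hmem, neg_zero]
    rw [e1, e2, e3] at hPR
    linarith [hPR]
  -- J2b
  have hkI : IntegrableOn (fun s => (2:ℝ)⁻¹ • br (curve γ s) (γ s)) (Icc (0:ℝ) 1) := i0.smul _
  have z5 : (∫ t in Ioc (0:ℝ) 1, L (br (curve2 br γ t) (φ t)))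
      = L (br (curve2 br γ 1) (curve φ 1)) := by
    have hPR := prodRule LB (hkI.mono_set hsub) (hφI.mono_set hsub)
    have e1 : (∫ t in Ioc (0:ℝ) 1,
        LB (∫ s in Ioc (0:ℝ) t, (2:ℝ)⁻¹ • br (curve γ s) (γ s)) (φ t))
        = ∫ t in Ioc (0:ℝ) 1, L (br (curve2 br γ t) (φ t)) :=
      setIntegral_congr_fun measurableSet_Ioc (fun t ht => by
        rw [← curve2_eq_Ioc br ht.1.le, hLB])
    have e2 : (∫ t in Ioc (0:ℝ) 1,
        LB ((2:ℝ)⁻¹ • br (curve γ t) (γ t)) (∫ s in Ioc (0:ℝ) t, φ s))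
        = ∫ t in Ioc (0:ℝ) 1,
            (-(2:ℝ)⁻¹) * L (br (curve φ t) (br (curve γ t) (γ t))) :=
      setIntegral_congr_fun measurableSet_Ioc (fun t ht => by
        rw [hLB, show (∫ s in Ioc (0:ℝ) t, φ s) = curve φ t from (curve_eq_Ioc ht.1.le).symm]
        rw [LinearMap.map_smul₂, hasym ((br (curve γ t)) (γ t)) (curve φ t)]
        simp only [_root_.map_smul, map_neg, smul_eq_mul]
        ring)
    have e3 : LB (∫ s in Ioc (0:ℝ) 1, (2:ℝ)⁻¹ • br (curve γ s) (γ s))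
        (∫ s in Ioc (0:ℝ) 1, φ s) = L (br (curve2 br γ 1) (curve φ 1)) := by
      rw [hLB, show (∫ s in Ioc (0:ℝ) 1, φ s) = curve φ 1 from (curve_eq_Ioc zero_le_one).symm,
        ← curve2_eq_Ioc br zero_le_one]
    rw [e1, e2, e3, MeasureTheory.integral_const_mul] at hPR
    rw [z1] at hPR
    linarith [hPR]
  rw [step1, step2, z1, z2, z3, z4, z5]
  ring



end Aux

/-- curves with values in a subspace `W` of `V¹` with `⁅W,V²⁆ ⊊ V³`
are Goh curves. -/
theorem statement7 (V1 V2 V3 : Submodule ℝ 𝕓) (hC : CarnotStep3 br V1 V2 V3)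
    (W : Submodule ℝ 𝕓) (hW : W ≤ V1)
    (hproper : Submodule.span ℝ {x | ∃ w ∈ W, ∃ ξ ∈ V2, x = br w ξ} < V3)
    (γ : ℝ → 𝕓) (hγ : γ ∈ H1zero V1)
    (hvals : ∀ t ∈ Icc (0:ℝ) 1, curve γ t ∈ W) :
    ∃ l1 l2 l3 : 𝕓 →ₗ[ℝ] ℝ,
      (∃ x ∈ V3, l3 x ≠ 0) ∧ (∀ x ∈ V2, l2 x = 0) ∧
      (∀ t ∈ Icc (0:ℝ) 1, ∀ a ∈ V1, ∀ b ∈ V1, l3 (br (curve γ t) (br a b)) = 0) ∧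
      (∀ φ ∈ H1zero V1, pairL l1 l2 l3 (dE br γ φ) = 0) := by
  obtain ⟨-, hV2eq, -, -, halt, hjac⟩ := hC
  have hV2 : ∀ a ∈ V1, ∀ b ∈ V1, br a b ∈ V2 := fun a ha b hb => by
    rw [hV2eq]; exact Submodule.subset_span ⟨a, ha, b, hb, rfl⟩
  obtain ⟨v, hv3, hvS⟩ := SetLike.exists_of_lt hproper
  set S := Submodule.span ℝ {x | ∃ w ∈ W, ∃ ξ ∈ V2, x = br w ξ} with hSdef
  have huS : v - (S.orthogonalProjectionOnto v : 𝕓) ∈ Sᗮ :=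
    S.sub_starProjection_mem_orthogonal v
  have hu0 : v - (S.orthogonalProjectionOnto v : 𝕓) ≠ 0 := by
    intro h
    apply hvS
    have hv : v = (S.orthogonalProjectionOnto v : 𝕓) := by rwa [sub_eq_zero] at h
    rw [hv]; exact (S.orthogonalProjectionOnto v).2
  have hLS : ∀ x ∈ S, innerSL ℝ (v - (S.orthogonalProjectionOnto v : 𝕓)) x = 0 := fun x hx =>
    (Submodule.mem_orthogonal' S _).1 huS x hx
  have hL : ∀ w ∈ W, ∀ ξ ∈ V2, innerSL ℝ (v - (S.orthogonalProjectionOnto v : 𝕓)) (br w ξ) = 0 :=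
    fun w hw ξ hξ => hLS _ (Submodule.subset_span ⟨w, hw, ξ, hξ, rfl⟩)
  have hLv : innerSL ℝ (v - (S.orthogonalProjectionOnto v : 𝕓)) v ≠ 0 := by
    have hv : v = (v - (S.orthogonalProjectionOnto v : 𝕓)) + (S.orthogonalProjectionOnto v : 𝕓) := by
      abel
    have h0 : innerSL ℝ (v - (S.orthogonalProjectionOnto v : 𝕓))
        ((S.orthogonalProjectionOnto v : 𝕓)) = 0 := hLS _ (S.orthogonalProjectionOnto v).2
    rw [show (innerSL ℝ (v - (S.orthogonalProjectionOnto v : 𝕓))) v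
        = (innerSL ℝ (v - (S.orthogonalProjectionOnto v : 𝕓)))
          ((v - (S.orthogonalProjectionOnto v : 𝕓)) + (S.orthogonalProjectionOnto v : 𝕓)) by rw [← hv]]
    rw [map_add, h0, add_zero]
    rw [innerSL_apply_apply]
    exact (inner_self_ne_zero (𝕜 := ℝ)).2 hu0
  haveI : IsFiniteMeasure (volume.restrict (Icc (0:ℝ) 1)) := by
    constructor
    rw [Measure.restrict_apply_univ]
    simp [Real.volume_Icc]
  have hγ1 : ∀ t, γ t ∈ V1 := hγ.1
  have hγI : IntegrableOn γ (Icc 0 1) :=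
    memLp_one_iff_integrable.mp (hγ.2.mono_exponent (by norm_num))
  set L : 𝕓 →L[ℝ] ℝ := innerSL ℝ (v - (S.orthogonalProjectionOnto v : 𝕓)) with hLdef
  refine ⟨-((2:ℝ)⁻¹ • ((L : 𝕓 →ₗ[ℝ] ℝ).comp (br (F2 br γ)))), 0, (L : 𝕓 →ₗ[ℝ] ℝ),
    ⟨v, hv3, hLv⟩, fun x _ => rfl, ?_, ?_⟩
  · intro t ht a ha b hb
    exact hL _ (hvals t ht) _ (hV2 a ha b hb)
  · intro φ hφ
    have hφ1 : ∀ t, φ t ∈ V1 := hφ.1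
    have hφI : IntegrableOn φ (Icc 0 1) :=
      memLp_one_iff_integrable.mp (hφ.2.mono_exponent (by norm_num))
    rw [dE_eq br hγI hφI]
    have hkey := calcI1 br V1 V2 W hγ1 hφ1 hγI hφI hvals hV2 halt hjac L hL
    unfold pairL
    simp only [LinearMap.neg_apply, LinearMap.smul_apply, LinearMap.comp_apply,
      LinearMap.zero_apply, ContinuousLinearMap.coe_coe, smul_eq_mul]
    rw [hkey, show F2 br γ = curve2 br γ 1 from rfl]
    ring
end
end

section
/- Let L be the free Lie algebra over ℝ on a finite set X with at least two elements, and let V ⊆ L be the linear span of the canonical generators. For every proper linear subspace W ⊊ V, the subspace span{⁅w,ξ⁆ : w ∈ W, ξ ∈ span{⁅u,v⁆ : u,v ∈ V}} is a proper subspace of span{⁅a,ξ⁆ : a ∈ V, ξ ∈ span{⁅u,v⁆ : u,v ∈ V}}. (This is the fact that in a free Carnot algebra of step 3 one has ⁅W,V²⁆ ⊊ V³ whenever W is a proper subspace of V¹, as used in Corollary 4.4(2).) -/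
open Matrix

attribute [local instance 100] LieRing.ofAssociativeRing

noncomputable section

namespace St8Aux

lemma exists_sep_functional {M : Type*} [AddCommGroup M] [Module ℝ M]
    (S : Submodule ℝ M) (v : M) (hv : v ∉ S) :
    ∃ φ : M →ₗ[ℝ] ℝ, (∀ s ∈ S, φ s = 0) ∧ φ v ≠ 0 := by
  have hq : S.mkQ v ≠ 0 := by simpa [Submodule.Quotient.mk_eq_zero] using hv
  obtain ⟨ψ, hψ⟩ : ∃ ψ : Module.Dual ℝ (M ⧸ S), ψ (S.mkQ v) ≠ 0 := by
    by_contra h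
    push_neg at h
    exact hq ((Module.forall_dual_apply_eq_zero_iff ℝ _).mp h)
  refine ⟨ψ.comp S.mkQ, fun s hs => ?_, hψ⟩
  have : S.mkQ s = 0 := by simpa [Submodule.Quotient.mk_eq_zero] using hs
  simp [this]

def A : Matrix (Fin 4) (Fin 4) ℝ := Matrix.single 0 1 1 + Matrix.single 1 2 1
def B : Matrix (Fin 4) (Fin 4) ℝ := Matrix.single 2 3 1
def C : Matrix (Fin 4) (Fin 4) ℝ := Matrix.single 1 3 1
def D : Matrix (Fin 4) (Fin 4) ℝ := Matrix.single 0 3 1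

lemma matAB : ⁅A, B⁆ = C := by
  rw [Ring.lie_def]
  ext i j
  fin_cases i <;> fin_cases j <;>
    simp [A, B, C, Matrix.mul_apply, Fin.sum_univ_four, Matrix.single]

lemma matAC : ⁅A, C⁆ = D := by
  rw [Ring.lie_def]
  ext i j
  fin_cases i <;> fin_cases j <;>
    simp [A, C, D, Matrix.mul_apply, Fin.sum_univ_four, Matrix.single]

lemma matBC : ⁅B, C⁆ = 0 := by
  rw [Ring.lie_def]
  ext i j
  fin_cases i <;> fin_cases j <;>
    simp [B, C, Matrix.mul_apply, Fin.sum_univ_four, Matrix.single]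

lemma D03 : D 0 3 = 1 := by simp [D, Matrix.single]

end St8Aux

end

open St8Aux


/-- in the free Lie algebra over `ℝ` on a finite set `X` with at least two
elements, if `W` is a proper subspace of the span `V` of the generators, then
`span ⁅W, span ⁅V,V⁆⁆` is a proper subspace of `span ⁅V, span ⁅V,V⁆⁆`. -/
theorem statement8 (X : Type*) [Fintype X] [Nontrivial X]
    (V : Submodule ℝ (FreeLieAlgebra ℝ X))
    (hV : V = Submodule.span ℝ (Set.range (FreeLieAlgebra.of ℝ : X → FreeLieAlgebra ℝ X)))
    (V2 : Submodule ℝ (FreeLieAlgebra ℝ X))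
    (hV2 : V2 = Submodule.span ℝ {x | ∃ u ∈ V, ∃ v ∈ V, x = ⁅u, v⁆})
    (W : Submodule ℝ (FreeLieAlgebra ℝ X)) (hW : W < V) :
    Submodule.span ℝ {x | ∃ w ∈ W, ∃ ξ ∈ V2, x = ⁅w, ξ⁆}
      < Submodule.span ℝ {x | ∃ a ∈ V, ∃ ξ ∈ V2, x = ⁅a, ξ⁆} := by
  classical
  obtain ⟨v0, hv0V, hv0W⟩ := SetLike.exists_of_lt hW
  obtain ⟨f, hfW, hfv0⟩ := exists_sep_functional W v0 hv0W
  -- find v ∈ V with v ∉ span {v0}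
  obtain ⟨x, y, hxy⟩ := exists_pair_ne X
  have hofV : ∀ z : X, FreeLieAlgebra.of ℝ z ∈ V := by
    intro z; rw [hV]; exact Submodule.subset_span ⟨z, rfl⟩
  have hv_exists : (FreeLieAlgebra.of ℝ x ∉ Submodule.span ℝ {v0}) ∨
      (FreeLieAlgebra.of ℝ y ∉ Submodule.span ℝ {v0}) := by
    by_contra h
    push_neg at h
    obtain ⟨hx, hy⟩ := h
    rw [Submodule.mem_span_singleton] at hx hy
    obtain ⟨a, ha⟩ := hx
    obtain ⟨b, hb⟩ := hy
    set π := FreeLieAlgebra.lift ℝ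
      (fun z : X => ((if z = x then (1:ℝ) else 0, if z = y then (1:ℝ) else 0) : ℝ × ℝ))
    have hπx : π (FreeLieAlgebra.of ℝ x) = (1, 0) := by
      simp [π, FreeLieAlgebra.lift_of_apply, hxy]
    have hπy : π (FreeLieAlgebra.of ℝ y) = (0, 1) := by
      simp [π, FreeLieAlgebra.lift_of_apply, hxy.symm]
    have h1 : a • π v0 = ((1:ℝ), (0:ℝ)) := by rw [← hπx, ← ha]; simp
    have h2 : b • π v0 = ((0:ℝ), (1:ℝ)) := by rw [← hπy, ← hb]; simp
    have h1a : a * (π v0).1 = 1 := by simpa using congrArg Prod.fst h1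
    have h1b : a * (π v0).2 = 0 := by simpa using congrArg Prod.snd h1
    have h2b : b * (π v0).2 = 1 := by simpa using congrArg Prod.snd h2
    have ha0 : a ≠ 0 := by rintro rfl; simp at h1a
    have hq0 : (π v0).2 = 0 := by
      rcases mul_eq_zero.mp h1b with h | h
      · exact absurd h ha0
      · exact h
    rw [hq0, mul_zero] at h2b
    exact zero_ne_one h2b
  obtain ⟨v, hvV, hv⟩ : ∃ v, v ∈ V ∧ v ∉ Submodule.span ℝ {v0} := by
    rcases hv_exists with h | h
    exacts [⟨_, hofV x, h⟩, ⟨_, hofV y, h⟩]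
  obtain ⟨g, hgv0', hgv⟩ := exists_sep_functional (Submodule.span ℝ {v0}) v hv
  have hgv0 : g v0 = 0 := hgv0' v0 (Submodule.mem_span_singleton_self v0)
  -- the representation θ
  set θ := FreeLieAlgebra.lift ℝ
    (fun z : X => f (FreeLieAlgebra.of ℝ z) • A + g (FreeLieAlgebra.of ℝ z) • B) with hθ
  -- θ on V
  have hθV : ∀ u ∈ V, θ u = f u • A + g u • B := by
    have : Set.EqOn (⇑θ.toLinearMap) (⇑(f.smulRight A + g.smulRight B))
        (Set.range (FreeLieAlgebra.of ℝ : X → FreeLieAlgebra ℝ X)) := by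
      rintro _ ⟨z, rfl⟩
      simp [θ, FreeLieAlgebra.lift_of_apply]
    intro u hu
    have := LinearMap.eqOn_span this (hV ▸ hu)
    simpa using this
  -- θ on V2
  have hθV2 : ∀ ξ ∈ V2, ∃ c : ℝ, θ ξ = c • C := by
    have hsub : V2 ≤ Submodule.comap θ.toLinearMap (Submodule.span ℝ {C}) := by
      rw [hV2, Submodule.span_le]
      rintro _ ⟨u, hu, v', hv', rfl⟩
      simp only [SetLike.mem_coe, Submodule.mem_comap, LieHom.coe_toLinearMap]
      have : θ ⁅u, v'⁆ = (f u * g v' - g u * f v') • C := by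
        rw [LieHom.map_lie, hθV u hu, hθV v' hv']
        simp only [add_lie, lie_add, smul_lie, lie_smul, lie_self, smul_zero, matAB]
        have : ⁅B, A⁆ = -C := by rw [← lie_skew, matAB]
        rw [this]
        module
      rw [this]
      exact Submodule.smul_mem _ _ (Submodule.mem_span_singleton_self C)
    intro ξ hξ
    have := hsub hξ
    rw [Submodule.mem_comap, Submodule.mem_span_singleton] at this
    obtain ⟨c, hc⟩ := this
    exact ⟨c, hc.symm⟩
  -- the functional Ψ
  let ent : Matrix (Fin 4) (Fin 4) ℝ →ₗ[ℝ] ℝ :=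
    { toFun := fun M => M 0 3
      map_add' := fun _ _ => rfl
      map_smul' := fun _ _ => rfl }
  let Ψ : FreeLieAlgebra ℝ X →ₗ[ℝ] ℝ := ent ∘ₗ θ.toLinearMap
  -- Ψ kills the left span
  have hleft : Submodule.span ℝ {x | ∃ w ∈ W, ∃ ξ ∈ V2, x = ⁅w, ξ⁆} ≤ LinearMap.ker Ψ := by
    rw [Submodule.span_le]
    rintro _ ⟨w, hw, ξ, hξ, rfl⟩
    obtain ⟨c, hc⟩ := hθV2 ξ hξ
    have hθw : θ ⁅w, ξ⁆ = (f w * c) • D := by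
      rw [LieHom.map_lie, hθV w (hW.le hw), hc]
      simp only [add_lie, smul_lie, lie_smul, matAC, matBC, smul_zero]
      module
    simp only [SetLike.mem_coe, LinearMap.mem_ker, Ψ, LinearMap.comp_apply,
      LieHom.coe_toLinearMap, hθw]
    simp [ent, hfW w hw, Matrix.smul_apply]
  -- the witness
  have hwit_mem : ⁅v0, ⁅v0, v⁆⁆ ∈
      Submodule.span ℝ {x | ∃ a ∈ V, ∃ ξ ∈ V2, x = ⁅a, ξ⁆} := by
    apply Submodule.subset_span
    refine ⟨v0, hv0V, ⁅v0, v⁆, ?_, rfl⟩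
    rw [hV2]
    exact Submodule.subset_span ⟨v0, hv0V, v, hvV, rfl⟩
  have hΨwit : Ψ ⁅v0, ⁅v0, v⁆⁆ ≠ 0 := by
    have h1 : θ ⁅v0, v⁆ = (f v0 * g v - g v0 * f v) • C := by
      rw [LieHom.map_lie, hθV v0 hv0V, hθV v hvV]
      simp only [add_lie, lie_add, smul_lie, lie_smul, lie_self, smul_zero, matAB]
      have : ⁅B, A⁆ = -C := by rw [← lie_skew, matAB]
      rw [this]
      module
    have h2 : θ ⁅v0, ⁅v0, v⁆⁆ = (f v0 * (f v0 * g v - g v0 * f v)) • D := by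
      rw [LieHom.map_lie, hθV v0 hv0V, h1]
      simp only [add_lie, smul_lie, lie_smul, matAC, matBC, smul_zero]
      module
    simp only [Ψ, LinearMap.comp_apply, LieHom.coe_toLinearMap, h2]
    simp only [ent, LinearMap.coe_mk, AddHom.coe_mk, Matrix.smul_apply, D03, smul_eq_mul,
      mul_one, hgv0, zero_mul, mul_zero, sub_zero]
    show (f v0 * (f v0 * g v)) * D 0 3 ≠ 0
    rw [D03, mul_one]
    exact mul_ne_zero hfv0 (mul_ne_zero hfv0 hgv)
  have hwit_not : ⁅v0, ⁅v0, v⁆⁆ ∉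
      Submodule.span ℝ {x | ∃ w ∈ W, ∃ ξ ∈ V2, x = ⁅w, ξ⁆} := by
    intro hmem
    exact hΨwit (hleft hmem)
  refine lt_of_le_of_ne ?_ ?_
  · apply Submodule.span_mono
    rintro _ ⟨w, hw, ξ, hξ, rfl⟩
    exact ⟨w, hW.le hw, ξ, hξ, rfl⟩
  · intro heq
    exact hwit_not (heq ▸ hwit_mem)
end

section
/- (Kernel of the differential of the end-point map.) For all γ, φ ∈ H¹(0): d_γE(φ) = 0 if and only if φ(1) = 0, ∫₀¹ ⁅φ,γ̇⁆ dt = 0, and ∫₀¹ ⁅γ,⁅φ,γ̇⁆⁆ dt = 0. -/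
open MeasureTheory Set intervalIntegral

noncomputable section

variable {𝕓 : Type*} [NormedAddCommGroup 𝕓] [InnerProductSpace ℝ 𝕓] [FiniteDimensional ℝ 𝕓]

variable (br : 𝕓 →ₗ[ℝ] 𝕓 →ₗ[ℝ] 𝕓)

set_option linter.unusedSectionVars false

/-- The Lie bracket as a continuous bilinear map (finite dimensions). -/
def toCLM : 𝕓 →L[ℝ] 𝕓 →L[ℝ] 𝕓 :=
  LinearMap.toContinuousLinearMap
    ({ toFun := fun a => LinearMap.toContinuousLinearMap (br a)
       map_add' := fun a b => by ext c; simp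
       map_smul' := fun r a => by ext c; simp } : 𝕓 →ₗ[ℝ] 𝕓 →L[ℝ] 𝕓)

lemma toCLM_apply (a b : 𝕓) : toCLM br a b = br a b := rfl

section AuxB
variable (B : 𝕓 →L[ℝ] 𝕓 →L[ℝ] 𝕓)

lemma memH1_integrableOn {g : ℝ → 𝕓} (h : MemLp g 2 (volume.restrict (Icc (0:ℝ) 1))) :
    IntegrableOn g (Icc (0:ℝ) 1) := by
  haveI : IsFiniteMeasure (volume.restrict (Icc (0:ℝ) 1)) := by
    constructor
    rw [Measure.restrict_apply_univ]
    simp [Real.volume_Icc]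
  exact h.integrable (by norm_num)

lemma contOn_curve {u : ℝ → 𝕓} (hu : IntegrableOn u (Icc (0:ℝ) 1)) :
    ContinuousOn (curve u) (Icc (0:ℝ) 1) := by
  have := intervalIntegral.continuousOn_primitive_interval
    (a := (0:ℝ)) (b := (1:ℝ)) (μ := volume) (f := u) ?_
  · rwa [uIcc_of_le zero_le_one] at this
  · rwa [uIcc_of_le zero_le_one]

lemma intervalIntegrable_of_icc {u : ℝ → 𝕓} (hu : IntegrableOn u (Icc (0:ℝ) 1))
    {a b : ℝ} (ha : a ∈ Icc (0:ℝ) 1) (hb : b ∈ Icc (0:ℝ) 1) :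
    IntervalIntegrable u volume a b := by
  apply MeasureTheory.IntegrableOn.intervalIntegrable
  exact hu.mono_set (uIcc_subset_Icc ha hb)

lemma intOn_Bmul {f g : ℝ → 𝕓} (hf : ContinuousOn f (Icc (0:ℝ) 1))
    (hg : IntegrableOn g (Icc (0:ℝ) 1)) :
    IntegrableOn (fun t => B (f t) (g t)) (Icc (0:ℝ) 1) := by
  obtain ⟨C, hC⟩ := isCompact_Icc.exists_bound_of_continuousOn hf
  refine Integrable.mono' ((hg.norm.const_mul (‖B‖ * C))) ?_ ?_
  · exact B.aestronglyMeasurable_comp₂ (hf.aestronglyMeasurable measurableSet_Icc) hg.1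
  · filter_upwards [ae_restrict_mem measurableSet_Icc] with t ht
    calc ‖B (f t) (g t)‖ ≤ ‖B‖ * ‖f t‖ * ‖g t‖ := B.le_opNorm₂ _ _
    _ ≤ ‖B‖ * C * ‖g t‖ :=
        mul_le_mul_of_nonneg_right
          (mul_le_mul_of_nonneg_left (hC t ht) (norm_nonneg B)) (norm_nonneg _)

lemma intOn_Bmul' {f g : ℝ → 𝕓} (hf : ContinuousOn f (Icc (0:ℝ) 1))
    (hg : IntegrableOn g (Icc (0:ℝ) 1)) :
    IntegrableOn (fun t => B (g t) (f t)) (Icc (0:ℝ) 1) :=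
  intOn_Bmul B.flip hf hg

lemma pair_lemma {u v : ℝ → 𝕓} (hu : IntegrableOn u (Icc (0:ℝ) 1))
    (hv : IntegrableOn v (Icc (0:ℝ) 1)) {t : ℝ} (ht : t ∈ Icc (0:ℝ) 1) :
    curve (fun s => B (u s) (curve v s) + B (curve u s) (v s)) t
      = B (curve u t) (curve v t) := by
  have h0t : (0:ℝ) ≤ t := ht.1
  set ρ : Measure ℝ := volume.restrict (Ioc (0:ℝ) t) with hρ
  have hsub : Ioc (0:ℝ) t ⊆ Icc (0:ℝ) 1 := fun s hs => ⟨hs.1.le, hs.2.trans ht.2⟩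
  have hsub' : ∀ s, s ∈ Ioc (0:ℝ) t → Ioc (0:ℝ) s ⊆ Icc (0:ℝ) 1 :=
    fun s hs r hr => ⟨hr.1.le, (hr.2.trans hs.2).trans ht.2⟩
  have hu' : Integrable u ρ := hu.mono_set hsub
  have hv' : Integrable v ρ := hv.mono_set hsub
  have huv : Integrable (fun p : ℝ × ℝ => B (u p.1) (v p.2)) (ρ.prod ρ) := by
    refine Integrable.mono' ((hu'.norm.mul_prod hv'.norm).const_mul ‖B‖) ?_ ?_
    · exact B.aestronglyMeasurable_comp₂ hu'.1.comp_fst hv'.1.comp_snd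
    · refine Filter.Eventually.of_forall fun p => ?_
      calc ‖B (u p.1) (v p.2)‖ ≤ ‖B‖ * ‖u p.1‖ * ‖v p.2‖ := B.le_opNorm₂ _ _
      _ = ‖B‖ * (‖u p.1‖ * ‖v p.2‖) := by ring
  have hS : MeasurableSet {p : ℝ × ℝ | p.2 ≤ p.1} :=
    measurableSet_le measurable_snd measurable_fst
  set G : ℝ × ℝ → 𝕓 := {p : ℝ × ℝ | p.2 ≤ p.1}.indicator
    (fun p => B (u p.1) (v p.2)) with hGdef
  set H : ℝ × ℝ → 𝕓 := {p : ℝ × ℝ | p.2 ≤ p.1}.indicator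
    (fun p => B (u p.2) (v p.1)) with hHdef
  have hG : Integrable G (ρ.prod ρ) := huv.indicator hS
  have hH : Integrable H (ρ.prod ρ) := by
    refine Integrable.indicator ?_ hS
    have := huv.swap
    exact this
  have hA : ∀ s ∈ Ioc (0:ℝ) t, B (u s) (curve v s) = ∫ r, G (s, r) ∂ρ := by
    intro s hs
    have hvs : IntegrableOn v (Ioc (0:ℝ) s) := hv.mono_set (hsub' s hs)
    have h1 : curve v s = ∫ r in Ioc (0:ℝ) s, v r := integral_of_le hs.1.le
    rw [h1, ← (B (u s)).integral_comp_comm hvs]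
    have h2 : ∀ r, G (s, r) = (Iic s).indicator (fun r => B (u s) (v r)) r := by
      intro r
      simp [hGdef, Set.indicator_apply, mem_Iic]
    rw [show (fun r => G (s, r)) = (Iic s).indicator (fun r => B (u s) (v r)) from funext h2]
    rw [hρ, setIntegral_indicator measurableSet_Iic]
    congr 1
    rw [Set.Ioc_inter_Iic, min_eq_right hs.2]
  have hB : ∀ s ∈ Ioc (0:ℝ) t, B (curve u s) (v s) = ∫ r, H (s, r) ∂ρ := by
    intro s hs
    have hus : IntegrableOn u (Ioc (0:ℝ) s) := hu.mono_set (hsub' s hs)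
    have h1 : curve u s = ∫ r in Ioc (0:ℝ) s, u r := integral_of_le hs.1.le
    have h3 : B (curve u s) (v s) = B.flip (v s) (∫ r in Ioc (0:ℝ) s, u r) := by
      rw [h1]; rfl
    rw [h3, ← (B.flip (v s)).integral_comp_comm hus]
    have h2 : ∀ r, H (s, r) = (Iic s).indicator (fun r => B (u r) (v s)) r := by
      intro r
      simp [hHdef, Set.indicator_apply, mem_Iic]
    rw [show (fun r => H (s, r)) = (Iic s).indicator (fun r => B (u r) (v s)) from funext h2]
    rw [hρ, setIntegral_indicator measurableSet_Iic]
    congr 1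
    rw [Set.Ioc_inter_Iic, min_eq_right hs.2]
  have hcurveEq : curve (fun s => B (u s) (curve v s) + B (curve u s) (v s)) t
      = (∫ s, (∫ r, G (s, r) ∂ρ) ∂ρ) + ∫ s, (∫ r, H (s, r) ∂ρ) ∂ρ := by
    rw [curve, integral_of_le h0t, ← hρ]
    rw [← integral_add hG.integral_prod_left hH.integral_prod_left]
    refine setIntegral_congr_fun measurableSet_Ioc fun s hs => ?_
    rw [hA s hs, hB s hs]
  rw [hcurveEq]
  have hswap : (∫ s, (∫ r, H (s, r) ∂ρ) ∂ρ) = ∫ s, (∫ r, H (r, s) ∂ρ) ∂ρ :=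
    integral_integral_swap hH
  rw [hswap]
  have hcomb : (∫ s, (∫ r, G (s, r) ∂ρ) ∂ρ) + (∫ s, (∫ r, H (r, s) ∂ρ) ∂ρ)
      = ∫ s, (∫ r, B (u s) (v r) ∂ρ) ∂ρ := by
    have hH' : Integrable (fun p : ℝ × ℝ => H (p.2, p.1)) (ρ.prod ρ) := by
      exact hH.swap
    rw [← integral_add hG.integral_prod_left hH'.integral_prod_left]
    refine integral_congr_ae ?_
    filter_upwards [hG.prod_right_ae, hH'.prod_right_ae, huv.prod_right_ae]
      with s hGs hHs hfs
    rw [← integral_add hGs hHs]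
    refine integral_congr_ae ?_
    have hsing : ρ {s} = 0 := by
      rw [hρ, Measure.restrict_apply (measurableSet_singleton s)]
      exact measure_mono_null inter_subset_left Real.volume_singleton
    have : ∀ r, r ≠ s → G (s, r) + H (r, s) = B (u s) (v r) := by
      intro r hr
      simp only [hGdef, hHdef, Set.indicator_apply, mem_setOf_eq]
      rcases lt_trichotomy r s with h | h | h
      · rw [if_pos h.le, if_neg (not_le.mpr h), add_zero]
      · exact absurd h hr
      · rw [if_neg (not_le.mpr h), if_pos h.le, zero_add]
    exact Filter.eventuallyEq_of_mem (compl_mem_ae_iff.mpr hsing)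
      (fun r hr => this r hr)
  rw [hcomb]
  have hfin : ∀ s, (∫ r, B (u s) (v r) ∂ρ) = B (u s) (curve v t) := by
    intro s
    rw [(B (u s)).integral_comp_comm hv']
    congr 1
    rw [curve, integral_of_le h0t]
  simp_rw [hfin]
  have : (fun s => B (u s) (curve v t)) = fun s => B.flip (curve v t) (u s) := rfl
  rw [this, (B.flip (curve v t)).integral_comp_comm hu']
  have h9 : curve u t = ∫ s, u s ∂ρ := integral_of_le h0t
  rw [h9]
  rfl

end AuxB

lemma hasDerivAt_poly1 {E : Type*} [NormedAddCommGroup E] [NormedSpace ℝ E] (a0 a1 : E) :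
    HasDerivAt (fun ε : ℝ => a0 + ε • a1) a1 0 := by
  have h1 : HasDerivAt (fun ε : ℝ => ε • a1) a1 0 := by
    simpa using (hasDerivAt_id (0:ℝ)).smul_const a1
  exact ((hasDerivAt_const (0:ℝ) a0).add h1).congr_deriv (by simp)

lemma hasDerivAt_poly2 {E : Type*} [NormedAddCommGroup E] [NormedSpace ℝ E] (a0 a1 a2 : E) :
    HasDerivAt (fun ε : ℝ => a0 + ε • a1 + ε ^ 2 • a2) a1 0 := by
  have h1 : HasDerivAt (fun ε : ℝ => ε • a1) a1 0 := by
    simpa using (hasDerivAt_id (0:ℝ)).smul_const a1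
  have h2 : HasDerivAt (fun ε : ℝ => ε ^ 2 • a2) (0 : E) 0 := by
    simpa using (hasDerivAt_pow 2 (0:ℝ)).smul_const a2
  exact (((hasDerivAt_const (0:ℝ) a0).add h1).add h2).congr_deriv (by simp)

lemma hasDerivAt_poly3 {E : Type*} [NormedAddCommGroup E] [NormedSpace ℝ E] (a0 a1 a2 a3 : E) :
    HasDerivAt (fun ε : ℝ => a0 + ε • a1 + ε ^ 2 • a2 + ε ^ 3 • a3) a1 0 := by
  have h1 : HasDerivAt (fun ε : ℝ => ε • a1) a1 0 := by
    simpa using (hasDerivAt_id (0:ℝ)).smul_const a1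
  have h2 : HasDerivAt (fun ε : ℝ => ε ^ 2 • a2) (0 : E) 0 := by
    simpa using (hasDerivAt_pow 2 (0:ℝ)).smul_const a2
  have h3 : HasDerivAt (fun ε : ℝ => ε ^ 3 • a3) (0 : E) 0 := by
    simpa using (hasDerivAt_pow 3 (0:ℝ)).smul_const a3
  exact ((((hasDerivAt_const (0:ℝ) a0).add h1).add h2).add h3).congr_deriv (by simp)

set_option maxHeartbeats 1000000


/-- characterization of the kernel of the differential of the
end-point map. -/
theorem statement11 (V1 V2 V3 : Submodule ℝ 𝕓) (hC : CarnotStep3 br V1 V2 V3)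
    (γ : ℝ → 𝕓) (hγ : γ ∈ H1zero V1) (φ : ℝ → 𝕓) (hφ : φ ∈ H1zero V1) :
    dE br γ φ = 0 ↔
      (curve φ 1 = 0 ∧ (∫ t in (0:ℝ)..1, br (curve φ t) (γ t)) = 0 ∧
        (∫ t in (0:ℝ)..1, br (curve γ t) (br (curve φ t) (γ t))) = 0) := by
  classical
  obtain ⟨-, -, -, -, halt, hjac⟩ := hC
  have hanti : ∀ a b : 𝕓, br b a = -br a b := by
    intro a b
    have h := halt (a + b)
    simp only [map_add, LinearMap.add_apply, halt a, halt b, zero_add, add_zero] at h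
    exact eq_neg_of_add_eq_zero_left h
  set B : 𝕓 →L[ℝ] 𝕓 →L[ℝ] 𝕓 := toCLM br with hBdef
  have hBapp : ∀ a b : 𝕓, B a b = br a b := fun a b => rfl
  have hBanti : ∀ a b : 𝕓, B b a = -B a b := by
    intro a b; rw [hBapp, hBapp]; exact hanti a b
  have hBjac : ∀ a b c : 𝕓, B a (B b c) + B b (B c a) + B c (B a b) = 0 := by
    intro a b c; simp only [hBapp]; exact hjac a b c
  have h1mem : (1:ℝ) ∈ Icc (0:ℝ) 1 := ⟨zero_le_one, le_refl 1⟩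
  have h0mem : (0:ℝ) ∈ Icc (0:ℝ) 1 := ⟨le_refl 0, zero_le_one⟩
  have hγi : IntegrableOn γ (Icc (0:ℝ) 1) := memH1_integrableOn hγ.2
  have hφi : IntegrableOn φ (Icc (0:ℝ) 1) := memH1_integrableOn hφ.2
  have ii : ∀ {f : ℝ → 𝕓}, IntegrableOn f (Icc (0:ℝ) 1) → IntervalIntegrable f volume 0 1 :=
    fun h => intervalIntegrable_of_icc h h0mem h1mem
  have isplit : ∀ (f g : ℝ → 𝕓) {t : ℝ}, t ∈ Icc (0:ℝ) 1 →
      IntegrableOn f (Icc (0:ℝ) 1) → IntegrableOn g (Icc (0:ℝ) 1) →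
      (∫ s in (0:ℝ)..t, (f s + g s)) = (∫ s in (0:ℝ)..t, f s) + ∫ s in (0:ℝ)..t, g s :=
    by
      intro f g t ht hf hg
      exact integral_add (intervalIntegrable_of_icc hf h0mem ht)
        (intervalIntegrable_of_icc hg h0mem ht)
  have hxc : ContinuousOn (curve γ) (Icc (0:ℝ) 1) := contOn_curve hγi
  have hyc : ContinuousOn (curve φ) (Icc (0:ℝ) 1) := contOn_curve hφi
  have hAxγ : IntegrableOn (fun s => B (curve γ s) (γ s)) (Icc (0:ℝ) 1) := intOn_Bmul B hxc hγi
  have hAyγ : IntegrableOn (fun s => B (curve φ s) (γ s)) (Icc (0:ℝ) 1) := intOn_Bmul B hyc hγi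
  have hAxφ : IntegrableOn (fun s => B (curve γ s) (φ s)) (Icc (0:ℝ) 1) := intOn_Bmul B hxc hφi
  have hAyφ : IntegrableOn (fun s => B (curve φ s) (φ s)) (Icc (0:ℝ) 1) := intOn_Bmul B hyc hφi
  have hAγy : IntegrableOn (fun s => B (γ s) (curve φ s)) (Icc (0:ℝ) 1) := intOn_Bmul' B hyc hγi
  have hAφx : IntegrableOn (fun s => B (φ s) (curve γ s)) (Icc (0:ℝ) 1) := intOn_Bmul' B hxc hφi
  set v2 : ℝ → 𝕓 := fun s => (2:ℝ)⁻¹ • B (curve γ s) (γ s) with hv2def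
  set mu : ℝ → 𝕓 := fun s => (2:ℝ)⁻¹ • (B (curve φ s) (γ s) + B (curve γ s) (φ s)) with hmudef
  set nu : ℝ → 𝕓 := fun s => (2:ℝ)⁻¹ • B (curve φ s) (φ s) with hnudef
  have hv2i : IntegrableOn v2 (Icc (0:ℝ) 1) := hAxγ.smul ((2:ℝ)⁻¹)
  have hmui : IntegrableOn mu (Icc (0:ℝ) 1) := (hAyγ.add hAxφ).smul ((2:ℝ)⁻¹)
  have hnui : IntegrableOn nu (Icc (0:ℝ) 1) := hAyφ.smul ((2:ℝ)⁻¹)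
  have hv2c : ContinuousOn (curve v2) (Icc (0:ℝ) 1) := contOn_curve hv2i
  have hmuc : ContinuousOn (curve mu) (Icc (0:ℝ) 1) := contOn_curve hmui
  have hnuc : ContinuousOn (curve nu) (Icc (0:ℝ) 1) := contOn_curve hnui
  have hA2_y_xγ : IntegrableOn (fun s => B (curve φ s) (B (curve γ s) (γ s))) (Icc (0:ℝ) 1) :=
    intOn_Bmul B hyc hAxγ
  have hA2_x_yγ : IntegrableOn (fun s => B (curve γ s) (B (curve φ s) (γ s))) (Icc (0:ℝ) 1) :=
    intOn_Bmul B hxc hAyγ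
  have hA2_x_xφ : IntegrableOn (fun s => B (curve γ s) (B (curve γ s) (φ s))) (Icc (0:ℝ) 1) :=
    intOn_Bmul B hxc hAxφ
  have hA2_x_xγ : IntegrableOn (fun s => B (curve γ s) (B (curve γ s) (γ s))) (Icc (0:ℝ) 1) :=
    intOn_Bmul B hxc hAxγ
  have hA2_x_yφ : IntegrableOn (fun s => B (curve γ s) (B (curve φ s) (φ s))) (Icc (0:ℝ) 1) :=
    intOn_Bmul B hxc hAyφ
  have hA2_y_xφ : IntegrableOn (fun s => B (curve φ s) (B (curve γ s) (φ s))) (Icc (0:ℝ) 1) :=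
    intOn_Bmul B hyc hAxφ
  have hA2_y_yγ : IntegrableOn (fun s => B (curve φ s) (B (curve φ s) (γ s))) (Icc (0:ℝ) 1) :=
    intOn_Bmul B hyc hAyγ
  have hA2_y_yφ : IntegrableOn (fun s => B (curve φ s) (B (curve φ s) (φ s))) (Icc (0:ℝ) 1) :=
    intOn_Bmul B hyc hAyφ
  have hA2_x_φx : IntegrableOn (fun s => B (curve γ s) (B (φ s) (curve γ s))) (Icc (0:ℝ) 1) :=
    intOn_Bmul B hxc (intOn_Bmul' B hxc hφi)
  have hA_cv2γ : IntegrableOn (fun s => B (curve v2 s) (γ s)) (Icc (0:ℝ) 1) :=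
    intOn_Bmul B hv2c hγi
  have hA_cv2φ : IntegrableOn (fun s => B (curve v2 s) (φ s)) (Icc (0:ℝ) 1) :=
    intOn_Bmul B hv2c hφi
  have hA_cmuγ : IntegrableOn (fun s => B (curve mu s) (γ s)) (Icc (0:ℝ) 1) :=
    intOn_Bmul B hmuc hγi
  have hA_cmuφ : IntegrableOn (fun s => B (curve mu s) (φ s)) (Icc (0:ℝ) 1) :=
    intOn_Bmul B hmuc hφi
  have hA_cnuγ : IntegrableOn (fun s => B (curve nu s) (γ s)) (Icc (0:ℝ) 1) :=
    intOn_Bmul B hnuc hγi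
  have hA_cnuφ : IntegrableOn (fun s => B (curve nu s) (φ s)) (Icc (0:ℝ) 1) :=
    intOn_Bmul B hnuc hφi
  have hA_φcv2 : IntegrableOn (fun s => B (φ s) (curve v2 s)) (Icc (0:ℝ) 1) :=
    intOn_Bmul' B hv2c hφi
  have hA_ycv2 : IntegrableOn (fun s => B (curve φ s) (v2 s)) (Icc (0:ℝ) 1) :=
    intOn_Bmul B hyc hv2i
  have hA_mux : IntegrableOn (fun s => B (mu s) (curve γ s)) (Icc (0:ℝ) 1) :=
    intOn_Bmul' B hxc hmui
  have hcadd : ∀ (ε : ℝ), ∀ t ∈ Icc (0:ℝ) 1,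
      curve (γ + ε • φ) t = curve γ t + ε • curve φ t := by
    intro ε t ht
    have h1 : IntervalIntegrable γ volume 0 t := intervalIntegrable_of_icc hγi h0mem ht
    have h2 : IntervalIntegrable φ volume 0 t := intervalIntegrable_of_icc hφi h0mem ht
    calc curve (γ + ε • φ) t = ∫ s in (0:ℝ)..t, (γ s + ε • φ s) := rfl
      _ = (∫ s in (0:ℝ)..t, γ s) + ∫ s in (0:ℝ)..t, ε • φ s :=
          integral_add h1 (h2.smul ε)
      _ = curve γ t + ε • curve φ t := by rw [intervalIntegral.integral_smul]; rfl
  have hc2 : ∀ (ε : ℝ), ∀ t ∈ Icc (0:ℝ) 1,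
      curve2 br (γ + ε • φ) t = curve v2 t + ε • curve mu t + ε ^ 2 • curve nu t := by
    intro ε t ht
    have husub : uIcc (0:ℝ) t ⊆ Icc (0:ℝ) 1 := by
      rw [uIcc_of_le ht.1]
      exact Icc_subset_Icc le_rfl ht.2
    have hEq : EqOn (fun s => br (curve (γ + ε • φ) s) ((γ + ε • φ) s))
        (fun s => B (curve γ s) (γ s)
          + ε • (B (curve φ s) (γ s) + B (curve γ s) (φ s))
          + ε ^ 2 • B (curve φ s) (φ s)) (uIcc (0:ℝ) t) := by
      intro s hs
      have hs' := husub hs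
      simp only [hcadd ε s hs', Pi.add_apply, Pi.smul_apply, ← hBapp]
      simp only [_root_.map_add, _root_.map_smul, ContinuousLinearMap.add_apply,
        ContinuousLinearMap.smul_apply, ContinuousLinearMap.coe_smul', Pi.smul_apply]
      module
    have e1 : curve v2 t = (2:ℝ)⁻¹ • ∫ s in (0:ℝ)..t, B (curve γ s) (γ s) := by
      show (∫ s in (0:ℝ)..t, v2 s) = _
      simp only [hv2def]
      rw [intervalIntegral.integral_smul]
    have e2 : curve mu t
        = (2:ℝ)⁻¹ • ∫ s in (0:ℝ)..t, (B (curve φ s) (γ s) + B (curve γ s) (φ s)) := by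
      show (∫ s in (0:ℝ)..t, mu s) = _
      simp only [hmudef]
      rw [intervalIntegral.integral_smul]
    have e3 : curve nu t = (2:ℝ)⁻¹ • ∫ s in (0:ℝ)..t, B (curve φ s) (φ s) := by
      show (∫ s in (0:ℝ)..t, nu s) = _
      simp only [hnudef]
      rw [intervalIntegral.integral_smul]
    show (2:ℝ)⁻¹ • (∫ s in (0:ℝ)..t, br (curve (γ + ε • φ) s) ((γ + ε • φ) s)) = _
    rw [integral_congr hEq,
      isplit (fun s => B (curve γ s) (γ s)
          + ε • (B (curve φ s) (γ s) + B (curve γ s) (φ s)))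
        (fun s => ε ^ 2 • B (curve φ s) (φ s)) ht
        (hAxγ.add ((hAyγ.add hAxφ).smul ε)) (hAyφ.smul (ε ^ 2)),
      isplit (fun s => B (curve γ s) (γ s))
        (fun s => ε • (B (curve φ s) (γ s) + B (curve γ s) (φ s))) ht
        hAxγ ((hAyγ.add hAxφ).smul ε),
      intervalIntegral.integral_smul, intervalIntegral.integral_smul, e1, e2, e3]
    module
  set Q0 : ℝ → 𝕓 := fun s => (12:ℝ)⁻¹ • B (curve γ s) (B (curve γ s) (γ s))
    + (2:ℝ)⁻¹ • B (curve v2 s) (γ s) with hQ0def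
  set Q1 : ℝ → 𝕓 := fun s => (12:ℝ)⁻¹ • (B (curve φ s) (B (curve γ s) (γ s))
    + B (curve γ s) (B (curve φ s) (γ s)) + B (curve γ s) (B (curve γ s) (φ s)))
    + (2:ℝ)⁻¹ • (B (curve mu s) (γ s) + B (curve v2 s) (φ s)) with hQ1def
  set Q2 : ℝ → 𝕓 := fun s => (12:ℝ)⁻¹ • (B (curve γ s) (B (curve φ s) (φ s))
    + B (curve φ s) (B (curve γ s) (φ s)) + B (curve φ s) (B (curve φ s) (γ s)))
    + (2:ℝ)⁻¹ • (B (curve nu s) (γ s) + B (curve mu s) (φ s)) with hQ2def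
  set Q3 : ℝ → 𝕓 := fun s => (12:ℝ)⁻¹ • B (curve φ s) (B (curve φ s) (φ s))
    + (2:ℝ)⁻¹ • B (curve nu s) (φ s) with hQ3def
  have hQ0i : IntegrableOn Q0 (Icc (0:ℝ) 1) := (hA2_x_xγ.smul _).add (hA_cv2γ.smul _)
  have hQ1i : IntegrableOn Q1 (Icc (0:ℝ) 1) :=
    (((hA2_y_xγ.add hA2_x_yγ).add hA2_x_xφ).smul _).add ((hA_cmuγ.add hA_cv2φ).smul _)
  have hQ2i : IntegrableOn Q2 (Icc (0:ℝ) 1) :=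
    (((hA2_x_yφ.add hA2_y_xφ).add hA2_y_yγ).smul _).add ((hA_cnuγ.add hA_cmuφ).smul _)
  have hQ3i : IntegrableOn Q3 (Icc (0:ℝ) 1) := (hA2_y_yφ.smul _).add (hA_cnuφ.smul _)
  have hF1 : ∀ ε : ℝ, F1 (γ + ε • φ) = curve γ 1 + ε • curve φ 1 :=
    fun ε => hcadd ε 1 h1mem
  have hF2 : ∀ ε : ℝ, F2 br (γ + ε • φ)
      = curve v2 1 + ε • curve mu 1 + ε ^ 2 • curve nu 1 :=
    fun ε => hc2 ε 1 h1mem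
  have hF3 : ∀ ε : ℝ, F3 br (γ + ε • φ)
      = (∫ s in (0:ℝ)..1, Q0 s) + ε • (∫ s in (0:ℝ)..1, Q1 s)
        + ε ^ 2 • (∫ s in (0:ℝ)..1, Q2 s) + ε ^ 3 • (∫ s in (0:ℝ)..1, Q3 s) := by
    intro ε
    have hEq : EqOn (fun t => (2:ℝ)⁻¹ • (br (curve (γ + ε • φ) t)
          ((2:ℝ)⁻¹ • br (curve (γ + ε • φ) t) ((γ + ε • φ) t))
          + br (curve2 br (γ + ε • φ) t) ((γ + ε • φ) t))
        - (6:ℝ)⁻¹ • br (curve (γ + ε • φ) t) (br (curve (γ + ε • φ) t) ((γ + ε • φ) t)))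
        (fun s => Q0 s + ε • Q1 s + ε ^ 2 • Q2 s + ε ^ 3 • Q3 s) (uIcc (0:ℝ) 1) := by
      intro s hs
      have hs' : s ∈ Icc (0:ℝ) 1 := by rwa [uIcc_of_le zero_le_one] at hs
      simp only [hQ0def, hQ1def, hQ2def, hQ3def]
      simp only [hcadd ε s hs', hc2 ε s hs', Pi.add_apply, Pi.smul_apply, ← hBapp]
      simp only [_root_.map_add, _root_.map_smul, ContinuousLinearMap.add_apply,
        ContinuousLinearMap.smul_apply, ContinuousLinearMap.coe_smul', Pi.smul_apply]
      module
    show (∫ t in (0:ℝ)..1, ((2:ℝ)⁻¹ • (br (curve (γ + ε • φ) t)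
        ((2:ℝ)⁻¹ • br (curve (γ + ε • φ) t) ((γ + ε • φ) t))
        + br (curve2 br (γ + ε • φ) t) ((γ + ε • φ) t))
      - (6:ℝ)⁻¹ • br (curve (γ + ε • φ) t) (br (curve (γ + ε • φ) t) ((γ + ε • φ) t)))) = _
    rw [integral_congr hEq,
      isplit (fun s => Q0 s + ε • Q1 s + ε ^ 2 • Q2 s) (fun s => ε ^ 3 • Q3 s) h1mem
        ((hQ0i.add (hQ1i.smul ε)).add (hQ2i.smul (ε ^ 2))) (hQ3i.smul (ε ^ 3)),
      isplit (fun s => Q0 s + ε • Q1 s) (fun s => ε ^ 2 • Q2 s) h1mem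
        (hQ0i.add (hQ1i.smul ε)) (hQ2i.smul (ε ^ 2)),
      isplit (fun s => Q0 s) (fun s => ε • Q1 s) h1mem hQ0i (hQ1i.smul ε),
      intervalIntegral.integral_smul, intervalIntegral.integral_smul,
      intervalIntegral.integral_smul]
  have hD1 : HasDerivAt (fun ε : ℝ => F1 (γ + ε • φ)) (curve φ 1) 0 := by
    rw [funext hF1]; exact hasDerivAt_poly1 _ _
  have hD2 : HasDerivAt (fun ε : ℝ => F2 br (γ + ε • φ)) (curve mu 1) 0 := by
    rw [funext hF2]; exact hasDerivAt_poly2 _ _ _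
  have hD3 : HasDerivAt (fun ε : ℝ => F3 br (γ + ε • φ)) (∫ s in (0:ℝ)..1, Q1 s) 0 := by
    rw [funext hF3]; exact hasDerivAt_poly3 _ _ _ _
  have hdE : dE br γ φ = (curve φ 1, curve mu 1, ∫ s in (0:ℝ)..1, Q1 s) := by
    have hD : HasDerivAt (fun ε : ℝ => Emap br (γ + ε • φ))
        ((curve φ 1, curve mu 1, ∫ s in (0:ℝ)..1, Q1 s) : 𝕓 × 𝕓 × 𝕓) 0 :=
      hD1.prodMk (hD2.prodMk hD3)
    exact hD.deriv
  have e1 : (∫ s in (0:ℝ)..1, B (γ s) (curve φ s)) + (∫ s in (0:ℝ)..1, B (curve γ s) (φ s))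
      = B (curve γ 1) (curve φ 1) := by
    have hp : (∫ s in (0:ℝ)..1, (B (γ s) (curve φ s) + B (curve γ s) (φ s)))
        = B (curve γ 1) (curve φ 1) := pair_lemma B hγi hφi h1mem
    rwa [isplit (fun s => B (γ s) (curve φ s)) (fun s => B (curve γ s) (φ s)) h1mem
      hAγy hAxφ] at hp
  have e1' : (∫ s in (0:ℝ)..1, B (γ s) (curve φ s))
      = -(∫ s in (0:ℝ)..1, B (curve φ s) (γ s)) := by
    rw [← intervalIntegral.integral_neg]
    exact integral_congr fun s _ => hBanti (curve φ s) (γ s)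
  have e2 : (∫ s in (0:ℝ)..1, B (φ s) (curve v2 s))
      + (2:ℝ)⁻¹ • (∫ s in (0:ℝ)..1, B (curve φ s) (B (curve γ s) (γ s)))
      = B (curve φ 1) (curve v2 1) := by
    have hp : (∫ s in (0:ℝ)..1, (B (φ s) (curve v2 s) + B (curve φ s) (v2 s)))
        = B (curve φ 1) (curve v2 1) := pair_lemma B hφi hv2i h1mem
    rw [isplit (fun s => B (φ s) (curve v2 s)) (fun s => B (curve φ s) (v2 s)) h1mem
      hA_φcv2 hA_ycv2] at hp
    have h2 : (∫ s in (0:ℝ)..1, B (curve φ s) (v2 s))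
        = (2:ℝ)⁻¹ • ∫ s in (0:ℝ)..1, B (curve φ s) (B (curve γ s) (γ s)) := by
      rw [← intervalIntegral.integral_smul]
      refine integral_congr fun s _ => ?_
      simp only [hv2def]
      exact _root_.map_smul (B (curve φ s)) _ _
    rwa [h2] at hp
  have e2b : (∫ s in (0:ℝ)..1, B (φ s) (curve v2 s))
      = -(∫ s in (0:ℝ)..1, B (curve v2 s) (φ s)) := by
    rw [← intervalIntegral.integral_neg]
    exact integral_congr fun s _ => hBanti (curve v2 s) (φ s)
  have e3 : -((2:ℝ)⁻¹ • ((∫ s in (0:ℝ)..1, B (curve γ s) (B (curve φ s) (γ s)))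
        + (∫ s in (0:ℝ)..1, B (curve γ s) (B (curve γ s) (φ s)))))
      + (∫ s in (0:ℝ)..1, B (curve mu s) (γ s)) = B (curve mu 1) (curve γ 1) := by
    have hp : (∫ s in (0:ℝ)..1, (B (mu s) (curve γ s) + B (curve mu s) (γ s)))
        = B (curve mu 1) (curve γ 1) := pair_lemma B hmui hγi h1mem
    rw [isplit (fun s => B (mu s) (curve γ s)) (fun s => B (curve mu s) (γ s)) h1mem
      hA_mux hA_cmuγ] at hp
    have h2 : (∫ s in (0:ℝ)..1, B (mu s) (curve γ s))
        = -((2:ℝ)⁻¹ • ((∫ s in (0:ℝ)..1, B (curve γ s) (B (curve φ s) (γ s)))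
          + (∫ s in (0:ℝ)..1, B (curve γ s) (B (curve γ s) (φ s))))) := by
      rw [← isplit (fun s => B (curve γ s) (B (curve φ s) (γ s)))
          (fun s => B (curve γ s) (B (curve γ s) (φ s))) h1mem hA2_x_yγ hA2_x_xφ,
        ← intervalIntegral.integral_smul, ← intervalIntegral.integral_neg]
      refine integral_congr fun s _ => ?_
      simp only [hmudef]
      rw [_root_.map_smul, _root_.map_add, ContinuousLinearMap.smul_apply,
        ContinuousLinearMap.add_apply,
        hBanti (curve γ s) (B (curve φ s) (γ s)), hBanti (curve γ s) (B (curve γ s) (φ s))]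
      module
    rwa [h2] at hp
  have hwint : IntegrableOn (fun s => B (φ s) (curve γ s) + B (curve φ s) (γ s))
      (Icc (0:ℝ) 1) := hAφx.add hAyγ
  have hw : ∀ t ∈ Icc (0:ℝ) 1,
      curve (fun s => B (φ s) (curve γ s) + B (curve φ s) (γ s)) t
        = B (curve φ t) (curve γ t) :=
    fun t ht => pair_lemma B hφi hγi ht
  have hcyx : ContinuousOn (fun s => B (curve φ s) (curve γ s)) (Icc (0:ℝ) 1) :=
    (B.continuous.comp_continuousOn hyc).clm_apply hxc
  have hAγ_yx : IntegrableOn (fun s => B (γ s) (B (curve φ s) (curve γ s)))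
      (Icc (0:ℝ) 1) := intOn_Bmul' B hcyx hγi
  have e4 : (∫ s in (0:ℝ)..1, B (γ s) (B (curve φ s) (curve γ s)))
      + (-(∫ s in (0:ℝ)..1, B (curve γ s) (B (curve γ s) (φ s)))
        + (∫ s in (0:ℝ)..1, B (curve γ s) (B (curve φ s) (γ s))))
      = B (curve γ 1) (B (curve φ 1) (curve γ 1)) := by
    have hp : (∫ s in (0:ℝ)..1,
        (B (γ s) (curve (fun s => B (φ s) (curve γ s) + B (curve φ s) (γ s)) s)
          + B (curve γ s) ((fun s => B (φ s) (curve γ s) + B (curve φ s) (γ s)) s)))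
        = B (curve γ 1) (curve (fun s => B (φ s) (curve γ s) + B (curve φ s) (γ s)) 1) :=
      pair_lemma B hγi hwint h1mem
    rw [hw 1 h1mem] at hp
    have hneg : (∫ s in (0:ℝ)..1, B (curve γ s) (B (φ s) (curve γ s)))
        = -(∫ s in (0:ℝ)..1, B (curve γ s) (B (curve γ s) (φ s))) := by
      rw [← intervalIntegral.integral_neg]
      refine integral_congr fun s _ => ?_
      rw [hBanti (curve γ s) (φ s), map_neg]
    have hsplit : (∫ s in (0:ℝ)..1,
        (B (γ s) (curve (fun s => B (φ s) (curve γ s) + B (curve φ s) (γ s)) s)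
          + B (curve γ s) ((fun s => B (φ s) (curve γ s) + B (curve φ s) (γ s)) s)))
        = (∫ s in (0:ℝ)..1, B (γ s) (B (curve φ s) (curve γ s)))
          + ((∫ s in (0:ℝ)..1, B (curve γ s) (B (φ s) (curve γ s)))
            + (∫ s in (0:ℝ)..1, B (curve γ s) (B (curve φ s) (γ s)))) := by
      rw [← isplit (fun s => B (curve γ s) (B (φ s) (curve γ s)))
          (fun s => B (curve γ s) (B (curve φ s) (γ s))) h1mem hA2_x_φx hA2_x_yγ,
        ← isplit (fun s => B (γ s) (B (curve φ s) (curve γ s)))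
          (fun s => B (curve γ s) (B (φ s) (curve γ s)) + B (curve γ s) (B (curve φ s) (γ s)))
          h1mem hAγ_yx (hA2_x_φx.add hA2_x_yγ)]
      refine integral_congr fun s hs => ?_
      have hs' : s ∈ Icc (0:ℝ) 1 := by rwa [uIcc_of_le zero_le_one] at hs
      rw [hw s hs', _root_.map_add]
    rw [hsplit, hneg] at hp
    exact hp
  have e5 : (∫ s in (0:ℝ)..1, B (γ s) (B (curve φ s) (curve γ s)))
      = -(∫ s in (0:ℝ)..1, B (curve φ s) (B (curve γ s) (γ s)))
        + (∫ s in (0:ℝ)..1, B (curve γ s) (B (curve φ s) (γ s))) := by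
    rw [← intervalIntegral.integral_neg,
      ← isplit (fun s => -B (curve φ s) (B (curve γ s) (γ s)))
        (fun s => B (curve γ s) (B (curve φ s) (γ s))) h1mem hA2_y_xγ.neg hA2_x_yγ]
    refine integral_congr fun s _ => ?_
    have h := hBjac (γ s) (curve φ s) (curve γ s)
    have h2 := hBanti (curve φ s) (γ s)
    rw [h2, map_neg] at h
    linear_combination (norm := module) h
  have hq1split : (∫ s in (0:ℝ)..1, Q1 s)
      = (12:ℝ)⁻¹ • ((∫ s in (0:ℝ)..1, B (curve φ s) (B (curve γ s) (γ s)))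
          + (∫ s in (0:ℝ)..1, B (curve γ s) (B (curve φ s) (γ s)))
          + (∫ s in (0:ℝ)..1, B (curve γ s) (B (curve γ s) (φ s))))
        + (2:ℝ)⁻¹ • ((∫ s in (0:ℝ)..1, B (curve mu s) (γ s))
          + (∫ s in (0:ℝ)..1, B (curve v2 s) (φ s))) := by
    simp only [hQ1def]
    rw [isplit (fun s => (12:ℝ)⁻¹ • (B (curve φ s) (B (curve γ s) (γ s))
          + B (curve γ s) (B (curve φ s) (γ s)) + B (curve γ s) (B (curve γ s) (φ s))))
        (fun s => (2:ℝ)⁻¹ • (B (curve mu s) (γ s) + B (curve v2 s) (φ s))) h1mem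
        (((hA2_y_xγ.add hA2_x_yγ).add hA2_x_xφ).smul _) ((hA_cmuγ.add hA_cv2φ).smul _),
      intervalIntegral.integral_smul, intervalIntegral.integral_smul,
      isplit (fun s => B (curve φ s) (B (curve γ s) (γ s))
          + B (curve γ s) (B (curve φ s) (γ s)))
        (fun s => B (curve γ s) (B (curve γ s) (φ s))) h1mem
        (hA2_y_xγ.add hA2_x_yγ) hA2_x_xφ,
      isplit (fun s => B (curve φ s) (B (curve γ s) (γ s)))
        (fun s => B (curve γ s) (B (curve φ s) (γ s))) h1mem hA2_y_xγ hA2_x_yγ,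
      isplit (fun s => B (curve mu s) (γ s)) (fun s => B (curve v2 s) (φ s)) h1mem
        hA_cmuγ hA_cv2φ]
  have hcmu1 : curve mu 1 = (∫ s in (0:ℝ)..1, B (curve φ s) (γ s))
      + (2:ℝ)⁻¹ • B (curve γ 1) (curve φ 1) := by
    have h : curve mu 1 = (2:ℝ)⁻¹ • ((∫ s in (0:ℝ)..1, B (curve φ s) (γ s))
        + (∫ s in (0:ℝ)..1, B (curve γ s) (φ s))) := by
      show (∫ s in (0:ℝ)..1, mu s) = _
      simp only [hmudef]
      rw [intervalIntegral.integral_smul,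
        isplit (fun s => B (curve φ s) (γ s)) (fun s => B (curve γ s) (φ s)) h1mem hAyγ hAxφ]
    linear_combination (norm := module) h + ((2:ℝ)⁻¹ : ℝ) • e1 - ((2:ℝ)⁻¹ : ℝ) • e1'
  have hq1 : (∫ s in (0:ℝ)..1, Q1 s)
      = (∫ s in (0:ℝ)..1, B (curve γ s) (B (curve φ s) (γ s)))
        - (3:ℝ)⁻¹ • B (curve γ 1) (B (curve φ 1) (curve γ 1))
        + (2:ℝ)⁻¹ • B (curve mu 1) (curve γ 1)
        - (2:ℝ)⁻¹ • B (curve φ 1) (curve v2 1) := by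
    linear_combination (norm := module) hq1split - ((2:ℝ)⁻¹ : ℝ) • e2 + ((2:ℝ)⁻¹ : ℝ) • e2b
      + ((2:ℝ)⁻¹ : ℝ) • e3 - ((3:ℝ)⁻¹ : ℝ) • e4 + ((3:ℝ)⁻¹ : ℝ) • e5
  rw [hdE, hq1, hcmu1]
  simp only [← hBapp]
  constructor
  · rintro h
    rw [Prod.ext_iff, Prod.ext_iff] at h
    simp only [Prod.fst_zero, Prod.snd_zero] at h
    obtain ⟨h1, h2, h3⟩ := h
    rw [h1] at h2 h3
    simp only [map_zero, smul_zero, add_zero, ContinuousLinearMap.zero_apply,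
      sub_zero] at h2 h3
    rw [h2] at h3
    simp only [map_zero, smul_zero, add_zero, zero_add, ContinuousLinearMap.zero_apply,
      ContinuousLinearMap.map_zero, sub_zero] at h3
    exact ⟨h1, h2, by simpa using h3⟩
  · rintro ⟨h1, h2, h3⟩
    rw [Prod.ext_iff, Prod.ext_iff]
    simp only [Prod.fst_zero, Prod.snd_zero]
    refine ⟨h1, ?_, ?_⟩
    · rw [h1, h2]
      simp
    · rw [h1, h2, h3]
      simp
end
end

section
/- (First variation of the third-layer end-point functional.) For all γ, φ ∈ H¹(0): d_γF³(φ) = ∫₀¹ ⁅γ,⁅φ,γ̇⁆⁆ dt + ½⁅∫₀¹ ⁅φ,γ̇⁆ dt, γ(1)⁆ + ¼⁅∫₀¹ ⁅γ,γ̇⁆ dt, φ(1)⁆ + (1/12)⁅γ(1),⁅γ(1),φ(1)⁆⁆. -/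
open MeasureTheory Set intervalIntegral

noncomputable section

variable {𝕓 : Type*} [NormedAddCommGroup 𝕓] [InnerProductSpace ℝ 𝕓] [FiniteDimensional ℝ 𝕓]

variable (br : 𝕓 →ₗ[ℝ] 𝕓 →ₗ[ℝ] 𝕓)

def brL : 𝕓 →L[ℝ] 𝕓 →L[ℝ] 𝕓 :=
  LinearMap.toContinuousLinearMap
    { toFun := fun x => LinearMap.toContinuousLinearMap (br x)
      map_add' := by intros; ext; simp
      map_smul' := by intros; ext; simp }

@[simp] lemma brL_apply (x y : 𝕓) : brL br x y = br x y := rfl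

lemma brL_cont : Continuous (fun p : 𝕓 × 𝕓 => br p.1 p.2) := by
  have := (brL br).isBoundedBilinearMap.continuous
  simpa using this

lemma intInt {f : ℝ → 𝕓} (hf : IntegrableOn f (Icc (0:ℝ) 1)) {a b : ℝ}
    (ha : a ∈ Icc (0:ℝ) 1) (hb : b ∈ Icc (0:ℝ) 1) : IntervalIntegrable f volume a b := by
  refine (hf.mono_set ?_).intervalIntegrable
  have h01 : uIcc (0:ℝ) 1 = Icc 0 1 := uIcc_of_le zero_le_one
  rw [← h01]
  exact uIcc_subset_uIcc (h01 ▸ ha) (h01 ▸ hb)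

lemma curve_contOn {f : ℝ → 𝕓} (hf : IntegrableOn f (Icc (0:ℝ) 1)) :
    ContinuousOn (curve f) (Icc (0:ℝ) 1) := by
  have : ContinuousOn (fun x => ∫ t in (0:ℝ)..x, f t) (uIcc (0:ℝ) 1) :=
    continuousOn_primitive_interval (by rwa [uIcc_of_le zero_le_one])
  rw [uIcc_of_le zero_le_one] at this
  exact this

lemma integrableOn_bilin {f h : ℝ → 𝕓} (hf : ContinuousOn f (Icc (0:ℝ) 1))
    (hh : IntegrableOn h (Icc (0:ℝ) 1)) :
    IntegrableOn (fun t => br (f t) (h t)) (Icc (0:ℝ) 1) := by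
  obtain ⟨C, hC⟩ := isCompact_Icc.exists_bound_of_continuousOn hf
  have hmeas : AEStronglyMeasurable (fun t => br (f t) (h t))
      (volume.restrict (Icc (0:ℝ) 1)) := by
    exact (brL_cont br).comp_aestronglyMeasurable
      ((hf.aestronglyMeasurable measurableSet_Icc).prodMk hh.1)
  refine Integrable.mono' ((hh.norm.const_mul (‖brL br‖ * max C 0))) hmeas ?_
  filter_upwards [ae_restrict_mem measurableSet_Icc] with t ht
  calc ‖br (f t) (h t)‖ = ‖brL br (f t) (h t)‖ := rfl
    _ ≤ ‖brL br‖ * ‖f t‖ * ‖h t‖ := (brL br).le_opNorm₂ _ _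
    _ ≤ ‖brL br‖ * max C 0 * ‖h t‖ := by
        have h1 : ‖f t‖ ≤ max C 0 := le_max_of_le_left (hC t ht)
        have := mul_le_mul_of_nonneg_left h1 (norm_nonneg (brL br))
        exact mul_le_mul_of_nonneg_right this (norm_nonneg _)

lemma ibp {u v : ℝ → 𝕓} (hu : IntegrableOn u (Icc (0:ℝ) 1)) (hv : IntegrableOn v (Icc (0:ℝ) 1))
    {r : ℝ} (hr : r ∈ Icc (0:ℝ) 1) :
    br (curve u r) (curve v r)
      = (∫ t in (0:ℝ)..r, br (u t) (curve v t)) + ∫ t in (0:ℝ)..r, br (curve u t) (v t) := by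
  have h0r : (0:ℝ) ≤ r := hr.1
  have hsub : Ioc (0:ℝ) r ⊆ Icc (0:ℝ) 1 := fun x hx => ⟨hx.1.le, hx.2.trans hr.2⟩
  have hsub2 : ∀ s : ℝ, Ioc s r ⊆ Icc (0:ℝ) 1 → True := fun _ _ => trivial
  set μ := volume.restrict (Ioc (0:ℝ) r) with hμ
  have huμ : Integrable u μ := hu.mono_set hsub
  have hvμ : Integrable v μ := hv.mono_set hsub
  have hcurve : ∀ (f : ℝ → 𝕓) (t : ℝ), 0 ≤ t → curve f t = ∫ s in Ioc (0:ℝ) t, f s :=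
    fun f t ht => integral_of_le ht
  -- product integrability of the triangle-restricted kernel
  have hF0 : AEStronglyMeasurable (fun q : ℝ × ℝ => br (u q.1) (v q.2)) (μ.prod μ) :=
    (brL_cont br).comp_aestronglyMeasurable (huμ.1.comp_fst.prodMk hvμ.1.comp_snd)
  set S : Set (ℝ × ℝ) := {q : ℝ × ℝ | q.1 < q.2} with hS
  have hSm : MeasurableSet S := measurableSet_lt measurable_fst measurable_snd
  set F : ℝ × ℝ → 𝕓 := S.indicator (fun q => br (u q.1) (v q.2)) with hF
  have hFi : Integrable F (μ.prod μ) := by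
    refine Integrable.mono' ((huμ.norm.mul_prod hvμ.norm).const_mul ‖brL br‖)
      (hF0.indicator hSm) (Filter.Eventually.of_forall fun q => ?_)
    refine (norm_indicator_le_norm_self _ _).trans ?_
    calc ‖br (u q.1) (v q.2)‖ ≤ ‖brL br‖ * ‖u q.1‖ * ‖v q.2‖ := (brL br).le_opNorm₂ _ _
      _ = ‖brL br‖ * (‖u q.1‖ * ‖v q.2‖) := by ring
  have swap : (∫ s, (∫ t, F (s, t) ∂μ) ∂μ) = ∫ t, (∫ s, F (s, t) ∂μ) ∂μ := by
    exact MeasureTheory.integral_integral_swap (by exact hFi)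
  have inner1 : ∀ s ∈ Ioc (0:ℝ) r, (∫ t, F (s, t) ∂μ) = br (u s) (∫ t in Ioc s r, v t) := by
    intro s hs
    have hfun : (fun t => F (s, t)) = (Ioi s).indicator (fun t => br (u s) (v t)) := by
      funext t; by_cases h : s < t
      · simp [hF, hS, indicator, h, mem_Ioi]
      · simp [hF, hS, indicator, h, mem_Ioi]
    rw [hfun, MeasureTheory.integral_indicator measurableSet_Ioi, hμ,
      Measure.restrict_restrict measurableSet_Ioi]
    have hset : Ioi s ∩ Ioc (0:ℝ) r = Ioc s r := by
      ext x
      simp only [mem_inter_iff, mem_Ioi, mem_Ioc]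
      exact ⟨fun ⟨h1, _, h3⟩ => ⟨h1, h3⟩, fun ⟨h1, h2⟩ => ⟨h1, hs.1.trans h1, h2⟩⟩
    rw [hset]
    have hint : IntegrableOn v (Ioc s r) := hv.mono_set fun x hx => ⟨(hs.1.trans hx.1).le, hx.2.trans hr.2⟩
    have := ContinuousLinearMap.integral_comp_comm
      (LinearMap.toContinuousLinearMap (br (u s))) hint
    simpa using this
  have inner2 : ∀ t ∈ Ioc (0:ℝ) r, (∫ s, F (s, t) ∂μ) = br (curve u t) (v t) := by
    intro t ht
    have hfun : (fun s => F (s, t)) = (Iio t).indicator (fun s => br (u s) (v t)) := by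
      funext s; by_cases h : s < t
      · simp [hF, hS, indicator, h, mem_Iio]
      · simp [hF, hS, indicator, h, mem_Iio]
    rw [hfun, MeasureTheory.integral_indicator measurableSet_Iio, hμ,
      Measure.restrict_restrict measurableSet_Iio]
    have hset : Iio t ∩ Ioc (0:ℝ) r = Ioo 0 t := by
      ext x
      simp only [mem_inter_iff, mem_Iio, mem_Ioc, mem_Ioo]
      exact ⟨fun ⟨h1, h2, _⟩ => ⟨h2, h1⟩, fun ⟨h1, h2⟩ => ⟨h2, h1, h2.le.trans ht.2⟩⟩
    rw [hset, Measure.restrict_congr_set Ioo_ae_eq_Ioc]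
    have hint : IntegrableOn u (Ioc (0:ℝ) t) := hu.mono_set fun x hx => ⟨hx.1.le, hx.2.trans (ht.2.trans hr.2)⟩
    have := ContinuousLinearMap.integral_comp_comm
      (LinearMap.toContinuousLinearMap (br.flip (v t))) hint
    simp only [LinearMap.coe_toContinuousLinearMap', LinearMap.flip_apply] at this
    rw [hcurve u t ht.1.le]
    simpa using this
  have splitv : ∀ s ∈ Ioc (0:ℝ) r, (∫ t in Ioc (0:ℝ) r, v t) = curve v s + ∫ t in Ioc s r, v t := by
    intro s hs
    rw [hcurve v s hs.1.le,
      ← setIntegral_union (Ioc_disjoint_Ioc_of_le le_rfl) measurableSet_Ioc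
        (hv.mono_set fun x hx => ⟨hx.1.le, hx.2.trans ((hs.2.trans hr.2))⟩)
        (hv.mono_set fun x hx => ⟨(hs.1.trans hx.1).le, hx.2.trans hr.2⟩),
      Ioc_union_Ioc_eq_Ioc hs.1.le hs.2]
  have hA : Integrable (fun s => br (u s) (∫ t in Ioc (0:ℝ) r, v t)) μ := by
    have := ContinuousLinearMap.integrable_comp
      (LinearMap.toContinuousLinearMap (br.flip (∫ t in Ioc (0:ℝ) r, v t))) huμ
    simpa using this
  have hA1 : Integrable (fun s => br (u s) (curve v s)) μ := by
    have := integrableOn_bilin (br := br.flip) (curve_contOn hv) hu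
    simp only [LinearMap.flip_apply] at this
    exact this.mono_set hsub
  have hA2 : Integrable (fun s => br (u s) (∫ t in Ioc s r, v t)) μ := by
    refine (hA.sub hA1).congr ?_
    filter_upwards [ae_restrict_mem measurableSet_Ioc] with s hs
    simp only [Pi.sub_apply]
    rw [splitv s hs, map_add]; abel
  calc br (curve u r) (curve v r)
      = br (∫ s in Ioc (0:ℝ) r, u s) (∫ t in Ioc (0:ℝ) r, v t) := by
        rw [hcurve u r h0r, hcurve v r h0r]
    _ = ∫ s, br (u s) (∫ t in Ioc (0:ℝ) r, v t) ∂μ := by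
        have := ContinuousLinearMap.integral_comp_comm
          (LinearMap.toContinuousLinearMap (br.flip (∫ t in Ioc (0:ℝ) r, v t))) huμ
        simpa using this.symm
    _ = ∫ s, (br (u s) (curve v s) + br (u s) (∫ t in Ioc s r, v t)) ∂μ := by
        refine integral_congr_ae ?_
        filter_upwards [ae_restrict_mem measurableSet_Ioc] with s hs
        rw [splitv s hs, map_add]
    _ = (∫ s, br (u s) (curve v s) ∂μ) + ∫ s, br (u s) (∫ t in Ioc s r, v t) ∂μ :=
        integral_add hA1 hA2
    _ = (∫ t in (0:ℝ)..r, br (u t) (curve v t)) + ∫ t in (0:ℝ)..r, br (curve u t) (v t) := by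
        rw [integral_of_le h0r, integral_of_le h0r]
        congr 1
        calc ∫ s, br (u s) (∫ t in Ioc s r, v t) ∂μ
            = ∫ s, (∫ t, F (s, t) ∂μ) ∂μ := by
              refine integral_congr_ae ?_
              filter_upwards [ae_restrict_mem measurableSet_Ioc] with s hs
              rw [inner1 s hs]
          _ = ∫ t, (∫ s, F (s, t) ∂μ) ∂μ := swap
          _ = ∫ t, br (curve u t) (v t) ∂μ := by
              refine integral_congr_ae ?_
              filter_upwards [ae_restrict_mem measurableSet_Ioc] with t ht
              rw [inner2 t ht]

lemma assemble (X Y Z Wg IA IB IC K BG AP CG : 𝕓)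
    (hIB : IB = BG + X) (hIC : IC = CG + Y) (hIA : IA = AP + Z)
    (hZ : Z = X + Wg) (hWg : Wg = K + X - Y) (hCG : CG = BG - K) :
    (12:ℝ)⁻¹ • (Y + X + Z) + (4:ℝ)⁻¹ • IA + (4:ℝ)⁻¹ • (IB + IC)
      = X + (2:ℝ)⁻¹ • BG + (4:ℝ)⁻¹ • AP + (12:ℝ)⁻¹ • K := by
  subst hIB hIC hIA hWg hZ hCG
  module

lemma integral_add4 (u1 u2 u3 u4 : ℝ → 𝕓) {a b : ℝ}
    (h1 : IntervalIntegrable u1 volume a b) (h2 : IntervalIntegrable u2 volume a b)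
    (h3 : IntervalIntegrable u3 volume a b) (h4 : IntervalIntegrable u4 volume a b) :
    (∫ t in a..b, (u1 t + u2 t + u3 t + u4 t))
      = (∫ t in a..b, u1 t) + (∫ t in a..b, u2 t) + (∫ t in a..b, u3 t)
        + ∫ t in a..b, u4 t := by
  have h12 : IntervalIntegrable (fun t => u1 t + u2 t) volume a b := h1.add h2
  have h123 : IntervalIntegrable (fun t => u1 t + u2 t + u3 t) volume a b := h12.add h3
  rw [integral_add h123 h4, integral_add h12 h3, integral_add h1 h2]

lemma integral_add6 (u1 u2 u3 u4 u5 u6 : ℝ → 𝕓) {a b : ℝ}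
    (h1 : IntervalIntegrable u1 volume a b) (h2 : IntervalIntegrable u2 volume a b)
    (h3 : IntervalIntegrable u3 volume a b) (h4 : IntervalIntegrable u4 volume a b)
    (h5 : IntervalIntegrable u5 volume a b) (h6 : IntervalIntegrable u6 volume a b) :
    (∫ t in a..b, (u1 t + u2 t + u3 t + u4 t + u5 t + u6 t))
      = (∫ t in a..b, u1 t) + (∫ t in a..b, u2 t) + (∫ t in a..b, u3 t)
        + (∫ t in a..b, u4 t) + (∫ t in a..b, u5 t) + ∫ t in a..b, u6 t := by
  have h12 : IntervalIntegrable (fun t => u1 t + u2 t) volume a b := h1.add h2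
  have h123 : IntervalIntegrable (fun t => u1 t + u2 t + u3 t) volume a b := h12.add h3
  have h1234 : IntervalIntegrable (fun t => u1 t + u2 t + u3 t + u4 t) volume a b := h123.add h4
  have h12345 : IntervalIntegrable (fun t => u1 t + u2 t + u3 t + u4 t + u5 t) volume a b :=
    h1234.add h5
  rw [integral_add h12345 h6, integral_add h1234 h5, integral_add h123 h4,
    integral_add h12 h3, integral_add h1 h2]

set_option maxHeartbeats 1000000 in
/-- first variation of the third-layer end-point functional. -/
theorem statement13 (V1 V2 V3 : Submodule ℝ 𝕓) (hC : CarnotStep3 br V1 V2 V3)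
    (γ : ℝ → 𝕓) (hγ : γ ∈ H1zero V1) (φ : ℝ → 𝕓) (hφ : φ ∈ H1zero V1) :
    dF3 br γ φ = (∫ t in (0:ℝ)..1, br (curve γ t) (br (curve φ t) (γ t)))
      + (2:ℝ)⁻¹ • br (∫ t in (0:ℝ)..1, br (curve φ t) (γ t)) (curve γ 1)
      + (4:ℝ)⁻¹ • br (∫ t in (0:ℝ)..1, br (curve γ t) (γ t)) (curve φ 1)
      + (12:ℝ)⁻¹ • br (curve γ 1) (br (curve γ 1) (curve φ 1)) := by
  have hγI : IntegrableOn γ (Icc (0:ℝ) 1) := hγ.2.integrable one_le_two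
  have hφI : IntegrableOn φ (Icc (0:ℝ) 1) := hφ.2.integrable one_le_two
  have halt : ∀ x y : 𝕓, br x y = - br y x := by
    intro x y
    have h := hC.2.2.2.2.1 (x + y)
    simp only [map_add, LinearMap.add_apply, hC.2.2.2.2.1] at h
    linear_combination (norm := module) h
  have hjac := hC.2.2.2.2.2
  have h01 : (0:ℝ) ∈ Icc (0:ℝ) 1 := ⟨le_rfl, zero_le_one⟩
  have h11 : (1:ℝ) ∈ Icc (0:ℝ) 1 := ⟨zero_le_one, le_rfl⟩
  set G := curve γ with hGdef
  set P := curve φ with hPdef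
  have hGc : ContinuousOn G (Icc (0:ℝ) 1) := curve_contOn hγI
  have hPc : ContinuousOn P (Icc (0:ℝ) 1) := curve_contOn hφI
  set ag : ℝ → 𝕓 := fun t => br (G t) (γ t) with hagdef
  set bg : ℝ → 𝕓 := fun t => br (P t) (γ t) with hbgdef
  set cg : ℝ → 𝕓 := fun t => br (G t) (φ t) with hcgdef
  set dg : ℝ → 𝕓 := fun t => br (P t) (φ t) with hdgdef
  have hagI : IntegrableOn ag (Icc (0:ℝ) 1) := integrableOn_bilin br hGc hγI
  have hbgI : IntegrableOn bg (Icc (0:ℝ) 1) := integrableOn_bilin br hPc hγI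
  have hcgI : IntegrableOn cg (Icc (0:ℝ) 1) := integrableOn_bilin br hGc hφI
  have hdgI : IntegrableOn dg (Icc (0:ℝ) 1) := integrableOn_bilin br hPc hφI
  set A := curve ag with hAdef
  set Bc := curve bg with hBcdef
  set Cc := curve cg with hCcdef
  set D := curve dg with hDdef
  have hAc : ContinuousOn A (Icc (0:ℝ) 1) := curve_contOn hagI
  have hBcc : ContinuousOn Bc (Icc (0:ℝ) 1) := curve_contOn hbgI
  have hCcc : ContinuousOn Cc (Icc (0:ℝ) 1) := curve_contOn hcgI
  have hDc : ContinuousOn D (Icc (0:ℝ) 1) := curve_contOn hdgI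
  -- integrands of the polynomial expansion of `F3 (γ + ε φ)` in ε
  set c0 : ℝ → 𝕓 := fun t => (12:ℝ)⁻¹ • br (G t) (br (G t) (γ t)) + (4:ℝ)⁻¹ • br (A t) (γ t)
    with hc0def
  set c1 : ℝ → 𝕓 := fun t =>
      (12:ℝ)⁻¹ • (br (G t) (br (G t) (φ t)) + br (G t) (br (P t) (γ t))
        + br (P t) (br (G t) (γ t)))
      + (4:ℝ)⁻¹ • br (A t) (φ t) + (4:ℝ)⁻¹ • (br (Bc t) (γ t) + br (Cc t) (γ t)) with hc1def
  set c2 : ℝ → 𝕓 := fun t =>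
      (12:ℝ)⁻¹ • (br (G t) (br (P t) (φ t)) + br (P t) (br (G t) (φ t))
        + br (P t) (br (P t) (γ t)))
      + (4:ℝ)⁻¹ • (br (Bc t) (φ t) + br (Cc t) (φ t)) + (4:ℝ)⁻¹ • br (D t) (γ t) with hc2def
  set c3 : ℝ → 𝕓 := fun t => (12:ℝ)⁻¹ • br (P t) (br (P t) (φ t)) + (4:ℝ)⁻¹ • br (D t) (φ t)
    with hc3def
  -- integrability of all the pieces
  have i1 : IntegrableOn (fun t => br (G t) (br (G t) (γ t))) (Icc (0:ℝ) 1) :=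
    integrableOn_bilin br hGc (integrableOn_bilin br hGc hγI)
  have i2 : IntegrableOn (fun t => br (A t) (γ t)) (Icc (0:ℝ) 1) :=
    integrableOn_bilin br hAc hγI
  have i3 : IntegrableOn (fun t => br (G t) (br (G t) (φ t))) (Icc (0:ℝ) 1) :=
    integrableOn_bilin br hGc (integrableOn_bilin br hGc hφI)
  have i4 : IntegrableOn (fun t => br (G t) (br (P t) (γ t))) (Icc (0:ℝ) 1) :=
    integrableOn_bilin br hGc (integrableOn_bilin br hPc hγI)
  have i5 : IntegrableOn (fun t => br (P t) (br (G t) (γ t))) (Icc (0:ℝ) 1) :=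
    integrableOn_bilin br hPc (integrableOn_bilin br hGc hγI)
  have i6 : IntegrableOn (fun t => br (A t) (φ t)) (Icc (0:ℝ) 1) :=
    integrableOn_bilin br hAc hφI
  have i7 : IntegrableOn (fun t => br (Bc t) (γ t)) (Icc (0:ℝ) 1) :=
    integrableOn_bilin br hBcc hγI
  have i8 : IntegrableOn (fun t => br (Cc t) (γ t)) (Icc (0:ℝ) 1) :=
    integrableOn_bilin br hCcc hγI
  have i9 : IntegrableOn (fun t => br (G t) (br (P t) (φ t))) (Icc (0:ℝ) 1) :=
    integrableOn_bilin br hGc (integrableOn_bilin br hPc hφI)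
  have i10 : IntegrableOn (fun t => br (P t) (br (G t) (φ t))) (Icc (0:ℝ) 1) :=
    integrableOn_bilin br hPc (integrableOn_bilin br hGc hφI)
  have i11 : IntegrableOn (fun t => br (P t) (br (P t) (γ t))) (Icc (0:ℝ) 1) :=
    integrableOn_bilin br hPc (integrableOn_bilin br hPc hγI)
  have i12 : IntegrableOn (fun t => br (Bc t) (φ t)) (Icc (0:ℝ) 1) :=
    integrableOn_bilin br hBcc hφI
  have i13 : IntegrableOn (fun t => br (Cc t) (φ t)) (Icc (0:ℝ) 1) :=
    integrableOn_bilin br hCcc hφI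
  have i14 : IntegrableOn (fun t => br (D t) (γ t)) (Icc (0:ℝ) 1) :=
    integrableOn_bilin br hDc hγI
  have i15 : IntegrableOn (fun t => br (P t) (br (P t) (φ t))) (Icc (0:ℝ) 1) :=
    integrableOn_bilin br hPc (integrableOn_bilin br hPc hφI)
  have i16 : IntegrableOn (fun t => br (D t) (φ t)) (Icc (0:ℝ) 1) :=
    integrableOn_bilin br hDc hφI
  have hc0I : IntegrableOn c0 (Icc (0:ℝ) 1) := (i1.smul ((12:ℝ)⁻¹)).add (i2.smul ((4:ℝ)⁻¹))
  have hc1I : IntegrableOn c1 (Icc (0:ℝ) 1) :=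
    ((((i3.add i4).add i5).smul ((12:ℝ)⁻¹)).add (i6.smul ((4:ℝ)⁻¹))).add
      ((i7.add i8).smul ((4:ℝ)⁻¹))
  have hc2I : IntegrableOn c2 (Icc (0:ℝ) 1) :=
    ((((i9.add i10).add i11).smul ((12:ℝ)⁻¹)).add ((i12.add i13).smul ((4:ℝ)⁻¹))).add
      (i14.smul ((4:ℝ)⁻¹))
  have hc3I : IntegrableOn c3 (Icc (0:ℝ) 1) := (i15.smul ((12:ℝ)⁻¹)).add (i16.smul ((4:ℝ)⁻¹))
  -- expansion of the curve and second layer of γ + ε φ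
  have hcurveEps : ∀ (ε : ℝ) (t : ℝ), t ∈ Icc (0:ℝ) 1 →
      curve (γ + ε • φ) t = G t + ε • P t := by
    intro ε t ht
    have h1 : IntervalIntegrable γ volume 0 t := intInt hγI h01 ht
    have h2 : IntervalIntegrable φ volume 0 t := intInt hφI h01 ht
    calc curve (γ + ε • φ) t = ∫ s in (0:ℝ)..t, (γ s + ε • φ s) := rfl
      _ = (∫ s in (0:ℝ)..t, γ s) + ∫ s in (0:ℝ)..t, ε • φ s :=
          integral_add h1 (h2.smul ε)
      _ = G t + ε • P t := by
          rw [intervalIntegral.integral_smul]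
          rfl
  have hcurve2Eps : ∀ (ε : ℝ) (t : ℝ), t ∈ Icc (0:ℝ) 1 →
      curve2 br (γ + ε • φ) t = (2:ℝ)⁻¹ • (A t + ε • (Bc t + Cc t) + ε^2 • D t) := by
    intro ε t ht
    have hsubt : Icc (0:ℝ) t ⊆ Icc (0:ℝ) 1 := Icc_subset_Icc le_rfl ht.2
    have j1 : IntervalIntegrable ag volume 0 t := intInt hagI h01 ht
    have j2 : IntervalIntegrable bg volume 0 t := intInt hbgI h01 ht
    have j3 : IntervalIntegrable cg volume 0 t := intInt hcgI h01 ht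
    have j4 : IntervalIntegrable dg volume 0 t := intInt hdgI h01 ht
    calc curve2 br (γ + ε • φ) t
        = (2:ℝ)⁻¹ • ∫ s in (0:ℝ)..t, (ag s + ε • bg s + ε • cg s + ε^2 • dg s) := by
          rw [curve2]
          congr 1
          refine integral_congr fun s hs => ?_
          have hs' : s ∈ Icc (0:ℝ) 1 := hsubt (by rwa [uIcc_of_le ht.1] at hs)
          rw [hcurveEps ε s hs']
          show br (G s + ε • P s) (γ s + ε • φ s) = _
          simp only [hagdef, hbgdef, hcgdef, hdgdef]
          simp only [map_add, _root_.map_smul, LinearMap.add_apply, LinearMap.smul_apply,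
            smul_add, smul_smul]
          module
      _ = (2:ℝ)⁻¹ • ((∫ s in (0:ℝ)..t, ag s) + (∫ s in (0:ℝ)..t, ε • bg s)
            + (∫ s in (0:ℝ)..t, ε • cg s) + ∫ s in (0:ℝ)..t, ε^2 • dg s) :=
          congrArg (fun z => (2:ℝ)⁻¹ • z)
            (integral_add4 _ _ _ _ j1 (j2.smul ε) (j3.smul ε) (j4.smul (ε^2)))
      _ = (2:ℝ)⁻¹ • (A t + ε • (Bc t + Cc t) + ε^2 • D t) := by
          rw [intervalIntegral.integral_smul, intervalIntegral.integral_smul,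
            intervalIntegral.integral_smul]
          show (2:ℝ)⁻¹ • ((∫ s in (0:ℝ)..t, ag s) + ε • (∫ s in (0:ℝ)..t, bg s)
            + ε • (∫ s in (0:ℝ)..t, cg s) + ε^2 • ∫ s in (0:ℝ)..t, dg s)
            = (2:ℝ)⁻¹ • ((∫ s in (0:ℝ)..t, ag s)
              + ε • ((∫ s in (0:ℝ)..t, bg s) + ∫ s in (0:ℝ)..t, cg s)
              + ε^2 • ∫ s in (0:ℝ)..t, dg s)
          module
  -- the ε-expansion of F3
  have key : ∀ ε : ℝ, F3 br (γ + ε • φ)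
      = (∫ t in (0:ℝ)..1, c0 t) + ε • (∫ t in (0:ℝ)..1, c1 t)
        + ε^2 • (∫ t in (0:ℝ)..1, c2 t) + ε^3 • (∫ t in (0:ℝ)..1, c3 t) := by
    intro ε
    have hint : EqOn (fun t =>
        ((2:ℝ)⁻¹ • (br (curve (γ + ε • φ) t) ((2:ℝ)⁻¹ • br (curve (γ + ε • φ) t) ((γ + ε • φ) t))
            + br (curve2 br (γ + ε • φ) t) ((γ + ε • φ) t))
          - (6:ℝ)⁻¹ • br (curve (γ + ε • φ) t) (br (curve (γ + ε • φ) t) ((γ + ε • φ) t))))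
        (fun t => c0 t + ε • c1 t + ε^2 • c2 t + ε^3 • c3 t) (uIcc (0:ℝ) 1) := by
      intro t ht
      have ht' : t ∈ Icc (0:ℝ) 1 := by rwa [uIcc_of_le zero_le_one] at ht
      simp only
      rw [hcurveEps ε t ht', hcurve2Eps ε t ht']
      show (2:ℝ)⁻¹ • (br (G t + ε • P t) ((2:ℝ)⁻¹ • br (G t + ε • P t) (γ t + ε • φ t))
            + br ((2:ℝ)⁻¹ • (A t + ε • (Bc t + Cc t) + ε^2 • D t)) (γ t + ε • φ t))
          - (6:ℝ)⁻¹ • br (G t + ε • P t) (br (G t + ε • P t) (γ t + ε • φ t)) = _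
      simp only [hc0def, hc1def, hc2def, hc3def]
      simp only [map_add, _root_.map_smul, LinearMap.add_apply, LinearMap.smul_apply,
        smul_add, smul_smul]
      module
    have k0 : IntervalIntegrable c0 volume 0 1 := intInt hc0I h01 h11
    have k1 : IntervalIntegrable c1 volume 0 1 := intInt hc1I h01 h11
    have k2 : IntervalIntegrable c2 volume 0 1 := intInt hc2I h01 h11
    have k3 : IntervalIntegrable c3 volume 0 1 := intInt hc3I h01 h11
    calc F3 br (γ + ε • φ)
        = ∫ t in (0:ℝ)..1, (c0 t + ε • c1 t + ε^2 • c2 t + ε^3 • c3 t) := by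
          rw [F3]; exact integral_congr hint
      _ = (∫ t in (0:ℝ)..1, c0 t) + (∫ t in (0:ℝ)..1, ε • c1 t)
            + (∫ t in (0:ℝ)..1, ε^2 • c2 t) + ∫ t in (0:ℝ)..1, ε^3 • c3 t :=
          integral_add4 _ _ _ _ k0 (k1.smul ε) (k2.smul (ε^2)) (k3.smul (ε^3))
      _ = (∫ t in (0:ℝ)..1, c0 t) + ε • (∫ t in (0:ℝ)..1, c1 t)
            + ε^2 • (∫ t in (0:ℝ)..1, c2 t) + ε^3 • (∫ t in (0:ℝ)..1, c3 t) := by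
          rw [intervalIntegral.integral_smul, intervalIntegral.integral_smul,
            intervalIntegral.integral_smul]
  -- the derivative at 0
  have hderiv : dF3 br γ φ = ∫ t in (0:ℝ)..1, c1 t := by
    rw [dF3]
    rw [funext key]
    have h : HasDerivAt (fun ε : ℝ =>
        (∫ t in (0:ℝ)..1, c0 t) + ε • (∫ t in (0:ℝ)..1, c1 t)
          + ε^2 • (∫ t in (0:ℝ)..1, c2 t) + ε^3 • (∫ t in (0:ℝ)..1, c3 t))
        (0 + (1:ℝ) • (∫ t in (0:ℝ)..1, c1 t) + ((2*0^1 : ℝ)) • (∫ t in (0:ℝ)..1, c2 t)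
          + ((3*0^2 : ℝ)) • (∫ t in (0:ℝ)..1, c3 t)) 0 :=
      (((hasDerivAt_const 0 _).add ((hasDerivAt_id 0).smul_const _)).add
        ((hasDerivAt_pow 2 0).smul_const _)).add ((hasDerivAt_pow 3 0).smul_const _)
    simpa using h.deriv
  rw [hderiv]
  -- now the integration-by-parts identities
  have hw1 : IntegrableOn (fun t => br (γ t) (P t)) (Icc (0:ℝ) 1) := by
    have := integrableOn_bilin br.flip hPc hγI
    exact this
  set w : ℝ → 𝕓 := fun s => br (γ s) (P s) + br (G s) (φ s) with hwdef
  have hwI : IntegrableOn w (Icc (0:ℝ) 1) := hw1.add hcgI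
  have hGP : ∀ t ∈ Icc (0:ℝ) 1, br (G t) (P t) = curve w t := by
    intro t ht
    have h := ibp br hγI hφI ht
    rw [← hGdef, ← hPdef] at h
    have hsplitw : curve w t
        = (∫ s in (0:ℝ)..t, br (γ s) (P s)) + ∫ s in (0:ℝ)..t, br (G s) (φ s) := by
      have e : curve w t = ∫ s in (0:ℝ)..t, (br (γ s) (P s) + br (G s) (φ s)) :=
        integral_congr fun s _ => rfl
      rw [e]
      exact integral_add (intInt hw1 h01 ht) (intInt hcgI h01 ht)
    rw [h, hsplitw]
  -- abbreviations for the integrals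
  have hIB : (∫ t in (0:ℝ)..1, br (Bc t) (γ t))
      = br (Bc 1) (G 1) + ∫ t in (0:ℝ)..1, br (G t) (br (P t) (γ t)) := by
    have h := ibp br hbgI hγI h11
    rw [← hGdef, ← hBcdef] at h
    have h2 : (∫ t in (0:ℝ)..1, br (bg t) (G t))
        = - ∫ t in (0:ℝ)..1, br (G t) (br (P t) (γ t)) := by
      rw [← intervalIntegral.integral_neg]
      exact integral_congr fun t _ => halt _ _
    rw [h2] at h
    linear_combination (norm := module) -h
  have hIC : (∫ t in (0:ℝ)..1, br (Cc t) (γ t))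
      = br (Cc 1) (G 1) + ∫ t in (0:ℝ)..1, br (G t) (br (G t) (φ t)) := by
    have h := ibp br hcgI hγI h11
    rw [← hGdef, ← hCcdef] at h
    have h2 : (∫ t in (0:ℝ)..1, br (cg t) (G t))
        = - ∫ t in (0:ℝ)..1, br (G t) (br (G t) (φ t)) := by
      rw [← intervalIntegral.integral_neg]
      exact integral_congr fun t _ => halt _ _
    rw [h2] at h
    linear_combination (norm := module) -h
  have hIA : (∫ t in (0:ℝ)..1, br (A t) (φ t))
      = br (A 1) (P 1) + ∫ t in (0:ℝ)..1, br (P t) (br (G t) (γ t)) := by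
    have h := ibp br hagI hφI h11
    rw [← hPdef, ← hAdef] at h
    have h2 : (∫ t in (0:ℝ)..1, br (ag t) (P t))
        = - ∫ t in (0:ℝ)..1, br (P t) (br (G t) (γ t)) := by
      rw [← intervalIntegral.integral_neg]
      exact integral_congr fun t _ => halt _ _
    rw [h2] at h
    linear_combination (norm := module) -h
  -- Jacobi identity, integrated
  have hGPc : ContinuousOn (fun t => br (G t) (P t)) (Icc (0:ℝ) 1) :=
    by have h := (brL_cont br).comp_continuousOn (hGc.prodMk hPc); exact h
  have hgGP : IntegrableOn (fun t => br (γ t) (br (G t) (P t))) (Icc (0:ℝ) 1) := by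
    have := integrableOn_bilin br.flip hGPc hγI
    exact this
  have hZX : (∫ t in (0:ℝ)..1, br (P t) (br (G t) (γ t)))
      = (∫ t in (0:ℝ)..1, br (G t) (br (P t) (γ t)))
        + ∫ t in (0:ℝ)..1, br (γ t) (br (G t) (P t)) := by
    rw [← integral_add (intInt i4 h01 h11) (intInt hgGP h01 h11)]
    refine integral_congr fun t _ => ?_
    have hj := hjac (P t) (G t) (γ t)
    have e1 : br (G t) (br (γ t) (P t)) = - br (G t) (br (P t) (γ t)) := by
      rw [halt (γ t) (P t), map_neg]
    have e2 : br (γ t) (br (P t) (G t)) = - br (γ t) (br (G t) (P t)) := by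
      rw [halt (P t) (G t), map_neg]
    linear_combination (norm := module) hj - e1 - e2
  -- second-order integration by parts
  have hWg : (∫ t in (0:ℝ)..1, br (γ t) (br (G t) (P t)))
      = br (G 1) (br (G 1) (P 1)) + (∫ t in (0:ℝ)..1, br (G t) (br (P t) (γ t)))
        - ∫ t in (0:ℝ)..1, br (G t) (br (G t) (φ t)) := by
    have h := ibp br hγI hwI h11
    rw [← hGdef] at h
    have e1 : curve w 1 = br (G 1) (P 1) := (hGP 1 h11).symm
    have e2 : (∫ t in (0:ℝ)..1, br (γ t) (curve w t))
        = ∫ t in (0:ℝ)..1, br (γ t) (br (G t) (P t)) :=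
      integral_congr fun t ht => by
        rw [hGP t (by rwa [uIcc_of_le zero_le_one] at ht)]
    have e3 : (∫ t in (0:ℝ)..1, br (G t) (w t))
        = (- ∫ t in (0:ℝ)..1, br (G t) (br (P t) (γ t)))
          + ∫ t in (0:ℝ)..1, br (G t) (br (G t) (φ t)) := by
      calc (∫ t in (0:ℝ)..1, br (G t) (w t))
          = ∫ t in (0:ℝ)..1, (-(br (G t) (br (P t) (γ t))) + br (G t) (br (G t) (φ t))) := by
            refine integral_congr fun t _ => ?_
            have e0 : w t = br (γ t) (P t) + br (G t) (φ t) := rfl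
            rw [e0, map_add, halt (γ t) (P t), _root_.map_neg]
        _ = (∫ t in (0:ℝ)..1, -(br (G t) (br (P t) (γ t))))
              + ∫ t in (0:ℝ)..1, br (G t) (br (G t) (φ t)) :=
            integral_add (intInt i4 h01 h11).neg (intInt i3 h01 h11)
        _ = (- ∫ t in (0:ℝ)..1, br (G t) (br (P t) (γ t)))
              + ∫ t in (0:ℝ)..1, br (G t) (br (G t) (φ t)) := by
            rw [intervalIntegral.integral_neg]
    rw [e1, e2, e3] at h
    linear_combination (norm := module) -h
  have hCG : br (Cc 1) (G 1) = br (Bc 1) (G 1) - br (G 1) (br (G 1) (P 1)) := by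
    have hCB : Cc 1 = Bc 1 + br (G 1) (P 1) := by
      have h := hGP 1 h11
      have hsplitw : curve w 1
          = (∫ t in (0:ℝ)..1, br (γ t) (P t)) + ∫ t in (0:ℝ)..1, br (G t) (φ t) := by
        have e : curve w 1 = ∫ s in (0:ℝ)..1, (br (γ s) (P s) + br (G s) (φ s)) :=
          integral_congr fun s _ => rfl
        rw [e]
        exact integral_add (intInt hw1 h01 h11) (intInt hcgI h01 h11)
      have e1 : (∫ t in (0:ℝ)..1, br (γ t) (P t)) = - ∫ t in (0:ℝ)..1, br (P t) (γ t) := by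
        rw [← intervalIntegral.integral_neg]; exact integral_congr fun t _ => halt _ _
      have e2 : Bc 1 = ∫ t in (0:ℝ)..1, br (P t) (γ t) :=
        integral_congr fun t _ => rfl
      have e3 : Cc 1 = ∫ t in (0:ℝ)..1, br (G t) (φ t) :=
        integral_congr fun t _ => rfl
      rw [hsplitw, e1] at h
      linear_combination (norm := module) e3 - e2 - h
    rw [hCB, map_add, LinearMap.add_apply]
    have e5 : br (br (G 1) (P 1)) (G 1) = - br (G 1) (br (G 1) (P 1)) := halt _ _
    rw [e5]
    abel
  -- split the first-order integral
  have hsplit : (∫ t in (0:ℝ)..1, c1 t)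
      = (12:ℝ)⁻¹ • ((∫ t in (0:ℝ)..1, br (G t) (br (G t) (φ t)))
          + (∫ t in (0:ℝ)..1, br (G t) (br (P t) (γ t)))
          + ∫ t in (0:ℝ)..1, br (P t) (br (G t) (γ t)))
        + (4:ℝ)⁻¹ • (∫ t in (0:ℝ)..1, br (A t) (φ t))
        + (4:ℝ)⁻¹ • ((∫ t in (0:ℝ)..1, br (Bc t) (γ t)) + ∫ t in (0:ℝ)..1, br (Cc t) (γ t)) := by
    have k3 := intInt i3 h01 h11
    have k4 := intInt i4 h01 h11
    have k5 := intInt i5 h01 h11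
    have k6 := intInt i6 h01 h11
    have k7 := intInt i7 h01 h11
    have k8 := intInt i8 h01 h11
    calc (∫ t in (0:ℝ)..1, c1 t)
        = ∫ t in (0:ℝ)..1, ((12:ℝ)⁻¹ • br (G t) (br (G t) (φ t))
            + (12:ℝ)⁻¹ • br (G t) (br (P t) (γ t)) + (12:ℝ)⁻¹ • br (P t) (br (G t) (γ t))
            + (4:ℝ)⁻¹ • br (A t) (φ t) + (4:ℝ)⁻¹ • br (Bc t) (γ t)
            + (4:ℝ)⁻¹ • br (Cc t) (γ t)) := by
          refine integral_congr fun t _ => ?_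
          simp only [hc1def]
          module
      _ = (∫ t in (0:ℝ)..1, (12:ℝ)⁻¹ • br (G t) (br (G t) (φ t)))
            + (∫ t in (0:ℝ)..1, (12:ℝ)⁻¹ • br (G t) (br (P t) (γ t)))
            + (∫ t in (0:ℝ)..1, (12:ℝ)⁻¹ • br (P t) (br (G t) (γ t)))
            + (∫ t in (0:ℝ)..1, (4:ℝ)⁻¹ • br (A t) (φ t))
            + (∫ t in (0:ℝ)..1, (4:ℝ)⁻¹ • br (Bc t) (γ t))
            + ∫ t in (0:ℝ)..1, (4:ℝ)⁻¹ • br (Cc t) (γ t) :=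
          integral_add6 _ _ _ _ _ _ (k3.smul _) (k4.smul _) (k5.smul _) (k6.smul _)
            (k7.smul _) (k8.smul _)
      _ = (12:ℝ)⁻¹ • ((∫ t in (0:ℝ)..1, br (G t) (br (G t) (φ t)))
            + (∫ t in (0:ℝ)..1, br (G t) (br (P t) (γ t)))
            + ∫ t in (0:ℝ)..1, br (P t) (br (G t) (γ t)))
          + (4:ℝ)⁻¹ • (∫ t in (0:ℝ)..1, br (A t) (φ t))
          + (4:ℝ)⁻¹ • ((∫ t in (0:ℝ)..1, br (Bc t) (γ t))
            + ∫ t in (0:ℝ)..1, br (Cc t) (γ t)) := by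
          rw [intervalIntegral.integral_smul, intervalIntegral.integral_smul,
            intervalIntegral.integral_smul, intervalIntegral.integral_smul,
            intervalIntegral.integral_smul, intervalIntegral.integral_smul]
          module
  rw [hsplit]
  exact assemble (∫ t in (0:ℝ)..1, br (G t) (br (P t) (γ t)))
    (∫ t in (0:ℝ)..1, br (G t) (br (G t) (φ t)))
    (∫ t in (0:ℝ)..1, br (P t) (br (G t) (γ t)))
    (∫ t in (0:ℝ)..1, br (γ t) (br (G t) (P t)))
    (∫ t in (0:ℝ)..1, br (A t) (φ t)) (∫ t in (0:ℝ)..1, br (Bc t) (γ t))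
    (∫ t in (0:ℝ)..1, br (Cc t) (γ t)) (br (G 1) (br (G 1) (P 1)))
    (br (Bc 1) (G 1)) (br (A 1) (P 1)) (br (Cc 1) (G 1))
    hIB hIC hIA hZX hWg hCG
end
end

section
/- (Differential of the end-point map on variations vanishing at the endpoint.) For all γ, φ ∈ H¹(0) with φ(1) = 0: d_γE(φ) = ( 0, ∫₀¹ ⁅φ,γ̇⁆ dt, ∫₀¹ ⁅γ − ½γ(1), ⁅φ,γ̇⁆⁆ dt ) ∈ V¹ ⊕ V² ⊕ V³. -/
set_option linter.unusedSectionVars false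
set_option linter.unusedVariables false
set_option maxHeartbeats 1000000


open MeasureTheory Set intervalIntegral

noncomputable section

variable {𝕓 : Type*} [NormedAddCommGroup 𝕓] [InnerProductSpace ℝ 𝕓] [FiniteDimensional ℝ 𝕓]

variable (br : 𝕓 →ₗ[ℝ] 𝕓 →ₗ[ℝ] 𝕓)

namespace S14

def brL : 𝕓 →L[ℝ] 𝕓 →L[ℝ] 𝕓 :=
  LinearMap.toContinuousLinearMap
    ((LinearMap.toContinuousLinearMap :
        (𝕓 →ₗ[ℝ] 𝕓) ≃ₗ[ℝ] (𝕓 →L[ℝ] 𝕓)).toLinearMap ∘ₗ br)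

@[simp] lemma brL_apply (a b : 𝕓) : brL br a b = br a b := rfl

def a0 (γ : ℝ → 𝕓) : ℝ → 𝕓 := fun t => br (curve γ t) (γ t)
def a1 (γ φ : ℝ → 𝕓) : ℝ → 𝕓 := fun t => br (curve γ t) (φ t) + br (curve φ t) (γ t)
def a2 (γ φ : ℝ → 𝕓) : ℝ → 𝕓 := fun t => br (curve φ t) (φ t)
def rho (γ φ : ℝ → 𝕓) : ℝ → 𝕓 := fun t => br (curve γ t) (φ t) - br (curve φ t) (γ t)

def q0 (γ φ : ℝ → 𝕓) : ℝ → 𝕓 := fun t =>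
  (12:ℝ)⁻¹ • br (curve γ t) (br (curve γ t) (γ t)) + (4:ℝ)⁻¹ • br (curve (a0 br γ) t) (γ t)
def q1 (γ φ : ℝ → 𝕓) : ℝ → 𝕓 := fun t =>
  (12:ℝ)⁻¹ • (br (curve φ t) (br (curve γ t) (γ t)) + br (curve γ t) (br (curve φ t) (γ t))
      + br (curve γ t) (br (curve γ t) (φ t)))
    + (4:ℝ)⁻¹ • (br (curve (a1 br γ φ) t) (γ t) + br (curve (a0 br γ) t) (φ t))
def q2 (γ φ : ℝ → 𝕓) : ℝ → 𝕓 := fun t =>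
  (12:ℝ)⁻¹ • (br (curve φ t) (br (curve φ t) (γ t)) + br (curve φ t) (br (curve γ t) (φ t))
      + br (curve γ t) (br (curve φ t) (φ t)))
    + (4:ℝ)⁻¹ • (br (curve (a2 br γ φ) t) (γ t) + br (curve (a1 br γ φ) t) (φ t))
def q3 (γ φ : ℝ → 𝕓) : ℝ → 𝕓 := fun t =>
  (12:ℝ)⁻¹ • br (curve φ t) (br (curve φ t) (φ t)) + (4:ℝ)⁻¹ • br (curve (a2 br γ φ) t) (φ t)

lemma intInt {u : ℝ → 𝕓} (hu : IntegrableOn u (Icc 0 1) volume) {a b : ℝ}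
    (h0 : 0 ≤ a) (hab : a ≤ b) (h1 : b ≤ 1) : IntervalIntegrable u volume a b := by
  apply IntegrableOn.intervalIntegrable
  rw [uIcc_of_le hab]
  exact hu.mono_set (Icc_subset_Icc h0 h1)

lemma curve_cont {u : ℝ → 𝕓} (hu : IntegrableOn u (Icc 0 1) volume) :
    ContinuousOn (curve u) (Icc 0 1) := by
  have h : Icc (0:ℝ) 1 = uIcc (0:ℝ) 1 := (uIcc_of_le zero_le_one).symm
  rw [h] at hu ⊢
  exact continuousOn_primitive_interval hu

lemma apply_integrableOn {M : ℝ → 𝕓 →L[ℝ] 𝕓} (hM : ContinuousOn M (Icc 0 1))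
    {u : ℝ → 𝕓} (hu : IntegrableOn u (Icc 0 1) volume) :
    IntegrableOn (fun t => M t (u t)) (Icc 0 1) volume := by
  obtain ⟨C, hC⟩ := (isCompact_Icc.image_of_continuousOn hM).isBounded.exists_norm_le
  have hmeas : AEStronglyMeasurable (fun t => M t (u t)) (volume.restrict (Icc (0:ℝ) 1)) := by
    have h1 : AEStronglyMeasurable M (volume.restrict (Icc (0:ℝ) 1)) :=
      hM.aestronglyMeasurable measurableSet_Icc
    have h2 := hu.aestronglyMeasurable
    exact isBoundedBilinearMap_apply.continuous.comp_aestronglyMeasurable (h1.prodMk h2)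
  refine Integrable.mono' (hu.norm.const_mul C) hmeas ?_
  filter_upwards [ae_restrict_mem measurableSet_Icc] with t ht
  calc ‖M t (u t)‖ ≤ ‖M t‖ * ‖u t‖ := (M t).le_opNorm _
  _ ≤ C * ‖u t‖ :=
      mul_le_mul_of_nonneg_right (hC _ (mem_image_of_mem M ht)) (norm_nonneg _)

lemma ibp (B : 𝕓 →L[ℝ] 𝕓 →L[ℝ] 𝕓) {u v : ℝ → 𝕓}
    (hu : IntegrableOn u (Icc 0 1) volume) (hv : IntegrableOn v (Icc 0 1) volume)
    {t : ℝ} (ht : t ∈ Icc (0:ℝ) 1) :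
    B (curve u t) (curve v t)
      = (∫ s in (0:ℝ)..t, B (u s) (curve v s)) + ∫ s in (0:ℝ)..t, B (curve u s) (v s) := by
  obtain ⟨ht0, ht1⟩ := ht
  set μ : Measure ℝ := volume.restrict (Ioc (0:ℝ) t) with hμ
  have hIoc : Ioc (0:ℝ) t ⊆ Icc (0:ℝ) 1 := (Ioc_subset_Icc_self).trans (Icc_subset_Icc le_rfl ht1)
  have huμ : Integrable u μ := hu.mono_set hIoc
  have hvμ : Integrable v μ := hv.mono_set hIoc
  have i1 : Integrable (fun s => B (u s) (curve v s)) μ := by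
    refine IntegrableOn.mono_set (apply_integrableOn (M := fun s => B.flip (curve v s)) ?_ hu) hIoc
    exact B.flip.continuous.comp_continuousOn (curve_cont hv)
  have i2' : Integrable (fun s => B (u s) (curve v t - curve v s)) μ := by
    refine IntegrableOn.mono_set
      (apply_integrableOn (M := fun s => B.flip (curve v t - curve v s)) ?_ hu) hIoc
    exact B.flip.continuous.comp_continuousOn (continuousOn_const.sub (curve_cont hv))
  have i3 : Integrable (fun s => B (curve u s) (v s)) μ := by
    refine IntegrableOn.mono_set (apply_integrableOn (M := fun s => B (curve u s)) ?_ hv) hIoc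
    exact B.continuous.comp_continuousOn (curve_cont hu)
  have ecurve : ∀ {w : ℝ → 𝕓} {r : ℝ}, 0 ≤ r → curve w r = ∫ s in Ioc (0:ℝ) r, w s := by
    intro w r hr
    rw [curve, integral_of_le hr]
  have step1 : B (curve u t) (curve v t) = ∫ s, B (u s) (curve v t) ∂μ := by
    rw [ecurve ht0]
    exact ((B.flip (curve v t)).integral_comp_comm huμ).symm
  have step2 : ∀ s ∈ Ioc (0:ℝ) t,
      B (u s) (curve v t) = B (u s) (curve v s) + B (u s) (curve v t - curve v s) := by
    intro s _
    rw [← map_add, add_sub_cancel]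
  have step3 : (∫ s, B (u s) (curve v t) ∂μ)
      = (∫ s, B (u s) (curve v s) ∂μ) + ∫ s, B (u s) (curve v t - curve v s) ∂μ := by
    rw [← integral_add i1 i2']
    refine integral_congr_ae ?_
    filter_upwards [ae_restrict_mem measurableSet_Ioc] with s hs
    exact step2 s hs
  have hsetm : MeasurableSet {p : ℝ × ℝ | p.1 < p.2} :=
    measurableSet_lt measurable_fst measurable_snd
  set F : ℝ → ℝ → 𝕓 :=
    fun s r => ({p : ℝ × ℝ | p.1 < p.2}.indicator (fun p => B (u p.1) (v p.2))) (s, r) with hF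
  have hFint : Integrable (Function.uncurry F) (μ.prod μ) := by
    have huncurry : Function.uncurry F
        = {p : ℝ × ℝ | p.1 < p.2}.indicator (fun p => B (u p.1) (v p.2)) := by
      funext p; cases p; rfl
    rw [huncurry]
    refine Integrable.indicator ?_ hsetm
    have m1 : AEStronglyMeasurable (fun p : ℝ × ℝ => u p.1) (μ.prod μ) :=
      huμ.aestronglyMeasurable.comp_quasiMeasurePreserving Measure.quasiMeasurePreserving_fst
    have m2 : AEStronglyMeasurable (fun p : ℝ × ℝ => v p.2) (μ.prod μ) :=
      hvμ.aestronglyMeasurable.comp_quasiMeasurePreserving Measure.quasiMeasurePreserving_snd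
    have mB : AEStronglyMeasurable (fun p : ℝ × ℝ => B (u p.1) (v p.2)) (μ.prod μ) :=
      B.isBoundedBilinearMap.continuous.comp_aestronglyMeasurable (m1.prodMk m2)
    have hbd : Integrable (fun p : ℝ × ℝ => (‖B‖ * ‖u p.1‖) * ‖v p.2‖) (μ.prod μ) :=
      (huμ.norm.const_mul ‖B‖).mul_prod hvμ.norm
    refine hbd.mono' mB (ae_of_all _ fun p => ?_)
    simpa [mul_assoc] using B.le_opNorm₂ (u p.1) (v p.2)
  have swap := MeasureTheory.integral_integral_swap hFint
  have lhs_eval : (∫ s, ∫ r, F s r ∂μ ∂μ) = ∫ s, B (u s) (curve v t - curve v s) ∂μ := by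
    refine integral_congr_ae ?_
    filter_upwards [ae_restrict_mem measurableSet_Ioc] with s hs
    have e1 : ∀ r, F s r = (Ioi s).indicator (fun r => B (u s) (v r)) r := by
      intro r
      by_cases h : s < r <;> simp [hF, Set.indicator_apply, h, Set.mem_Ioi]
    rw [show (fun r => F s r) = (Ioi s).indicator (fun r => B (u s) (v r)) from funext e1]
    rw [MeasureTheory.integral_indicator measurableSet_Ioi, hμ,
      Measure.restrict_restrict measurableSet_Ioi]
    have h2 : Ioi s ∩ Ioc 0 t = Ioc s t := by
      rw [inter_comm, Ioc_inter_Ioi, max_eq_right hs.1.le]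
    rw [h2, (B (u s)).integral_comp_comm (hv.mono_set ((Ioc_subset_Icc_self).trans
      (Icc_subset_Icc hs.1.le ht1)))]
    congr 1
    have hcv : curve v t = curve v s + ∫ r in Ioc s t, v r := by
      rw [curve, curve, ← integral_of_le hs.2,
        intervalIntegral.integral_add_adjacent_intervals
          (intInt hv le_rfl hs.1.le (hs.2.trans ht1)) (intInt hv hs.1.le hs.2 ht1)]
    rw [hcv]; abel
  have rhs_eval : (∫ r, ∫ s, F s r ∂μ ∂μ) = ∫ r, B (curve u r) (v r) ∂μ := by
    refine integral_congr_ae ?_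
    filter_upwards [ae_restrict_mem measurableSet_Ioc] with r hr
    have e1 : ∀ s, F s r = (Iio r).indicator (fun s => B (u s) (v r)) s := by
      intro s
      by_cases h : s < r <;> simp [hF, Set.indicator_apply, h, Set.mem_Iio]
    rw [show (fun s => F s r) = (Iio r).indicator (fun s => B (u s) (v r)) from funext e1]
    rw [MeasureTheory.integral_indicator measurableSet_Iio, hμ,
      Measure.restrict_restrict measurableSet_Iio]
    have h2 : Iio r ∩ Ioc 0 t = Ioo 0 r := by
      ext s
      simp only [mem_inter_iff, mem_Iio, mem_Ioc, mem_Ioo]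
      constructor
      · rintro ⟨h1, h2, _⟩; exact ⟨h2, h1⟩
      · rintro ⟨h1, h2⟩; exact ⟨h2, h1, le_of_lt (lt_of_lt_of_le h2 hr.2)⟩
    rw [h2, ← MeasureTheory.integral_Ioc_eq_integral_Ioo, ecurve hr.1.le]
    have h3 := (B.flip (v r)).integral_comp_comm (hu.mono_set ((Ioc_subset_Icc_self
      (a := (0:ℝ)) (b := r)).trans (Icc_subset_Icc le_rfl (hr.2.trans ht1))))
    simpa using h3
  rw [integral_of_le ht0, integral_of_le ht0, step1, step3, ← lhs_eval, swap, rhs_eval]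

lemma poly_int3 {T : ℝ} (hT0 : 0 ≤ T) (hT1 : T ≤ 1) {c0 c1 c2 : ℝ → 𝕓}
    (h0 : IntegrableOn c0 (Icc 0 1) volume) (h1 : IntegrableOn c1 (Icc 0 1) volume)
    (h2 : IntegrableOn c2 (Icc 0 1) volume) (ε : ℝ) :
    (∫ t in (0:ℝ)..T, (c0 t + ε • c1 t + ε ^ 2 • c2 t))
      = (∫ t in (0:ℝ)..T, c0 t) + ε • (∫ t in (0:ℝ)..T, c1 t)
        + ε ^ 2 • ∫ t in (0:ℝ)..T, c2 t := by
  have i0 := intInt h0 le_rfl hT0 hT1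
  have i1 : IntervalIntegrable (fun t => ε • c1 t) volume 0 T :=
    (intInt h1 le_rfl hT0 hT1).smul ε
  have i2 : IntervalIntegrable (fun t => ε ^ 2 • c2 t) volume 0 T :=
    (intInt h2 le_rfl hT0 hT1).smul (ε ^ 2)
  rw [integral_add (i0.add i1) i2, integral_add i0 i1, intervalIntegral.integral_smul, intervalIntegral.integral_smul]

lemma poly_int4 {T : ℝ} (hT0 : 0 ≤ T) (hT1 : T ≤ 1) {c0 c1 c2 c3 : ℝ → 𝕓}
    (h0 : IntegrableOn c0 (Icc 0 1) volume) (h1 : IntegrableOn c1 (Icc 0 1) volume)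
    (h2 : IntegrableOn c2 (Icc 0 1) volume) (h3 : IntegrableOn c3 (Icc 0 1) volume) (ε : ℝ) :
    (∫ t in (0:ℝ)..T, (c0 t + ε • c1 t + ε ^ 2 • c2 t + ε ^ 3 • c3 t))
      = (∫ t in (0:ℝ)..T, c0 t) + ε • (∫ t in (0:ℝ)..T, c1 t)
        + ε ^ 2 • (∫ t in (0:ℝ)..T, c2 t) + ε ^ 3 • ∫ t in (0:ℝ)..T, c3 t := by
  have i0 := intInt h0 le_rfl hT0 hT1
  have i1 : IntervalIntegrable (fun t => ε • c1 t) volume 0 T :=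
    (intInt h1 le_rfl hT0 hT1).smul ε
  have i2 : IntervalIntegrable (fun t => ε ^ 2 • c2 t) volume 0 T :=
    (intInt h2 le_rfl hT0 hT1).smul (ε ^ 2)
  have i3 : IntervalIntegrable (fun t => ε ^ 3 • c3 t) volume 0 T :=
    (intInt h3 le_rfl hT0 hT1).smul (ε ^ 3)
  rw [integral_add ((i0.add i1).add i2) i3, integral_add (i0.add i1) i2, integral_add i0 i1,
    intervalIntegral.integral_smul, intervalIntegral.integral_smul, intervalIntegral.integral_smul]


lemma split_q1 {f1 f2 f3 f4 f5 : ℝ → 𝕓}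
    (h1 : IntegrableOn f1 (Icc 0 1) volume) (h2 : IntegrableOn f2 (Icc 0 1) volume)
    (h3 : IntegrableOn f3 (Icc 0 1) volume) (h4 : IntegrableOn f4 (Icc 0 1) volume)
    (h5 : IntegrableOn f5 (Icc 0 1) volume) :
    (∫ t in (0:ℝ)..1, ((12:ℝ)⁻¹ • (f1 t + f2 t + f3 t) + (4:ℝ)⁻¹ • (f4 t + f5 t)))
      = (12:ℝ)⁻¹ • ((∫ t in (0:ℝ)..1, f1 t) + (∫ t in (0:ℝ)..1, f2 t) + ∫ t in (0:ℝ)..1, f3 t)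
        + (4:ℝ)⁻¹ • ((∫ t in (0:ℝ)..1, f4 t) + ∫ t in (0:ℝ)..1, f5 t) := by
  have i1 := intInt h1 le_rfl zero_le_one le_rfl
  have i2 := intInt h2 le_rfl zero_le_one le_rfl
  have i3 := intInt h3 le_rfl zero_le_one le_rfl
  have i4 := intInt h4 le_rfl zero_le_one le_rfl
  have i5 := intInt h5 le_rfl zero_le_one le_rfl
  have a12 : IntervalIntegrable (fun t => f1 t + f2 t) volume 0 1 := i1.add i2
  have a123 : IntervalIntegrable (fun t => f1 t + f2 t + f3 t) volume 0 1 := a12.add i3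
  have a45 : IntervalIntegrable (fun t => f4 t + f5 t) volume 0 1 := i4.add i5
  have L : IntervalIntegrable (fun t => (12:ℝ)⁻¹ • (f1 t + f2 t + f3 t)) volume 0 1 :=
    a123.smul _
  have R : IntervalIntegrable (fun t => (4:ℝ)⁻¹ • (f4 t + f5 t)) volume 0 1 := a45.smul _
  rw [integral_add L R, intervalIntegral.integral_smul, intervalIntegral.integral_smul,
    integral_add a12 i3, integral_add i1 i2, integral_add i4 i5]

end S14

/-- the differential of the end-point map on variations vanishing at
the endpoint. -/
theorem statement14 (V1 V2 V3 : Submodule ℝ 𝕓) (hC : CarnotStep3 br V1 V2 V3)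
    (γ : ℝ → 𝕓) (hγ : γ ∈ H1zero V1) (φ : ℝ → 𝕓) (hφ : φ ∈ H1zero V1)
    (h1 : curve φ 1 = 0) :
    dE br γ φ = (0, ∫ t in (0:ℝ)..1, br (curve φ t) (γ t),
      ∫ t in (0:ℝ)..1, br (curve γ t - (2:ℝ)⁻¹ • curve γ 1) (br (curve φ t) (γ t))) := by
  obtain ⟨-, hγ2⟩ := hγ
  obtain ⟨-, hφ2⟩ := hφ
  haveI hfin : IsFiniteMeasure (volume.restrict (Icc (0:ℝ) 1)) := by
    constructor
    rw [Measure.restrict_apply_univ]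
    exact measure_Icc_lt_top
  have hgi : IntegrableOn γ (Icc 0 1) volume :=
    memLp_one_iff_integrable.mp (hγ2.mono_exponent (by norm_num))
  have hfi : IntegrableOn φ (Icc 0 1) volume :=
    memLp_one_iff_integrable.mp (hφ2.mono_exponent (by norm_num))
  have halt : ∀ a : 𝕓, br a a = 0 := hC.2.2.2.2.1
  have hJac : ∀ a b c : 𝕓, br a (br b c) + br b (br c a) + br c (br a b) = 0 := hC.2.2.2.2.2
  have hskew : ∀ a b : 𝕓, br a b = - br b a := by
    intro a b
    have h := halt (a + b)
    simp only [map_add, LinearMap.add_apply, halt a, halt b, zero_add, add_zero] at h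
    linear_combination (norm := module) h
  have hxc : ContinuousOn (curve γ) (Icc 0 1) := S14.curve_cont hgi
  have hyc : ContinuousOn (curve φ) (Icc 0 1) := S14.curve_cont hfi
  have hBx : ContinuousOn (fun t => S14.brL br (curve γ t)) (Icc 0 1) :=
    (S14.brL br).continuous.comp_continuousOn hxc
  have hBy : ContinuousOn (fun t => S14.brL br (curve φ t)) (Icc 0 1) :=
    (S14.brL br).continuous.comp_continuousOn hyc
  have ia0 : IntegrableOn (S14.a0 br γ) (Icc 0 1) volume := S14.apply_integrableOn hBx hgi
  have ia1 : IntegrableOn (S14.a1 br γ φ) (Icc 0 1) volume :=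
    (S14.apply_integrableOn hBx hfi).add (S14.apply_integrableOn hBy hgi)
  have ia2 : IntegrableOn (S14.a2 br γ φ) (Icc 0 1) volume := S14.apply_integrableOn hBy hfi
  have cA0 : ContinuousOn (curve (S14.a0 br γ)) (Icc 0 1) := S14.curve_cont ia0
  have cA1 : ContinuousOn (curve (S14.a1 br γ φ)) (Icc 0 1) := S14.curve_cont ia1
  have cA2 : ContinuousOn (curve (S14.a2 br γ φ)) (Icc 0 1) := S14.curve_cont ia2
  have iS : IntegrableOn (fun t => br (curve φ t) (γ t)) (Icc 0 1) volume :=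
    S14.apply_integrableOn hBy hgi
  have iXf : IntegrableOn (fun t => br (curve γ t) (φ t)) (Icc 0 1) volume :=
    S14.apply_integrableOn hBx hfi
  have iI : IntegrableOn (fun t => br (curve γ t) (br (curve φ t) (γ t))) (Icc 0 1) volume :=
    S14.apply_integrableOn (hBx.clm_comp hBy) hgi
  have iJ : IntegrableOn (fun t => br (curve φ t) (br (curve γ t) (γ t))) (Icc 0 1) volume :=
    S14.apply_integrableOn (hBy.clm_comp hBx) hgi
  have iK : IntegrableOn (fun t => br (curve γ t) (br (curve γ t) (φ t))) (Icc 0 1) volume :=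
    S14.apply_integrableOn (hBx.clm_comp hBx) hfi
  have iW1 : IntegrableOn (fun t => br (curve (S14.a1 br γ φ) t) (γ t)) (Icc 0 1) volume :=
    S14.apply_integrableOn ((S14.brL br).continuous.comp_continuousOn cA1) hgi
  have iZ1 : IntegrableOn (fun t => br (curve (S14.a0 br γ) t) (φ t)) (Icc 0 1) volume :=
    S14.apply_integrableOn ((S14.brL br).continuous.comp_continuousOn cA0) hfi
  have iq0 : IntegrableOn (S14.q0 br γ φ) (Icc 0 1) volume :=
    ((S14.apply_integrableOn (hBx.clm_comp hBx) hgi).smul ((12:ℝ)⁻¹)).add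
      ((S14.apply_integrableOn ((S14.brL br).continuous.comp_continuousOn cA0) hgi).smul ((4:ℝ)⁻¹))
  have iq1 : IntegrableOn (S14.q1 br γ φ) (Icc 0 1) volume :=
    (((iJ.add iI).add iK).smul ((12:ℝ)⁻¹)).add ((iW1.add iZ1).smul ((4:ℝ)⁻¹))
  have iq2 : IntegrableOn (S14.q2 br γ φ) (Icc 0 1) volume :=
    ((((S14.apply_integrableOn (hBy.clm_comp hBy) hgi).add
        (S14.apply_integrableOn (hBy.clm_comp hBx) hfi)).add
        (S14.apply_integrableOn (hBx.clm_comp hBy) hfi)).smul ((12:ℝ)⁻¹)).add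
      (((S14.apply_integrableOn ((S14.brL br).continuous.comp_continuousOn cA2) hgi).add
        (S14.apply_integrableOn ((S14.brL br).continuous.comp_continuousOn cA1) hfi)).smul ((4:ℝ)⁻¹))
  have iq3 : IntegrableOn (S14.q3 br γ φ) (Icc 0 1) volume :=
    ((S14.apply_integrableOn (hBy.clm_comp hBy) hfi).smul ((12:ℝ)⁻¹)).add
      ((S14.apply_integrableOn ((S14.brL br).continuous.comp_continuousOn cA2) hfi).smul ((4:ℝ)⁻¹))
  -- linearity of `curve`
  have hlin : ∀ (ε : ℝ) {t : ℝ}, t ∈ Icc (0:ℝ) 1 →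
      curve (γ + ε • φ) t = curve γ t + ε • curve φ t := by
    intro ε t ht
    have h : curve (γ + ε • φ) t = ∫ s in (0:ℝ)..t, (γ s + ε • φ s) := rfl
    have hsm : IntervalIntegrable (fun s => ε • φ s) volume 0 t :=
      (S14.intInt hfi le_rfl ht.1 ht.2).smul ε
    rw [h, integral_add (S14.intInt hgi le_rfl ht.1 ht.2) hsm, intervalIntegral.integral_smul]
    rfl
  -- expansion of `curve2`
  have hc2exp : ∀ (ε : ℝ) {t : ℝ}, t ∈ Icc (0:ℝ) 1 →
      curve2 br (γ + ε • φ) t = (2:ℝ)⁻¹ • (curve (S14.a0 br γ) t + ε • curve (S14.a1 br γ φ) t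
        + ε ^ 2 • curve (S14.a2 br γ φ) t) := by
    intro ε t ht
    have hEq : EqOn (fun s => br (curve (γ + ε • φ) s) ((γ + ε • φ) s))
        (fun s => S14.a0 br γ s + ε • S14.a1 br γ φ s + ε ^ 2 • S14.a2 br γ φ s)
        (uIcc 0 t) := by
      intro s hs
      rw [uIcc_of_le ht.1] at hs
      have hs' : s ∈ Icc (0:ℝ) 1 := Icc_subset_Icc le_rfl ht.2 hs
      simp only
      rw [hlin ε hs']
      simp only [S14.a0, S14.a1, S14.a2, Pi.add_apply, Pi.smul_apply, map_add, _root_.map_smul,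
        LinearMap.add_apply, LinearMap.smul_apply]
      module
    unfold curve2
    rw [intervalIntegral.integral_congr hEq, S14.poly_int3 ht.1 ht.2 ia0 ia1 ia2 ε]
    rfl
  -- expansion of `F3`
  have hF3e : ∀ ε : ℝ, F3 br (γ + ε • φ)
      = (∫ t in (0:ℝ)..1, S14.q0 br γ φ t) + ε • (∫ t in (0:ℝ)..1, S14.q1 br γ φ t)
        + ε ^ 2 • (∫ t in (0:ℝ)..1, S14.q2 br γ φ t)
        + ε ^ 3 • ∫ t in (0:ℝ)..1, S14.q3 br γ φ t := by
    intro ε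
    have hEq : EqOn (fun t => ((2:ℝ)⁻¹ • (br (curve (γ + ε • φ) t)
          ((2:ℝ)⁻¹ • br (curve (γ + ε • φ) t) ((γ + ε • φ) t))
          + br (curve2 br (γ + ε • φ) t) ((γ + ε • φ) t))
          - (6:ℝ)⁻¹ • br (curve (γ + ε • φ) t) (br (curve (γ + ε • φ) t) ((γ + ε • φ) t))))
        (fun t => S14.q0 br γ φ t + ε • S14.q1 br γ φ t + ε ^ 2 • S14.q2 br γ φ t
          + ε ^ 3 • S14.q3 br γ φ t) (uIcc 0 1) := by
      intro t ht
      rw [uIcc_of_le zero_le_one] at ht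
      simp only
      rw [hlin ε ht, hc2exp ε ht]
      simp only [S14.q0, S14.q1, S14.q2, S14.q3, Pi.add_apply, Pi.smul_apply, map_add, _root_.map_smul,
        LinearMap.add_apply, LinearMap.smul_apply, smul_add, smul_smul]
      module
    unfold F3
    rw [intervalIntegral.integral_congr hEq,
      S14.poly_int4 zero_le_one le_rfl iq0 iq1 iq2 iq3 ε]
  -- the end-point map along the variation
  have hEfun : (fun ε : ℝ => Emap br (γ + ε • φ)) = (fun ε : ℝ =>
      ((curve γ 1 : 𝕓),
        (2:ℝ)⁻¹ • (curve (S14.a0 br γ) 1 + ε • curve (S14.a1 br γ φ) 1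
          + ε ^ 2 • curve (S14.a2 br γ φ) 1),
        (∫ t in (0:ℝ)..1, S14.q0 br γ φ t) + ε • (∫ t in (0:ℝ)..1, S14.q1 br γ φ t)
          + ε ^ 2 • (∫ t in (0:ℝ)..1, S14.q2 br γ φ t)
          + ε ^ 3 • ∫ t in (0:ℝ)..1, S14.q3 br γ φ t)) := by
    funext ε
    unfold Emap F1 F2
    rw [hlin ε ⟨zero_le_one, le_rfl⟩, h1, smul_zero, add_zero,
      hc2exp ε ⟨zero_le_one, le_rfl⟩, hF3e ε]
  -- differentiate
  have dlin : ∀ v : 𝕓, HasDerivAt (fun ε : ℝ => ε • v) v 0 := fun v => by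
    simpa using (hasDerivAt_id (0:ℝ)).smul_const v
  have dsq : ∀ v : 𝕓, HasDerivAt (fun ε : ℝ => ε ^ 2 • v) 0 0 := fun v => by
    simpa using (hasDerivAt_pow 2 (0:ℝ)).smul_const v
  have dcb : ∀ v : 𝕓, HasDerivAt (fun ε : ℝ => ε ^ 3 • v) 0 0 := fun v => by
    simpa using (hasDerivAt_pow 3 (0:ℝ)).smul_const v
  have hD2 : HasDerivAt (fun ε : ℝ => (2:ℝ)⁻¹ • (curve (S14.a0 br γ) 1
      + ε • curve (S14.a1 br γ φ) 1 + ε ^ 2 • curve (S14.a2 br γ φ) 1))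
      ((2:ℝ)⁻¹ • curve (S14.a1 br γ φ) 1) 0 := by
    have h := (((hasDerivAt_const (0:ℝ) (curve (S14.a0 br γ) 1)).add
      (dlin (curve (S14.a1 br γ φ) 1))).add (dsq (curve (S14.a2 br γ φ) 1))).const_smul ((2:ℝ)⁻¹)
    simp only [zero_add, add_zero] at h; exact h
  have hD3 : HasDerivAt (fun ε : ℝ => (∫ t in (0:ℝ)..1, S14.q0 br γ φ t)
      + ε • (∫ t in (0:ℝ)..1, S14.q1 br γ φ t) + ε ^ 2 • (∫ t in (0:ℝ)..1, S14.q2 br γ φ t)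
      + ε ^ 3 • ∫ t in (0:ℝ)..1, S14.q3 br γ φ t) (∫ t in (0:ℝ)..1, S14.q1 br γ φ t) 0 := by
    have h := (((hasDerivAt_const (0:ℝ) (∫ t in (0:ℝ)..1, S14.q0 br γ φ t)).add
      (dlin (∫ t in (0:ℝ)..1, S14.q1 br γ φ t))).add
      (dsq (∫ t in (0:ℝ)..1, S14.q2 br γ φ t))).add (dcb (∫ t in (0:ℝ)..1, S14.q3 br γ φ t))
    simp only [zero_add, add_zero] at h; exact h
  have hdE : dE br γ φ = ((0:𝕓), (2:ℝ)⁻¹ • curve (S14.a1 br γ φ) 1,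
      ∫ t in (0:ℝ)..1, S14.q1 br γ φ t) := by
    unfold dE
    rw [hEfun]
    exact HasDerivAt.deriv ((hasDerivAt_const (0:ℝ) (curve γ 1)).prodMk (hD2.prodMk hD3))
  -- first integration by parts: ∫ ⁅x,φ⁆ = ∫ ⁅y,γ⁆
  have ibp1 := S14.ibp (S14.brL br) hgi hfi (t := 1) ⟨zero_le_one, le_rfl⟩
  simp only [S14.brL_apply] at ibp1
  rw [h1, map_zero] at ibp1
  have hnegS : (∫ s in (0:ℝ)..1, br (γ s) (curve φ s))
      = - ∫ t in (0:ℝ)..1, br (curve φ t) (γ t) := by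
    rw [← intervalIntegral.integral_neg]
    exact intervalIntegral.integral_congr fun s _ => hskew _ _
  have E1 : (∫ s in (0:ℝ)..1, br (curve γ s) (φ s))
      = ∫ t in (0:ℝ)..1, br (curve φ t) (γ t) := by
    rw [hnegS] at ibp1
    linear_combination (norm := module) -ibp1
  have e45 : curve (S14.a1 br γ φ) 1
      = (∫ t in (0:ℝ)..1, br (curve φ t) (γ t)) + ∫ t in (0:ℝ)..1, br (curve φ t) (γ t) := by
    have h : curve (S14.a1 br γ φ) 1
        = (∫ s in (0:ℝ)..1, br (curve γ s) (φ s)) + ∫ s in (0:ℝ)..1, br (curve φ s) (γ s) := by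
      rw [show curve (S14.a1 br γ φ) 1
          = ∫ s in (0:ℝ)..1, (br (curve γ s) (φ s) + br (curve φ s) (γ s)) from rfl,
        integral_add (S14.intInt iXf le_rfl zero_le_one le_rfl)
          (S14.intInt iS le_rfl zero_le_one le_rfl)]
    rw [h, E1]
  have comp2 : (2:ℝ)⁻¹ • curve (S14.a1 br γ φ) 1 = ∫ t in (0:ℝ)..1, br (curve φ t) (γ t) := by
    rw [e45]; module
  -- ibp for a0 against φ
  have ibp2 := S14.ibp (S14.brL br) ia0 hfi (t := 1) ⟨zero_le_one, le_rfl⟩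
  simp only [S14.brL_apply] at ibp2
  rw [h1, map_zero] at ibp2
  have h2' : (∫ s in (0:ℝ)..1, br (S14.a0 br γ s) (curve φ s))
      = - ∫ t in (0:ℝ)..1, br (curve φ t) (br (curve γ t) (γ t)) := by
    rw [← intervalIntegral.integral_neg]
    refine intervalIntegral.integral_congr fun s _ => ?_
    simp only [S14.a0]
    rw [hskew]
  have e2 : (∫ s in (0:ℝ)..1, br (curve (S14.a0 br γ) s) (φ s))
      = ∫ t in (0:ℝ)..1, br (curve φ t) (br (curve γ t) (γ t)) := by
    rw [h2'] at ibp2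
    linear_combination (norm := module) -ibp2
  -- ibp for a1 against γ
  have ibp3 := S14.ibp (S14.brL br) ia1 hgi (t := 1) ⟨zero_le_one, le_rfl⟩
  simp only [S14.brL_apply] at ibp3
  have h3' : (∫ s in (0:ℝ)..1, br (S14.a1 br γ φ s) (curve γ s))
      = (- ∫ t in (0:ℝ)..1, br (curve γ t) (br (curve γ t) (φ t)))
        + - ∫ t in (0:ℝ)..1, br (curve γ t) (br (curve φ t) (γ t)) := by
    have hEq : EqOn (fun s => br (S14.a1 br γ φ s) (curve γ s))
        (fun s => -(br (curve γ s) (br (curve γ s) (φ s)))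
          + -(br (curve γ s) (br (curve φ s) (γ s)))) (uIcc 0 1) := by
      intro s _
      simp only [S14.a1, map_add, LinearMap.add_apply]
      rw [hskew (br (curve γ s) (φ s)) (curve γ s), hskew (br (curve φ s) (γ s)) (curve γ s)]
    have n1 : IntervalIntegrable (fun s => -(br (curve γ s) (br (curve γ s) (φ s)))) volume 0 1 :=
      (S14.intInt iK le_rfl zero_le_one le_rfl).neg
    have n2 : IntervalIntegrable (fun s => -(br (curve γ s) (br (curve φ s) (γ s)))) volume 0 1 :=
      (S14.intInt iI le_rfl zero_le_one le_rfl).neg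
    rw [intervalIntegral.integral_congr hEq, integral_add n1 n2,
      intervalIntegral.integral_neg, intervalIntegral.integral_neg]
  have e3 : (∫ s in (0:ℝ)..1, br (curve (S14.a1 br γ φ) s) (γ s))
      = br (curve (S14.a1 br γ φ) 1) (curve γ 1)
        + (∫ t in (0:ℝ)..1, br (curve γ t) (br (curve γ t) (φ t)))
        + ∫ t in (0:ℝ)..1, br (curve γ t) (br (curve φ t) (γ t)) := by
    rw [h3'] at ibp3
    linear_combination (norm := module) -ibp3
  have e10 : br (curve (S14.a1 br γ φ) 1) (curve γ 1)
      = -(br (curve γ 1) (∫ t in (0:ℝ)..1, br (curve φ t) (γ t)))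
        + -(br (curve γ 1) (∫ t in (0:ℝ)..1, br (curve φ t) (γ t))) := by
    rw [e45, map_add, LinearMap.add_apply,
      hskew (∫ t in (0:ℝ)..1, br (curve φ t) (γ t)) (curve γ 1)]
  -- ibp for γ against rho
  have irho : IntegrableOn (S14.rho br γ φ) (Icc 0 1) volume := iXf.sub iS
  have hrc : ∀ {s : ℝ}, s ∈ Icc (0:ℝ) 1 →
      curve (S14.rho br γ φ) s = br (curve γ s) (curve φ s) := by
    intro s hs
    have h := S14.ibp (S14.brL br) hgi hfi hs
    simp only [S14.brL_apply] at h
    have h2 : (∫ r in (0:ℝ)..s, br (γ r) (curve φ r))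
        = - ∫ r in (0:ℝ)..s, br (curve φ r) (γ r) := by
      rw [← intervalIntegral.integral_neg]
      exact intervalIntegral.integral_congr fun r _ => hskew _ _
    rw [h2] at h
    rw [show curve (S14.rho br γ φ) s
        = ∫ r in (0:ℝ)..s, (br (curve γ r) (φ r) - br (curve φ r) (γ r)) from rfl,
      integral_sub (S14.intInt iXf le_rfl hs.1 hs.2) (S14.intInt iS le_rfl hs.1 hs.2), h]
    abel
  have ibp5 := S14.ibp (S14.brL br) hgi irho (t := 1) ⟨zero_le_one, le_rfl⟩
  simp only [S14.brL_apply] at ibp5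
  rw [hrc ⟨zero_le_one, le_rfl⟩, h1, map_zero, map_zero] at ibp5
  have h5a : (∫ s in (0:ℝ)..1, br (γ s) (curve (S14.rho br γ φ) s))
      = (- ∫ t in (0:ℝ)..1, br (curve γ t) (br (curve φ t) (γ t)))
        + ∫ t in (0:ℝ)..1, br (curve φ t) (br (curve γ t) (γ t)) := by
    have hEq : EqOn (fun s => br (γ s) (curve (S14.rho br γ φ) s))
        (fun s => -(br (curve γ s) (br (curve φ s) (γ s)))
          + br (curve φ s) (br (curve γ s) (γ s))) (uIcc 0 1) := by
      intro s hs
      rw [uIcc_of_le zero_le_one] at hs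
      simp only
      rw [hrc hs]
      have j := hJac (γ s) (curve γ s) (curve φ s)
      rw [hskew (γ s) (curve γ s), map_neg] at j
      linear_combination (norm := module) j
    have n1 : IntervalIntegrable (fun s => -(br (curve γ s) (br (curve φ s) (γ s)))) volume 0 1 :=
      (S14.intInt iI le_rfl zero_le_one le_rfl).neg
    rw [intervalIntegral.integral_congr hEq,
      integral_add n1 (S14.intInt iJ le_rfl zero_le_one le_rfl),
      intervalIntegral.integral_neg]
  have h5b : (∫ s in (0:ℝ)..1, br (curve γ s) (S14.rho br γ φ s))
      = (∫ t in (0:ℝ)..1, br (curve γ t) (br (curve γ t) (φ t)))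
        - ∫ t in (0:ℝ)..1, br (curve γ t) (br (curve φ t) (γ t)) := by
    have hEq : EqOn (fun s => br (curve γ s) (S14.rho br γ φ s))
        (fun s => br (curve γ s) (br (curve γ s) (φ s))
          - br (curve γ s) (br (curve φ s) (γ s))) (uIcc 0 1) :=
      fun s _ => by simp only [S14.rho, map_sub]
    rw [intervalIntegral.integral_congr hEq,
      integral_sub (S14.intInt iK le_rfl zero_le_one le_rfl)
        (S14.intInt iI le_rfl zero_le_one le_rfl)]
  have e5 : (∫ t in (0:ℝ)..1, br (curve γ t) (br (curve γ t) (φ t)))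
      = (2:ℝ) • (∫ t in (0:ℝ)..1, br (curve γ t) (br (curve φ t) (γ t)))
        - ∫ t in (0:ℝ)..1, br (curve φ t) (br (curve γ t) (γ t)) := by
    rw [h5a, h5b] at ibp5
    linear_combination (norm := module) -ibp5
  -- splitting of ∫ q1
  have e6 : (∫ t in (0:ℝ)..1, S14.q1 br γ φ t)
      = (12:ℝ)⁻¹ • ((∫ t in (0:ℝ)..1, br (curve φ t) (br (curve γ t) (γ t)))
          + (∫ t in (0:ℝ)..1, br (curve γ t) (br (curve φ t) (γ t)))
          + ∫ t in (0:ℝ)..1, br (curve γ t) (br (curve γ t) (φ t)))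
        + (4:ℝ)⁻¹ • ((∫ s in (0:ℝ)..1, br (curve (S14.a1 br γ φ) s) (γ s))
          + ∫ s in (0:ℝ)..1, br (curve (S14.a0 br γ) s) (φ s)) := by
    have hEq : EqOn (fun t => S14.q1 br γ φ t) (fun t =>
        (12:ℝ)⁻¹ • (br (curve φ t) (br (curve γ t) (γ t)) + br (curve γ t) (br (curve φ t) (γ t))
          + br (curve γ t) (br (curve γ t) (φ t)))
        + (4:ℝ)⁻¹ • (br (curve (S14.a1 br γ φ) t) (γ t) + br (curve (S14.a0 br γ) t) (φ t)))
        (uIcc 0 1) := fun t _ => rfl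
    rw [intervalIntegral.integral_congr hEq]
    exact S14.split_q1 iJ iI iK iW1 iZ1
  -- splitting of the target integral
  have e7 : (∫ t in (0:ℝ)..1, br (curve γ t - (2:ℝ)⁻¹ • curve γ 1) (br (curve φ t) (γ t)))
      = (∫ t in (0:ℝ)..1, br (curve γ t) (br (curve φ t) (γ t)))
        - (2:ℝ)⁻¹ • br (curve γ 1) (∫ t in (0:ℝ)..1, br (curve φ t) (γ t)) := by
    have hEq : EqOn (fun t => br (curve γ t - (2:ℝ)⁻¹ • curve γ 1) (br (curve φ t) (γ t)))
        (fun t => br (curve γ t) (br (curve φ t) (γ t))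
          - (2:ℝ)⁻¹ • (S14.brL br (curve γ 1)) (br (curve φ t) (γ t))) (uIcc 0 1) := by
      intro t _
      simp only [map_sub, _root_.map_smul, LinearMap.sub_apply, LinearMap.smul_apply, S14.brL_apply]
    have iconst : IntegrableOn (fun t => (S14.brL br (curve γ 1)) (br (curve φ t) (γ t)))
        (Icc 0 1) volume := S14.apply_integrableOn continuousOn_const iS
    have ic2 : IntervalIntegrable
        (fun t => (2:ℝ)⁻¹ • (S14.brL br (curve γ 1)) (br (curve φ t) (γ t))) volume 0 1 :=
      (S14.intInt iconst le_rfl zero_le_one le_rfl).smul ((2:ℝ)⁻¹)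
    rw [intervalIntegral.integral_congr hEq,
      integral_sub (S14.intInt iI le_rfl zero_le_one le_rfl) ic2,
      intervalIntegral.integral_smul,
      (S14.brL br (curve γ 1)).intervalIntegral_comp_comm
        (S14.intInt iS le_rfl zero_le_one le_rfl)]
    simp only [S14.brL_apply]
  rw [hdE]
  simp only [Prod.mk.injEq]
  refine ⟨trivial, comp2, ?_⟩
  linear_combination (norm := module) e6 + ((3:ℝ)⁻¹) • e5 + ((4:ℝ)⁻¹) • e3
    + ((4:ℝ)⁻¹) • e2 + ((4:ℝ)⁻¹) • e10 - e7
end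
end
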